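/- arXiv:2404.13510 — 5 statements merged into one kernel-verified Lean document; each statement's English description precedes it below -/
import Mathlib

section
/- Let (X, ⪯) be a countably infinite totally ordered set without isolated points. Then there exists a binary bijection f : ℤ → X. -/
namespace Stmt14


variable {X : Type*} [LinearOrder X]

/-- x has an immediate predecessor within s, or is a minimum of s. -/
def LBdd (s : Set X) (x : X) : Prop :=
  (∃ a ∈ s, a < x ∧ ∀ y ∈ s, ¬ (a < y ∧ y < x)) ∨ (∀ y ∈ s, x ≤ y)

def RBdd (s : Set X) (x : X) : Prop :=
  (∃ b ∈ s, x < b ∧ ∀ y ∈ s, ¬ (x < y ∧ y < b)) ∨ (∀ y ∈ s, y ≤ x)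

def Good (s : Set X) : Prop :=
  s.Infinite ∧ ∀ x ∈ s, ¬ (LBdd s x ∧ RBdd s x)

lemma infinite_of_no_max {s : Set X} (hne : s.Nonempty)
    (h : ∀ x ∈ s, ∃ y ∈ s, x < y) : s.Infinite := by
  by_contra hfin
  rw [Set.not_infinite] at hfin
  obtain ⟨b, hb, hmax⟩ := Set.Finite.exists_maximalFor id s hfin hne
  obtain ⟨y, hy, hby⟩ := h b hb
  exact absurd (hmax hy hby.le) (not_le.mpr hby)

lemma infinite_of_no_min {s : Set X} (hne : s.Nonempty)
    (h : ∀ x ∈ s, ∃ y ∈ s, y < x) : s.Infinite := by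
  by_contra hfin
  rw [Set.not_infinite] at hfin
  obtain ⟨b, hb, hmin⟩ := Set.Finite.exists_minimalFor id s hfin hne
  obtain ⟨y, hy, hby⟩ := h b hb
  exact absurd (hmin hy hby.le) (not_le.mpr hby)

lemma not_LBdd {s : Set X} {c : X} (h : ¬ LBdd s c) :
    (∀ a ∈ s, a < c → ∃ y ∈ s, a < y ∧ y < c) ∧ (∃ y ∈ s, y < c) := by
  unfold LBdd at h
  push_neg at h
  obtain ⟨h1, h2⟩ := h
  obtain ⟨y, hy, hyc⟩ := h2
  exact ⟨fun a ha hac => h1 a ha hac, ⟨y, hy, hyc⟩⟩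

lemma not_RBdd {s : Set X} {c : X} (h : ¬ RBdd s c) :
    (∀ b ∈ s, c < b → ∃ y ∈ s, c < y ∧ y < b) ∧ (∃ y ∈ s, c < y) := by
  unfold RBdd at h
  push_neg at h
  obtain ⟨h1, h2⟩ := h
  obtain ⟨y, hy, hyc⟩ := h2
  exact ⟨fun a ha hac => h1 a ha hac, ⟨y, hy, hyc⟩⟩

lemma good_inter_Iic {s : Set X} {c : X} (hs : Good s) (hc : c ∈ s) (h1 : ¬ LBdd s c) :
    Good (s ∩ Set.Iic c) := by
  obtain ⟨hdense, ⟨y0, hy0, hy0c⟩⟩ := not_LBdd h1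
  constructor
  · refine (infinite_of_no_max (s := s ∩ Set.Iio c) ⟨y0, hy0, hy0c⟩ ?_).mono ?_
    · rintro x ⟨hxs, hxc⟩
      obtain ⟨y, hy, hxy, hyc⟩ := hdense x hxs hxc
      exact ⟨y, ⟨hy, hyc⟩, hxy⟩
    · exact Set.inter_subset_inter_right _ Set.Iio_subset_Iic_self
  · rintro x ⟨hxs, hxc⟩ ⟨hL, hR⟩
    -- transfer LBdd
    have hLs : LBdd s x := by
      rcases hL with ⟨a, ⟨has, -⟩, hax, hno⟩ | hmin
      · exact Or.inl ⟨a, has, hax, fun y hy ⟨h1', h2'⟩ =>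
          hno y ⟨hy, h2'.le.trans hxc⟩ ⟨h1', h2'⟩⟩
      · refine Or.inr fun y hy => ?_
        rcases le_or_gt y c with h | h
        · exact hmin y ⟨hy, h⟩
        · exact hxc.trans h.le
    rcases eq_or_lt_of_le hxc with rfl | hxlt
    · exact h1 hLs
    · have hRs : RBdd s x := by
        rcases hR with ⟨b, ⟨hbs, hbc⟩, hxb, hno⟩ | hmax
        · exact Or.inl ⟨b, hbs, hxb, fun y hy ⟨h1', h2'⟩ =>
            hno y ⟨hy, h2'.le.trans hbc⟩ ⟨h1', h2'⟩⟩
        · exact absurd (hmax c ⟨hc, le_rfl⟩) (not_le.mpr hxlt)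
      exact hs.2 x hxs ⟨hLs, hRs⟩

lemma good_inter_Ici {s : Set X} {c : X} (hs : Good s) (hc : c ∈ s) (h1 : ¬ RBdd s c) :
    Good (s ∩ Set.Ici c) := by
  obtain ⟨hdense, ⟨y0, hy0, hy0c⟩⟩ := not_RBdd h1
  constructor
  · refine (infinite_of_no_min (s := s ∩ Set.Ioi c) ⟨y0, hy0, hy0c⟩ ?_).mono ?_
    · rintro x ⟨hxs, hxc⟩
      obtain ⟨y, hy, hxy, hyc⟩ := hdense x hxs hxc
      exact ⟨y, ⟨hy, hxy⟩, hyc⟩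
    · exact Set.inter_subset_inter_right _ Set.Ioi_subset_Ici_self
  · rintro x ⟨hxs, hxc⟩ ⟨hL, hR⟩
    have hRs : RBdd s x := by
      rcases hR with ⟨b, ⟨hbs, -⟩, hxb, hno⟩ | hmax
      · exact Or.inl ⟨b, hbs, hxb, fun y hy ⟨h1', h2'⟩ =>
          hno y ⟨hy, hxc.trans h1'.le⟩ ⟨h1', h2'⟩⟩
      · refine Or.inr fun y hy => ?_
        rcases le_or_gt c y with h | h
        · exact hmax y ⟨hy, h⟩
        · exact h.le.trans hxc
    rcases eq_or_lt_of_le hxc with rfl | hxlt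
    · exact h1 hRs
    · have hLs : LBdd s x := by
        rcases hL with ⟨a, ⟨has, hac⟩, hax, hno⟩ | hmin
        · exact Or.inl ⟨a, has, hax, fun y hy ⟨h1', h2'⟩ =>
            hno y ⟨hy, hac.trans h1'.le⟩ ⟨h1', h2'⟩⟩
        · exact absurd (hmin c ⟨hc, le_rfl⟩) (not_le.mpr hxlt)
      exact hs.2 x hxs ⟨hLs, hRs⟩

lemma good_inter_Iio {s : Set X} {c : X} (hs : Good s) (hc : c ∈ s) (h1 : ¬ LBdd s c) :
    Good (s ∩ Set.Iio c) := by
  obtain ⟨hdense, ⟨y0, hy0, hy0c⟩⟩ := not_LBdd h1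
  have hinf : (s ∩ Set.Iio c).Infinite := by
    refine infinite_of_no_max ⟨y0, hy0, hy0c⟩ ?_
    rintro x ⟨hxs, hxc⟩
    obtain ⟨y, hy, hxy, hyc⟩ := hdense x hxs hxc
    exact ⟨y, ⟨hy, hyc⟩, hxy⟩
  refine ⟨hinf, ?_⟩
  rintro x ⟨hxs, hxc⟩ ⟨hL, hR⟩
  have hLs : LBdd s x := by
    rcases hL with ⟨a, ⟨has, -⟩, hax, hno⟩ | hmin
    · exact Or.inl ⟨a, has, hax, fun y hy ⟨h1', h2'⟩ =>
        hno y ⟨hy, h2'.trans hxc⟩ ⟨h1', h2'⟩⟩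
    · refine Or.inr fun y hy => ?_
      rcases lt_or_ge y c with h | h
      · exact hmin y ⟨hy, h⟩
      · exact (hxc.trans_le h).le
  have hRs : RBdd s x := by
    rcases hR with ⟨b, ⟨hbs, hbc⟩, hxb, hno⟩ | hmax
    · exact Or.inl ⟨b, hbs, hxb, fun y hy ⟨h1', h2'⟩ =>
        hno y ⟨hy, h2'.trans hbc⟩ ⟨h1', h2'⟩⟩
    · -- x would be an immediate predecessor of c in s
      exact absurd (Or.inl ⟨x, hxs, hxc, fun y hy ⟨h1', h2'⟩ =>
        absurd (hmax y ⟨hy, h2'⟩) (not_le.mpr h1')⟩ : LBdd s c) h1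
  exact hs.2 x hxs ⟨hLs, hRs⟩

/-- The main cut lemma. -/
lemma cut {s : Set X} (hs : Good s) {p q : X} (hp : p ∈ s) (hq : q ∈ s) (hpq : p < q) :
    ∃ L R : Set X, Good L ∧ Good R ∧ L ∪ R = s ∧
      (∀ a ∈ L, ∀ b ∈ R, a < b) ∧ p ∈ L ∧ q ∈ R := by
  by_cases hbet : ∃ r ∈ s, p < r ∧ r < q
  · obtain ⟨r, hr, hpr, hrq⟩ := hbet
    by_cases hLr : LBdd s r
    · -- r has an immediate predecessor a (it is not a minimum since p < r)
      have hRr : ¬ RBdd s r := fun h => hs.2 r hr ⟨hLr, h⟩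
      rcases hLr with ⟨a, has, har, hno⟩ | hmin
      · have hpa : p ≤ a := by
          by_contra h
          exact hno p hp ⟨not_le.1 h, hpr⟩
        have hnLa : ¬ LBdd s a := by
          intro h
          exact hs.2 a has ⟨h, Or.inl ⟨r, hr, har, fun y hy ⟨h1', h2'⟩ => hno y hy ⟨h1', h2'⟩⟩⟩
        refine ⟨s ∩ Set.Iic a, s ∩ Set.Ici r, good_inter_Iic hs has hnLa,
          good_inter_Ici hs hr hRr, ?_, ?_, ⟨hp, hpa⟩, ⟨hq, hrq.le⟩⟩
        · ext y
          constructor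
          · rintro (⟨hy, -⟩ | ⟨hy, -⟩) <;> exact hy
          · intro hy
            rcases le_or_gt y a with h | h
            · exact Or.inl ⟨hy, h⟩
            · refine Or.inr ⟨hy, ?_⟩
              by_contra h2
              exact hno y hy ⟨h, not_le.1 h2⟩
        · rintro x ⟨-, hx⟩ y ⟨-, hy⟩
          exact lt_of_le_of_lt hx (lt_of_lt_of_le har hy)
      · exact absurd (hmin p hp) (not_le.mpr hpr)
    · by_cases hRr : RBdd s r
      · rcases hRr with ⟨b, hbs, hrb, hno⟩ | hmax
        · have hnRb : ¬ RBdd s b := by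
            intro h
            exact hs.2 b hbs ⟨Or.inl ⟨r, hr, hrb, fun y hy ⟨h1', h2'⟩ => hno y hy ⟨h1', h2'⟩⟩, h⟩
          have hqb : b ≤ q := by
            by_contra h
            exact hno q hq ⟨hrq, not_le.1 h⟩
          refine ⟨s ∩ Set.Iic r, s ∩ Set.Ici b, good_inter_Iic hs hr hLr,
            good_inter_Ici hs hbs hnRb, ?_, ?_, ⟨hp, hpr.le⟩, ⟨hq, hqb⟩⟩
          · ext y
            constructor
            · rintro (⟨hy, -⟩ | ⟨hy, -⟩) <;> exact hy
            · intro hy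
              rcases le_or_gt y r with h | h
              · exact Or.inl ⟨hy, h⟩
              · refine Or.inr ⟨hy, ?_⟩
                by_contra h2
                exact hno y hy ⟨h, not_le.1 h2⟩
          · rintro x ⟨-, hx⟩ y ⟨-, hy⟩
            exact lt_of_le_of_lt hx (lt_of_lt_of_le hrb hy)
        · exact absurd (hmax q hq) (not_le.mpr hrq)
      · refine ⟨s ∩ Set.Iio r, s ∩ Set.Ici r, good_inter_Iio hs hr hLr,
          good_inter_Ici hs hr hRr, ?_, ?_, ⟨hp, hpr⟩, ⟨hq, hrq.le⟩⟩
        · ext y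
          constructor
          · rintro (⟨hy, -⟩ | ⟨hy, -⟩) <;> exact hy
          · intro hy
            rcases lt_or_ge y r with h | h
            · exact Or.inl ⟨hy, h⟩
            · exact Or.inr ⟨hy, h⟩
        · rintro x ⟨-, hx⟩ y ⟨-, hy⟩
          exact lt_of_lt_of_le hx hy
  · -- p and q are adjacent in s
    push_neg at hbet
    have hRp : RBdd s p := Or.inl ⟨q, hq, hpq, fun y hy ⟨h1', h2'⟩ =>
      absurd h2' (not_lt.2 (hbet y hy h1'))⟩
    have hLq : LBdd s q := Or.inl ⟨p, hp, hpq, fun y hy ⟨h1', h2'⟩ =>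
      absurd h2' (not_lt.2 (hbet y hy h1'))⟩
    have hnLp : ¬ LBdd s p := fun h => hs.2 p hp ⟨h, hRp⟩
    have hnRq : ¬ RBdd s q := fun h => hs.2 q hq ⟨hLq, h⟩
    refine ⟨s ∩ Set.Iic p, s ∩ Set.Ici q, good_inter_Iic hs hp hnLp,
      good_inter_Ici hs hq hnRq, ?_, ?_, ⟨hp, le_rfl⟩, ⟨hq, le_rfl⟩⟩
    · ext y
      constructor
      · rintro (⟨hy, -⟩ | ⟨hy, -⟩) <;> exact hy
      · intro hy
        rcases le_or_gt y p with h | h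
        · exact Or.inl ⟨hy, h⟩
        · refine Or.inr ⟨hy, ?_⟩
          exact hbet y hy h
    · rintro x ⟨-, hx⟩ y ⟨-, hy⟩
      exact lt_of_le_of_lt hx (lt_of_lt_of_le hpq hy)


structure PS (X : Type*) [LinearOrder X] where
  k : ℕ
  C : ℤ → Set X
  res : ℤ → Option X
  hcongr : ∀ z w : ℤ, ((2:ℤ)^k) ∣ (z - w) → C z = C w
  hgood : ∀ z, Good (C z)
  hcover : ∀ x : X, ∃ z, x ∈ C z
  hdisj : ∀ z w : ℤ, ¬ ((2:ℤ)^k) ∣ (z - w) → ∀ x, x ∈ C z → x ∉ C w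
  hresMem : ∀ z x, res z = some x → x ∈ C z
  hresU : ∀ z w, ((2:ℤ)^k) ∣ (z - w) → res z ≠ none → res w ≠ none → z = w
  hresFin : {z : ℤ | res z ≠ none}.Finite

structure StepR (s t : PS X) : Prop where
  hk : t.k = s.k + 1
  hsub : ∀ z, t.C z ⊆ s.C z
  hsep : ∀ z, (∀ x ∈ t.C z, ∀ y ∈ t.C (z + 2^s.k), x < y) ∨
              (∀ x ∈ t.C z, ∀ y ∈ t.C (z + 2^s.k), y < x)
  hmono : ∀ z x, s.res z = some x → t.res z = some x

lemma dvd_sub_emod (z n : ℤ) : n ∣ z - z % n :=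
  ⟨z / n, by have := Int.mul_ediv_add_emod z n; linarith⟩

lemma emod_eq_of_dvd_sub {z w n : ℤ} (h : n ∣ z - w) : z % n = w % n := by
  rw [Int.emod_eq_emod_iff_emod_sub_eq_zero]
  exact Int.emod_eq_zero_of_dvd h

lemma dvd_sub_of_emod_eq {z w n : ℤ} (h : z % n = w % n) : n ∣ z - w := by
  apply Int.dvd_of_emod_eq_zero
  rwa [← Int.emod_eq_emod_iff_emod_sub_eq_zero]

lemma disj_of_sep {A B : Set X} (h : ∀ a ∈ A, ∀ b ∈ B, a < b) : Disjoint A B :=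
  Set.disjoint_left.2 fun a ha hb => lt_irrefl a (h a ha a hb)

section Refine

variable (s : PS X)

local notation "P" => ((2:ℤ)^s.k)
local notation "Q" => ((2:ℤ)^(s.k+1))

lemma hPpos : (0:ℤ) < P := by positivity
lemma hPQ : (P:ℤ) ∣ Q := pow_dvd_pow _ (Nat.le_succ _)
lemma hQP2 : (Q:ℤ) = P * 2 := by rw [pow_succ]
lemma hnQP : ¬ (Q:ℤ) ∣ P := by
  intro h
  have h2 := Int.le_of_dvd (hPpos s) h
  have : (P:ℤ) < Q := by
    apply pow_lt_pow_right₀ (by norm_num) (Nat.lt_succ_self _)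
  omega

/-- exactly-one-digit lemma : if `P ∣ d` but `¬ Q ∣ d` and `¬ Q ∣ d'`, `P ∣ d'`,
then `Q ∣ d - d'`. -/
lemma digit_both {d d' : ℤ} (hd : P ∣ d) (hd' : P ∣ d')
    (h1 : ¬ Q ∣ d) (h2 : ¬ Q ∣ d') : Q ∣ d - d' := by
  obtain ⟨a, rfl⟩ := hd
  obtain ⟨b, rfl⟩ := hd'
  rw [hQP2] at h1 h2 ⊢
  rw [mul_dvd_mul_iff_left (by positivity : (P:ℤ) ≠ 0)] at h1 h2
  rw [← mul_sub, mul_dvd_mul_iff_left (by positivity : (P:ℤ) ≠ 0)]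
  omega

lemma refine_aux (x₀ : X) (hx₀ : ∀ z p, s.res z = some p → p ≠ x₀) :
    ∃ t : PS X, StepR s t ∧ t.res = s.res ∧ (∀ w, x₀ ∈ t.C w → t.res w = none) := by
  classical
  have key : ∀ r : ℤ, ∃ A B : Set X,
      Good A ∧ Good B ∧ A ∪ B = s.C r ∧
      ((∀ a ∈ A, ∀ b ∈ B, a < b) ∨ (∀ a ∈ A, ∀ b ∈ B, b < a)) ∧
      Disjoint A B ∧
      (∀ w p, s.res w = some p → w % P = r →
        ((Q ∣ (w - r) → p ∈ A) ∧ (¬ Q ∣ (w - r) → p ∈ B))) ∧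
      (∀ w p, s.res w = some p → w % P = r → x₀ ∈ s.C r →
        ((Q ∣ (w - r) → x₀ ∉ A) ∧ (¬ Q ∣ (w - r) → x₀ ∉ B))) := by
    intro r
    have hS : Good (s.C r) := s.hgood r
    by_cases hres : ∃ w p, s.res w = some p ∧ w % P = r
    · obtain ⟨w₀, p₀, hw₀, hr₀⟩ := hres
      have huniq : ∀ w p, s.res w = some p → w % P = r → w = w₀ ∧ p = p₀ := by
        intro w p hw hr
        have hdvd : (P:ℤ) ∣ w - w₀ := dvd_sub_of_emod_eq (by rw [hr, hr₀])
        have hww : w = w₀ := s.hresU w w₀ hdvd (by simp [hw]) (by simp [hw₀])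
        subst hww
        rw [hw] at hw₀
        exact ⟨rfl, Option.some_injective _ hw₀⟩
      have hp₀S : p₀ ∈ s.C r := by
        have := s.hresMem w₀ p₀ hw₀
        rwa [s.hcongr w₀ r (by rw [← hr₀]; exact dvd_sub_emod w₀ _)] at this
      have hd₀ : Q ∣ (w₀ - r) ∨ ¬ Q ∣ (w₀ - r) := em _
      by_cases hxS : x₀ ∈ s.C r
      · have hne : p₀ ≠ x₀ := hx₀ w₀ p₀ hw₀
        rcases hne.lt_or_gt with hlt | hlt
        · obtain ⟨L, R, hGL, hGR, hun, hLR, hpL, hxR⟩ := cut hS hp₀S hxS hlt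
          have hdLR := disj_of_sep hLR
          by_cases hd : Q ∣ (w₀ - r)
          · refine ⟨L, R, hGL, hGR, hun, Or.inl hLR, hdLR, ?_, ?_⟩
            · intro w p hw hr
              obtain ⟨rfl, rfl⟩ := huniq w p hw hr
              exact ⟨fun _ => hpL, fun h => absurd hd h⟩
            · intro w p hw hr _
              obtain ⟨rfl, rfl⟩ := huniq w p hw hr
              exact ⟨fun _ => Set.disjoint_right.1 hdLR hxR, fun h => absurd hd h⟩
          · refine ⟨R, L, hGR, hGL, by rw [Set.union_comm]; exact hun,
              Or.inr (fun a ha b hb => hLR b hb a ha), hdLR.symm, ?_, ?_⟩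
            · intro w p hw hr
              obtain ⟨rfl, rfl⟩ := huniq w p hw hr
              exact ⟨fun h => absurd h hd, fun _ => hpL⟩
            · intro w p hw hr _
              obtain ⟨rfl, rfl⟩ := huniq w p hw hr
              exact ⟨fun h => absurd h hd, fun _ => Set.disjoint_right.1 hdLR hxR⟩
        · obtain ⟨L, R, hGL, hGR, hun, hLR, hxL, hpR⟩ := cut hS hxS hp₀S hlt
          have hdLR := disj_of_sep hLR
          by_cases hd : Q ∣ (w₀ - r)
          · refine ⟨R, L, hGR, hGL, by rw [Set.union_comm]; exact hun,
              Or.inr (fun a ha b hb => hLR b hb a ha), hdLR.symm, ?_, ?_⟩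
            · intro w p hw hr
              obtain ⟨rfl, rfl⟩ := huniq w p hw hr
              exact ⟨fun _ => hpR, fun h => absurd hd h⟩
            · intro w p hw hr _
              obtain ⟨rfl, rfl⟩ := huniq w p hw hr
              exact ⟨fun _ => Set.disjoint_left.1 hdLR hxL, fun h => absurd hd h⟩
          · refine ⟨L, R, hGL, hGR, hun, Or.inl hLR, hdLR, ?_, ?_⟩
            · intro w p hw hr
              obtain ⟨rfl, rfl⟩ := huniq w p hw hr
              exact ⟨fun h => absurd h hd, fun _ => hpR⟩
            · intro w p hw hr _
              obtain ⟨rfl, rfl⟩ := huniq w p hw hr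
              exact ⟨fun h => absurd h hd, fun _ => Set.disjoint_left.1 hdLR hxL⟩
      · -- x₀ ∉ class; pick another point to cut against
        obtain ⟨q', hq'⟩ := (hS.1.diff (Set.finite_singleton p₀)).nonempty
        obtain ⟨hq'S, hq'ne⟩ := hq'
        have hq'ne : q' ≠ p₀ := hq'ne
        rcases hq'ne.lt_or_gt with hlt | hlt
        · obtain ⟨L, R, hGL, hGR, hun, hLR, hqL, hpR⟩ := cut hS hq'S hp₀S hlt
          have hdLR := disj_of_sep hLR
          by_cases hd : Q ∣ (w₀ - r)
          · refine ⟨R, L, hGR, hGL, by rw [Set.union_comm]; exact hun,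
              Or.inr (fun a ha b hb => hLR b hb a ha), hdLR.symm, ?_, fun _ _ _ _ h => absurd h hxS⟩
            intro w p hw hr
            obtain ⟨rfl, rfl⟩ := huniq w p hw hr
            exact ⟨fun _ => hpR, fun h => absurd hd h⟩
          · refine ⟨L, R, hGL, hGR, hun, Or.inl hLR, hdLR, ?_, fun _ _ _ _ h => absurd h hxS⟩
            intro w p hw hr
            obtain ⟨rfl, rfl⟩ := huniq w p hw hr
            exact ⟨fun h => absurd h hd, fun _ => hpR⟩
        · obtain ⟨L, R, hGL, hGR, hun, hLR, hpL, hqR⟩ := cut hS hp₀S hq'S hlt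
          have hdLR := disj_of_sep hLR
          by_cases hd : Q ∣ (w₀ - r)
          · refine ⟨L, R, hGL, hGR, hun, Or.inl hLR, hdLR, ?_, fun _ _ _ _ h => absurd h hxS⟩
            intro w p hw hr
            obtain ⟨rfl, rfl⟩ := huniq w p hw hr
            exact ⟨fun _ => hpL, fun h => absurd hd h⟩
          · refine ⟨R, L, hGR, hGL, by rw [Set.union_comm]; exact hun,
              Or.inr (fun a ha b hb => hLR b hb a ha), hdLR.symm, ?_, fun _ _ _ _ h => absurd h hxS⟩
            intro w p hw hr
            obtain ⟨rfl, rfl⟩ := huniq w p hw hr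
            exact ⟨fun h => absurd h hd, fun _ => hpL⟩
    · push_neg at hres
      obtain ⟨u, hu, v, hv, huv⟩ := hS.1.nontrivial
      rcases huv.lt_or_gt with hlt | hlt
      · obtain ⟨L, R, hGL, hGR, hun, hLR, -, -⟩ := cut hS hu hv hlt
        exact ⟨L, R, hGL, hGR, hun, Or.inl hLR, disj_of_sep hLR,
          fun w p hw hr => absurd hr (hres w p hw),
          fun w p hw hr => absurd hr (hres w p hw)⟩
      · obtain ⟨L, R, hGL, hGR, hun, hLR, -, -⟩ := cut hS hv hu hlt
        exact ⟨L, R, hGL, hGR, hun, Or.inl hLR, disj_of_sep hLR,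
          fun w p hw hr => absurd hr (hres w p hw),
          fun w p hw hr => absurd hr (hres w p hw)⟩
  choose A B hGA hGB hun hsepAB hdisjAB hresAB hxAB using key
  set C' : ℤ → Set X := fun z => if Q ∣ (z - z % P) then A (z % P) else B (z % P) with hC'
  -- helper facts
  have hsub : ∀ z, C' z ⊆ s.C z := by
    intro z x hx
    have h1 : x ∈ A (z % P) ∪ B (z % P) := by
      by_cases hD : Q ∣ (z - z % P)
      · simp only [hC', if_pos hD] at hx; exact Or.inl hx
      · simp only [hC', if_neg hD] at hx; exact Or.inr hx
    rw [hun] at h1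
    rwa [s.hcongr z (z % P) (dvd_sub_emod z _)]
  have hcongr' : ∀ z w : ℤ, (Q ∣ (z - w)) → C' z = C' w := by
    intro z w h
    have hr : z % P = w % P := emod_eq_of_dvd_sub (dvd_trans (hPQ s) h)
    simp only [hC']
    rw [hr]
    have hD' : (Q ∣ z - w % P) ↔ (Q ∣ w - w % P) := by
      have e : z - w % P = (z - w) + (w - w % P) := by ring
      rw [e]; exact dvd_add_right h
    exact if_congr hD' rfl rfl
  have hCr : ∀ r : ℤ, C' (r % P) = A (r % P) := by
    intro r
    have h1 : (r % P) % P = r % P := Int.emod_emod_of_dvd r dvd_rfl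
    simp only [hC', h1, sub_self, dvd_zero, if_pos]
  have hCrP : ∀ r : ℤ, C' (r % P + P) = B (r % P) := by
    intro r
    have h1 : (r % P + P) % P = r % P := by
      have := Int.add_mul_emod_self_left (a := r % P) (b := P) (c := 1)
      rw [mul_one] at this
      rw [this, Int.emod_emod_of_dvd r dvd_rfl]
    have h2 : ¬ Q ∣ (r % P + P - (r % P + P) % P) := by
      rw [h1]
      simp only [add_sub_cancel_left]
      exact hnQP s
    simp only [hC', if_neg h2, h1]
  have hflip : ∀ z : ℤ, (Q ∣ (z - z % P)) → ¬ (Q ∣ (z + P - (z + P) % P)) := by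
    intro z hD
    have h1 : (z + P) % P = z % P := by
      have := Int.add_mul_emod_self_left (a := z) (b := P) (c := 1)
      rw [mul_one] at this; rw [this]
    rw [h1]
    intro hcon
    have h2 : Q ∣ (z + P - z % P) - (z - z % P) := dvd_sub hcon hD
    have e : (z + P - z % P) - (z - z % P) = P := by ring
    rw [e] at h2
    exact hnQP s h2
  have hflip' : ∀ z : ℤ, ¬ (Q ∣ (z - z % P)) → (Q ∣ (z + P - (z + P) % P)) := by
    intro z hD
    have h1 : (z + P) % P = z % P := by
      have := Int.add_mul_emod_self_left (a := z) (b := P) (c := 1)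
      rw [mul_one] at this; rw [this]
    rw [h1]
    have e : z + P - z % P = (z - z % P) + P := by ring
    rw [e]
    have h2 := digit_both s (dvd_sub_emod z (P)) (dvd_refl P) hD (hnQP s)
    obtain ⟨c, hc⟩ := h2
    refine ⟨c + 1, ?_⟩
    have hq : ((2:ℤ)^(s.k+1)) = (2:ℤ)^s.k * 2 := hQP2 s
    linarith
  refine ⟨⟨s.k + 1, C', s.res, ?_, ?_, ?_, ?_, ?_, ?_, s.hresFin⟩, ?_, rfl, ?_⟩
  · -- hcongr
    exact hcongr'
  · -- hgood
    intro z
    by_cases hD : Q ∣ (z - z % P)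
    · simp only [hC', if_pos hD]; exact hGA _
    · simp only [hC', if_neg hD]; exact hGB _
  · -- hcover
    intro x
    obtain ⟨z, hz⟩ := s.hcover x
    have hx' : x ∈ s.C (z % P) := by
      rwa [s.hcongr z (z % P) (dvd_sub_emod z _)] at hz
    rw [← hun] at hx'
    rcases hx' with hx' | hx'
    · exact ⟨z % P, by rw [hCr]; exact hx'⟩
    · exact ⟨z % P + P, by rw [hCrP]; exact hx'⟩
  · -- hdisj
    intro z w hndvd x hxz hxw
    by_cases hP' : P ∣ z - w
    · have hr : z % P = w % P := emod_eq_of_dvd_sub hP'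
      -- digits must differ
      have hDne : ¬ ((Q ∣ (z - z % P)) ↔ (Q ∣ (w - w % P))) := by
        intro hiff
        apply hndvd
        by_cases hDz : Q ∣ (z - z % P)
        · have hDw := hiff.mp hDz
          have : Q ∣ (z - z % P) - (w - w % P) := dvd_sub hDz hDw
          have e : (z - z % P) - (w - w % P) = z - w := by rw [hr]; ring
          rwa [e] at this
        · have hDw := fun h => hDz (hiff.mpr h)
          have h2 := digit_both s (dvd_sub_emod z (P)) (dvd_sub_emod w (P)) hDz hDw
          have e : (z - z % P) - (w - w % P) = z - w := by rw [hr]; ring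
          rwa [e] at h2
      by_cases hDz : Q ∣ (z - z % P)
      · have hDw : ¬ Q ∣ (w - w % P) := fun h => hDne ⟨fun _ => h, fun _ => hDz⟩
        simp only [hC', if_pos hDz] at hxz
        simp only [hC', if_neg hDw, ← hr] at hxw
        exact Set.disjoint_left.1 (hdisjAB (z % P)) hxz hxw
      · have hDw : Q ∣ (w - w % P) := by
          by_contra h
          exact hDne ⟨fun h' => absurd h' hDz, fun h' => absurd h' h⟩
        simp only [hC', if_neg hDz] at hxz
        simp only [hC', if_pos hDw, ← hr] at hxw
        exact Set.disjoint_right.1 (hdisjAB (z % P)) hxz hxw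
    · exact s.hdisj z w hP' x (hsub z hxz) (hsub w hxw)
  · -- hresMem
    intro z x h
    have hres := hresAB (z % P) z x h rfl
    by_cases hD : Q ∣ (z - z % P)
    · simp only [hC', if_pos hD]; exact hres.1 hD
    · simp only [hC', if_neg hD]; exact hres.2 hD
  · -- hresU
    intro z w hdvd h1 h2
    exact s.hresU z w (dvd_trans (hPQ s) hdvd) h1 h2
  · -- StepR
    refine ⟨rfl, hsub, ?_, fun z x h => h⟩
    intro z
    have hr : (z + P) % P = z % P := by
      have := Int.add_mul_emod_self_left (a := z) (b := P) (c := 1)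
      rw [mul_one] at this; rw [this]
    by_cases hD : Q ∣ (z - z % P)
    · have h1 : C' z = A (z % P) := by simp only [hC', if_pos hD]
      have h2 : C' (z + P) = B (z % P) := by
        simp only [hC', if_neg (hflip z hD), hr]
      show (∀ x ∈ C' z, ∀ y ∈ C' (z + 2^s.k), x < y) ∨
        (∀ x ∈ C' z, ∀ y ∈ C' (z + 2^s.k), y < x)
      rw [h1, h2]
      exact hsepAB (z % P)
    · have h1 : C' z = B (z % P) := by simp only [hC', if_neg hD]
      have h2 : C' (z + P) = A (z % P) := by
        simp only [hC', if_pos (hflip' z hD), hr]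
      show (∀ x ∈ C' z, ∀ y ∈ C' (z + 2^s.k), x < y) ∨
        (∀ x ∈ C' z, ∀ y ∈ C' (z + 2^s.k), y < x)
      rw [h1, h2]
      rcases hsepAB (z % P) with h | h
      · exact Or.inr (fun x hx y hy => h y hy x hx)
      · exact Or.inl (fun x hx y hy => h y hy x hx)
  · -- freeAt x₀
    intro w hw
    by_contra hnone
    obtain ⟨p, hp⟩ := Option.ne_none_iff_exists'.mp hnone
    have hxS : x₀ ∈ s.C (w % P) := by
      have := hsub w hw
      rwa [s.hcongr w (w % P) (dvd_sub_emod w _)] at this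
    have hspec := hxAB (w % P) w p hp rfl hxS
    by_cases hD : Q ∣ (w - w % P)
    · simp only [hC', if_pos hD] at hw
      exact hspec.1 hD hw
    · simp only [hC', if_neg hD] at hw
      exact hspec.2 hD hw

end Refine

section Ops
variable {X : Type*} [LinearOrder X]

def PS.freeAt (s : PS X) (x : X) : Prop := ∀ w, x ∈ s.C w → s.res w = none
def PS.zfree (s : PS X) (z : ℤ) : Prop := ∀ w, ((2:ℤ)^s.k) ∣ (z - w) → s.res w = none

lemma zfree_freeAt (s : PS X) {z : ℤ} (hz : s.zfree z) {x : X} (hx : x ∈ s.C z) :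
    s.freeAt x := by
  intro w hw
  apply hz
  by_contra hnd
  exact s.hdisj z w hnd x hx hw

lemma place (s : PS X) (z : ℤ) (x : X) (hx : x ∈ s.C z) (hfree : s.freeAt x) :
    ∃ t : PS X, t.k = s.k ∧ t.C = s.C ∧ t.res z = some x ∧
      (∀ w p, s.res w = some p → t.res w = some p) := by
  classical
  refine ⟨⟨s.k, s.C, Function.update s.res z (some x), s.hcongr, s.hgood, s.hcover,
    s.hdisj, ?_, ?_, ?_⟩, rfl, rfl, by simp, ?_⟩
  · intro w x' h
    rcases eq_or_ne w z with rfl | hne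
    · rw [Function.update_self] at h
      rw [← Option.some_injective _ h]
      exact hx
    · rw [Function.update_of_ne hne] at h
      exact s.hresMem w x' h
  · intro w w' hdvd h1 h2
    rcases eq_or_ne w z with rfl | hne
    · rcases eq_or_ne w' w with rfl | hne'
      · rfl
      · exfalso
        rw [Function.update_of_ne hne'] at h2
        have hC : s.C w' = s.C w := s.hcongr w' w (dvd_sub_comm.mp hdvd)
        have hx' : x ∈ s.C w' := by rw [hC]; exact hx
        exact h2 (hfree w' hx')
    · rcases eq_or_ne w' z with rfl | hne'
      · exfalso
        rw [Function.update_of_ne hne] at h1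
        have hC : s.C w = s.C w' := s.hcongr w w' hdvd
        have hx' : x ∈ s.C w := by rw [hC]; exact hx
        exact h1 (hfree w hx')
      · rw [Function.update_of_ne hne] at h1
        rw [Function.update_of_ne hne'] at h2
        exact s.hresU w w' hdvd h1 h2
  · apply Set.Finite.subset (Set.Finite.insert z s.hresFin)
    intro w hw
    rcases eq_or_ne w z with rfl | hne
    · exact Set.mem_insert _ _
    · right
      simpa [Function.update_of_ne hne] using hw
  · intro w p h
    have hwz : w ≠ z := by
      rintro rfl
      rw [hfree w hx] at h
      exact Option.some_ne_none p h.symm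
    show Function.update s.res z (some x) w = some p
    rw [Function.update_of_ne hwz]
    exact h

lemma exists_nonresident [Infinite X] (s : PS X) :
    ∃ x₀ : X, ∀ z p, s.res z = some p → p ≠ x₀ := by
  classical
  have hR : {x : X | ∃ z, s.res z = some x}.Finite := by
    have himg : ((fun z => s.res z) '' {z | s.res z ≠ none}).Finite := s.hresFin.image _
    have heq : {x : X | ∃ z, s.res z = some x} =
        Option.some ⁻¹' ((fun z => s.res z) '' {z | s.res z ≠ none}) := by
      ext x
      simp only [Set.mem_setOf_eq, Set.mem_preimage, Set.mem_image]
      constructor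
      · rintro ⟨z, hz⟩
        exact ⟨z, by simp [hz], hz⟩
      · rintro ⟨z, -, hz⟩
        exact ⟨z, hz⟩
    rw [heq]
    exact Set.Finite.preimage ((Option.some_injective X).injOn) himg
  obtain ⟨x₀, hx₀⟩ := (Set.infinite_univ.diff hR).nonempty
  exact ⟨x₀, fun z p hp heq => hx₀.2 ⟨z, heq ▸ hp⟩⟩

lemma refine_plain [Infinite X] (s : PS X) : ∃ t : PS X, StepR s t ∧ t.res = s.res := by
  obtain ⟨x₀, hx₀⟩ := exists_nonresident s
  obtain ⟨t, h1, h2, -⟩ := refine_aux s x₀ hx₀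
  exact ⟨t, h1, h2⟩

def TaskDone (tk : X ⊕ ℤ) (s : PS X) : Prop :=
  match tk with
  | Sum.inl x => ∃ z, s.res z = some x
  | Sum.inr z => s.res z ≠ none

def TaskReady (tk : X ⊕ ℤ) (s : PS X) : Prop :=
  match tk with
  | Sum.inl x => (∃ z, s.res z = some x) ∨ s.freeAt x
  | Sum.inr z => s.res z ≠ none ∨ s.zfree z

lemma masterEx [Infinite X] (s : PS X) (tk : X ⊕ ℤ) :
    ∃ t : PS X, StepR s t ∧ (TaskReady tk s → TaskDone tk t) ∧
      (¬ TaskReady tk s → t.res = s.res ∧ ∀ x, tk = Sum.inl x → t.freeAt x) := by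
  classical
  rcases tk with x | z
  · by_cases hp : ∃ z, s.res z = some x
    · obtain ⟨t, h1, h2⟩ := refine_plain s
      refine ⟨t, h1, fun _ => ?_, fun hnr => absurd (Or.inl hp) hnr⟩
      obtain ⟨z, hz⟩ := hp
      exact ⟨z, h1.hmono z x hz⟩
    · by_cases hf : s.freeAt x
      · obtain ⟨z, hz⟩ := s.hcover x
        obtain ⟨s₁, hk1, hC1, hres1, hmono1⟩ := place s z x hz hf
        obtain ⟨t, h1, h2⟩ := refine_plain s₁
        refine ⟨t, ⟨by rw [h1.hk, hk1], fun z' => (h1.hsub z').trans (by rw [hC1]),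
          by rw [← hk1]; exact h1.hsep,
          fun z' x' h => h1.hmono z' x' (hmono1 z' x' h)⟩,
          fun _ => ⟨z, ?_⟩, fun hnr => absurd (Or.inr hf) hnr⟩
        rw [h2]
        exact hres1
      · obtain ⟨t, h1, h2, h3⟩ := refine_aux s x (fun z p hp' he => hp ⟨z, he ▸ hp'⟩)
        refine ⟨t, h1, fun hr => ?_, fun _ => ⟨h2, ?_⟩⟩
        · rcases hr with hr | hr
          · exact absurd hr hp
          · exact absurd hr hf
        · intro x' heq
          cases heq
          exact h3
  · by_cases hp : s.res z ≠ none
    · obtain ⟨t, h1, h2⟩ := refine_plain s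
      refine ⟨t, h1, fun _ => ?_, fun hnr => absurd (Or.inl hp) hnr⟩
      obtain ⟨p, hp'⟩ := Option.ne_none_iff_exists'.mp hp
      show t.res z ≠ none
      rw [h1.hmono z p hp']
      simp
    · by_cases hf : s.zfree z
      · obtain ⟨x, hx⟩ := (s.hgood z).1.nonempty
        obtain ⟨s₁, hk1, hC1, hres1, hmono1⟩ := place s z x hx (zfree_freeAt s hf hx)
        obtain ⟨t, h1, h2⟩ := refine_plain s₁
        refine ⟨t, ⟨by rw [h1.hk, hk1], fun z' => (h1.hsub z').trans (by rw [hC1]),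
          by rw [← hk1]; exact h1.hsep,
          fun z' x' h => h1.hmono z' x' (hmono1 z' x' h)⟩,
          fun _ => ?_, fun hnr => absurd (Or.inr hf) hnr⟩
        show t.res z ≠ none
        rw [h2, hres1]
        simp
      · obtain ⟨t, h1, h2⟩ := refine_plain s
        refine ⟨t, h1, fun hr => ?_, fun _ => ⟨h2, fun x heq => by cases heq⟩⟩
        rcases hr with hr | hr
        · exact absurd hr hp
        · exact absurd hr hf

def initPS (hgu : Good (Set.univ : Set X)) : PS X where
  k := 0
  C := fun _ => Set.univ
  res := fun _ => none
  hcongr := fun _ _ _ => rfl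
  hgood := fun _ => hgu
  hcover := fun x => ⟨0, trivial⟩
  hdisj := fun z w h => absurd (by simpa using one_dvd (z - w)) h
  hresMem := fun z x h => by simp at h
  hresU := fun z w _ h _ => absurd rfl h
  hresFin := by simp

end Ops

section Chain
variable {X : Type*} [LinearOrder X] [Countable X] [Infinite X]

lemma chainA (hgu : Good (Set.univ : Set X)) :
    ∃ st : ℕ → PS X,
      (∀ n, (st n).k = n) ∧
      (∀ n, StepR (st n) (st (n+1))) ∧
      (∀ z : ℤ, ∃ n x, (st n).res z = some x) ∧
      (∀ x : X, ∃ n z, (st n).res z = some x) := by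
  classical
  obtain ⟨e₁, he₁⟩ := exists_surjective_nat X
  obtain ⟨e₂, he₂⟩ := exists_surjective_nat ℤ
  set tkOf : ℕ → X ⊕ ℤ :=
    fun m => if m % 2 = 0 then Sum.inl (e₁ (m/2)) else Sum.inr (e₂ (m/2)) with htk
  have hM : ∀ p : PS X × ℕ, ∃ t : PS X, StepR p.1 t ∧
      (TaskReady (tkOf p.2) p.1 → TaskDone (tkOf p.2) t) ∧
      (¬ TaskReady (tkOf p.2) p.1 → t.res = p.1.res ∧
        ∀ x, tkOf p.2 = Sum.inl x → t.freeAt x) :=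
    fun p => masterEx p.1 (tkOf p.2)
  choose g hg1 hg2 hg3 using hM
  set F : PS X × ℕ → PS X × ℕ :=
    fun p => (g p, if TaskReady (tkOf p.2) p.1 then p.2 + 1 else p.2) with hF
  set ch : ℕ → PS X × ℕ := fun n => F^[n] (initPS hgu, 0) with hch
  have hchs : ∀ n, ch (n+1) = F (ch n) := fun n => Function.iterate_succ_apply' F n _
  set st : ℕ → PS X := fun n => (ch n).1 with hst
  set a : ℕ → ℕ := fun n => (ch n).2 with ha
  have hst0 : st 0 = initPS hgu := rfl
  have ha0 : a 0 = 0 := rfl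
  have hstS : ∀ n, st (n+1) = g (ch n) := fun n => congrArg Prod.fst (hchs n)
  have haS : ∀ n, a (n+1) = if TaskReady (tkOf (a n)) (st n) then a n + 1 else a n :=
    fun n => congrArg Prod.snd (hchs n)
  have hstep : ∀ n, StepR (st n) (st (n+1)) := by
    intro n
    rw [hstS n]
    exact hg1 (ch n)
  have hk : ∀ n, (st n).k = n := by
    intro n
    induction n with
    | zero => rw [hst0]; rfl
    | succ n ih => rw [(hstep n).hk, ih]
  have hmonoRes : ∀ (z : ℤ) (x : X) (n n' : ℕ), n ≤ n' →
      (st n).res z = some x → (st n').res z = some x := by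
    intro z x n n' hle h
    induction n' with
    | zero => rw [Nat.le_zero.mp hle] at h; exact h
    | succ n' ih =>
      rcases Nat.lt_or_ge n (n'+1) with hlt | hge
      · exact (hstep n').hmono z x (ih (by omega))
      · have heq : n = n' + 1 := by omega
        rw [heq] at h
        exact h
  -- fairness
  have hfair : ∀ m n₀, a n₀ = m → ∃ n, n₀ ≤ n ∧ TaskReady (tkOf m) (st n) ∧ a n = m := by
    intro m n₀ h₀
    by_contra hno
    push_neg at hno
    have hconst : ∀ d, a (n₀ + d) = m ∧ ¬ TaskReady (tkOf m) (st (n₀ + d)) := by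
      intro d
      induction d with
      | zero => exact ⟨h₀, fun hr => hno n₀ le_rfl hr h₀⟩
      | succ d ih =>
        obtain ⟨iha, ihr⟩ := ih
        have h1 : a (n₀ + d + 1) = m := by
          rw [haS (n₀ + d), iha, if_neg ihr]
        exact ⟨h1, fun hr => hno (n₀ + d + 1) (by omega) hr h1⟩
    have hresconst : ∀ d, (st (n₀ + d)).res = (st n₀).res := by
      intro d
      induction d with
      | zero => rfl
      | succ d ih =>
        have hnr : ¬ TaskReady (tkOf (a (n₀ + d))) (st (n₀ + d)) := by
          rw [(hconst d).1]
          exact (hconst d).2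
        have h3 := (hg3 (ch (n₀ + d)) hnr).1
        rw [show n₀ + (d+1) = (n₀ + d) + 1 from rfl, hstS (n₀ + d)]
        exact h3.trans ih
      -- note : (g (ch (n₀+d))).res = (ch (n₀+d)).1.res = (st (n₀+d)).res
    rcases htkcase : tkOf m with x | z
    · -- point task : after one non-ready step it becomes free
      have hnr : ¬ TaskReady (tkOf (a n₀)) (st n₀) := by
        rw [h₀]
        exact (hconst 0).2
      have hfree := (hg3 (ch n₀) hnr).2 x (show tkOf (a n₀) = Sum.inl x by rw [h₀]; exact htkcase)
      have hready : TaskReady (tkOf m) (st (n₀ + 1)) := by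
        rw [htkcase]
        refine Or.inr ?_
        rw [hstS n₀]
        exact hfree
      exact (hconst 1).2 hready
    · -- target task : eventually the class of z is free
      have hnr := (hconst 0).2
      rw [htkcase] at hnr
      have hzn : (st n₀).res z = none := by
        by_contra h
        exact hnr (Or.inl h)
      have hsupp : {w : ℤ | (st n₀).res w ≠ none}.Finite := (st n₀).hresFin
      obtain ⟨M0, hM0⟩ := (hsupp.image (fun w => (z - w).natAbs)).bddAbove
      set M := M0 + 1 + n₀ with hMdef
      have hzfree : (st (n₀ + M)).zfree z := by
        intro w hdvd
        rw [hresconst M]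
        by_contra hw
        have hwsupp : w ∈ {w : ℤ | (st n₀).res w ≠ none} := hw
        have hbound : (z - w).natAbs ≤ M0 := hM0 ⟨w, hwsupp, rfl⟩
        have hwz : w ≠ z := by
          rintro rfl
          exact hw hzn
        have hzw : z - w ≠ 0 := sub_ne_zero.mpr (Ne.symm hwz)
        rw [hk (n₀ + M)] at hdvd
        have hle := Int.le_of_dvd (abs_pos.mpr hzw) ((dvd_abs _ _).mpr hdvd)
        rw [Int.abs_eq_natAbs] at hle
        have h2 : ((2:ℤ)^(n₀ + M)) = ((2^(n₀+M) : ℕ) : ℤ) := by push_cast; ring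
        rw [h2] at hle
        have h3 : (2:ℕ)^(n₀+M) ≤ (z - w).natAbs := by exact_mod_cast hle
        have h4 : (z - w).natAbs < 2^(n₀+M) := by
          calc (z - w).natAbs ≤ M0 := hbound
          _ < n₀ + M := by omega
          _ < 2^(n₀+M) := Nat.lt_two_pow_self
        omega
      have hready : TaskReady (tkOf m) (st (n₀ + M)) := by
        rw [htkcase]
        exact Or.inr hzfree
      exact (hconst M).2 hready
  -- every value of the counter is reached
  have hreach : ∀ m, ∃ n, a n = m := by
    intro m
    induction m with
    | zero => exact ⟨0, ha0⟩
    | succ m ih =>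
      obtain ⟨n, hn⟩ := ih
      obtain ⟨n', hn'le, hn'r, hn'a⟩ := hfair m n hn
      refine ⟨n' + 1, ?_⟩
      rw [haS n', hn'a, if_pos hn'r]
  have hdone : ∀ m, ∃ n, TaskDone (tkOf m) (st n) := by
    intro m
    obtain ⟨n, hn⟩ := hreach m
    obtain ⟨n', hn'le, hn'r, hn'a⟩ := hfair m n hn
    have ha' : a n' = m := hn'a
    have hr' : TaskReady (tkOf (a n')) (st n') := by
      rw [ha']
      exact hn'r
    have hd := hg2 (ch n') hr'
    refine ⟨n' + 1, ?_⟩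
    rw [hstS n']
    have hd' : TaskDone (tkOf (a n')) (g (ch n')) := hd
    rw [ha'] at hd'
    exact hd'
  refine ⟨st, hk, hstep, ?_, ?_⟩
  · intro z
    obtain ⟨i, hi⟩ := he₂ z
    obtain ⟨n, hn⟩ := hdone (2*i+1)
    have htkv : tkOf (2*i+1) = Sum.inr z := by
      rw [htk]
      have h1 : (2*i+1) % 2 = 1 := by omega
      have h2 : (2*i+1) / 2 = i := by omega
      simp [h1, h2, hi]
    rw [htkv] at hn
    obtain ⟨x, hx⟩ := Option.ne_none_iff_exists'.mp hn
    exact ⟨n, x, hx⟩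
  · intro x
    obtain ⟨i, hi⟩ := he₁ x
    obtain ⟨n, hn⟩ := hdone (2*i)
    have htkv : tkOf (2*i) = Sum.inl x := by
      rw [htk]
      have h1 : (2*i) % 2 = 0 := by omega
      have h2 : (2*i) / 2 = i := by omega
      simp [h1, h2, hi]
    rw [htkv] at hn
    obtain ⟨z, hz⟩ := hn
    exact ⟨n, z, hz⟩

theorem main_construction (hgu : Good (Set.univ : Set X)) :
    ∃ f : ℤ → X, Function.Bijective f ∧
      ∀ (k : ℕ) (a b c : ℤ), ((2:ℤ)^(k+1)) ∣ (a - c) → ((2:ℤ)^(k+1)) ∣ (b - (a + 2^k)) →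
        ¬ (f a < f b ∧ f b < f c) := by
  obtain ⟨st, hk, hstep, htot, hsurj⟩ := chainA hgu
  have hmono : ∀ (z : ℤ) (x : X) (n n' : ℕ), n ≤ n' →
      (st n).res z = some x → (st n').res z = some x := by
    intro z x n n' hle h
    induction n' with
    | zero => rw [Nat.le_zero.mp hle] at h; exact h
    | succ n' ih =>
      rcases Nat.lt_or_ge n (n'+1) with hlt | hge
      · exact (hstep n').hmono z x (ih (by omega))
      · have heq : n = n' + 1 := by omega
        rw [heq] at h
        exact h
  have hsubc : ∀ (z : ℤ) (i i' : ℕ), i ≤ i' → (st i').C z ⊆ (st i).C z := by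
    intro z i i' hle
    induction i' with
    | zero =>
      rw [Nat.le_zero.mp hle]
    | succ i' ih =>
      rcases Nat.lt_or_ge i (i'+1) with hlt | hge
      · exact ((hstep i').hsub z).trans (ih (by omega))
      · have heq : i = i' + 1 := by omega
        rw [heq]
  choose N FF hFF using htot
  have hmem : ∀ (z : ℤ) (j : ℕ), FF z ∈ (st j).C z := by
    intro z j
    rcases le_or_gt (N z) j with h | h
    · exact (st j).hresMem z (FF z) (hmono z (FF z) (N z) j h (hFF z))
    · exact hsubc z j (N z) h.le ((st (N z)).hresMem z (FF z) (hFF z))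
  have hinj : Function.Injective FF := by
    intro z w hzw
    by_contra hne
    have hj : ¬ ((2:ℤ)^((z - w).natAbs)) ∣ (z - w) := by
      intro hdvd
      have hzw0 : z - w ≠ 0 := sub_ne_zero.mpr hne
      have hle := Int.le_of_dvd (abs_pos.mpr hzw0) ((dvd_abs _ _).mpr hdvd)
      rw [Int.abs_eq_natAbs] at hle
      have h2 : ((2:ℤ)^((z-w).natAbs)) = ((2^((z-w).natAbs) : ℕ) : ℤ) := by push_cast; ring
      rw [h2] at hle
      have h3 : (2:ℕ)^((z-w).natAbs) ≤ (z - w).natAbs := by exact_mod_cast hle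
      have := Nat.lt_two_pow_self (n := (z - w).natAbs)
      omega
    have hd := (st ((z - w).natAbs)).hdisj z w
      (by rw [hk ((z - w).natAbs)]; exact hj) (FF z) (hmem z _)
    rw [hzw] at hd
    exact hd (hmem w _)
  have hsurj' : Function.Surjective FF := by
    intro x
    obtain ⟨n, z, hz⟩ := hsurj x
    refine ⟨z, ?_⟩
    have h1 := hmono z x n (max n (N z)) (le_max_left _ _) hz
    have h2 := hmono z (FF z) (N z) (max n (N z)) (le_max_right _ _) (hFF z)
    rw [h1] at h2
    exact (Option.some_injective _ h2).symm
  refine ⟨FF, ⟨hinj, hsurj'⟩, ?_⟩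
  rintro k a b c hac hb ⟨h1, h2⟩
  have hsep := (hstep k).hsep a
  rw [hk k] at hsep
  have hca : (st (k+1)).C c = (st (k+1)).C a :=
    (st (k+1)).hcongr c a (by rw [hk (k+1)]; exact dvd_sub_comm.mp hac)
  have hba : (st (k+1)).C b = (st (k+1)).C (a + 2^k) :=
    (st (k+1)).hcongr b (a + 2^k) (by rw [hk (k+1)]; exact hb)
  have hfa : FF a ∈ (st (k+1)).C a := hmem a (k+1)
  have hfc : FF c ∈ (st (k+1)).C a := by rw [← hca]; exact hmem c (k+1)
  have hfb : FF b ∈ (st (k+1)).C (a + 2^k) := by rw [← hba]; exact hmem b (k+1)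
  rcases hsep with h | h
  · exact absurd (h (FF c) hfc (FF b) hfb) (lt_asymm h2)
  · exact absurd (h (FF a) hfa (FF b) hfb) (lt_asymm h1)

end Chain

end Stmt14

/-- The 2-adic order of a rational number, with `ord2 0 = ⊤`. -/
noncomputable def ord2 (q : ℚ) : WithTop ℤ :=
  if q = 0 then ⊤ else (padicValRat 2 q : WithTop ℤ)

/-- Let (X, ⪯) be a countably infinite totally ordered set without isolated
points. Then there exists a binary bijection f : ℤ → X. -/
theorem stmt_14 {X : Type*} [LinearOrder X] [TopologicalSpace X] [OrderTopology X]
    [Countable X] [Infinite X] (hiso : ∀ x : X, ¬ IsOpen ({x} : Set X)) :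
    ∃ f : ℤ → X, Function.Bijective f ∧
      ¬ ∃ a b c : ℤ, f a < f b ∧ f b < f c ∧
        ord2 ((b : ℚ) - (a : ℚ)) = ord2 ((c : ℚ) - (b : ℚ)) := by
  classical
  have hgu : Stmt14.Good (Set.univ : Set X) := by
    refine ⟨Set.infinite_univ, ?_⟩
    rintro x - ⟨hL, hR⟩
    apply hiso x
    rcases hL with ⟨a, -, hax, hnoa⟩ | hmin
    · rcases hR with ⟨b, -, hxb, hnob⟩ | hmax
      · have hx : ({x} : Set X) = Set.Ioo a b := by
          ext y
          simp only [Set.mem_singleton_iff, Set.mem_Ioo]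
          constructor
          · rintro rfl; exact ⟨hax, hxb⟩
          · rintro ⟨hay, hyb⟩
            rcases lt_trichotomy y x with h | h | h
            · exact absurd ⟨hay, h⟩ (hnoa y (Set.mem_univ y))
            · exact h
            · exact absurd ⟨h, hyb⟩ (hnob y (Set.mem_univ y))
        rw [hx]; exact isOpen_Ioo
      · have hx : ({x} : Set X) = Set.Ioi a := by
          ext y
          simp only [Set.mem_singleton_iff, Set.mem_Ioi]
          constructor
          · rintro rfl; exact hax
          · intro hay
            rcases lt_trichotomy y x with h | h | h
            · exact absurd ⟨hay, h⟩ (hnoa y (Set.mem_univ y))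
            · exact h
            · exact absurd (hmax y (Set.mem_univ y)) (not_le.mpr h)
        rw [hx]; exact isOpen_Ioi
    · rcases hR with ⟨b, -, hxb, hnob⟩ | hmax
      · have hx : ({x} : Set X) = Set.Iio b := by
          ext y
          simp only [Set.mem_singleton_iff, Set.mem_Iio]
          constructor
          · rintro rfl; exact hxb
          · intro hyb
            rcases lt_trichotomy y x with h | h | h
            · exact absurd (hmin y (Set.mem_univ y)) (not_le.mpr h)
            · exact h
            · exact absurd ⟨h, hyb⟩ (hnob y (Set.mem_univ y))
        rw [hx]; exact isOpen_Iio
      · have hx : ({x} : Set X) = Set.univ := by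
          ext y
          simp only [Set.mem_singleton_iff, Set.mem_univ, iff_true]
          exact le_antisymm (hmax y (Set.mem_univ y)) (hmin y (Set.mem_univ y))
        rw [hx]; exact isOpen_univ
  obtain ⟨f, hbij, hbin⟩ := Stmt14.main_construction hgu
  refine ⟨f, hbij, ?_⟩
  rintro ⟨a, b, c, h1, h2, hord⟩
  by_cases hab : b = a
  · rw [hab] at h1; exact lt_irrefl _ h1
  by_cases hcb : c = b
  · rw [hcb] at h2; exact lt_irrefl _ h2
  have hd1 : ((b:ℚ) - (a:ℚ)) = (((b - a : ℤ) : ℚ)) := by push_cast; ring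
  have hd2 : ((c:ℚ) - (b:ℚ)) = (((c - b : ℤ) : ℚ)) := by push_cast; ring
  have hne1 : ((b - a : ℤ) : ℚ) ≠ 0 := Int.cast_ne_zero.mpr (sub_ne_zero.mpr hab)
  have hne2 : ((c - b : ℤ) : ℚ) ≠ 0 := Int.cast_ne_zero.mpr (sub_ne_zero.mpr hcb)
  rw [hd1, hd2] at hord
  unfold ord2 at hord
  rw [if_neg hne1, if_neg hne2] at hord
  have hval : padicValRat 2 ((b - a : ℤ) : ℚ) = padicValRat 2 ((c - b : ℤ) : ℚ) := by
    exact_mod_cast hord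
  rw [padicValRat.of_int, padicValRat.of_int] at hval
  have hvalN : padicValNat 2 (b - a).natAbs = padicValNat 2 (c - b).natAbs := by
    have h' : padicValInt 2 (b - a) = padicValInt 2 (c - b) := by exact_mod_cast hval
    simpa [padicValInt] using h'
  obtain ⟨K, hK1, hK2⟩ : ∃ K, padicValNat 2 (b - a).natAbs = K ∧
      padicValNat 2 (c - b).natAbs = K := ⟨_, rfl, hvalN.symm⟩
  haveI : Fact (Nat.Prime 2) := ⟨Nat.prime_two⟩
  have h2abs : ((2:ℤ)).natAbs = 2 := rfl
  have hab0 : (b - a).natAbs ≠ 0 := by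
    simp only [ne_eq, Int.natAbs_eq_zero]
    exact sub_ne_zero.mpr hab
  have hcb0 : (c - b).natAbs ≠ 0 := by
    simp only [ne_eq, Int.natAbs_eq_zero]
    exact sub_ne_zero.mpr hcb
  have hdvd1 : ((2:ℤ)^K) ∣ (b - a) := by
    rw [← Int.natAbs_dvd_natAbs]
    simp only [Int.natAbs_pow, h2abs]
    rw [← hK1]
    exact pow_padicValNat_dvd
  have hdvd2 : ((2:ℤ)^K) ∣ (c - b) := by
    rw [← Int.natAbs_dvd_natAbs]
    simp only [Int.natAbs_pow, h2abs]
    rw [← hK2]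
    exact pow_padicValNat_dvd
  have hnd1 : ¬ ((2:ℤ)^(K+1)) ∣ (b - a) := by
    rw [← Int.natAbs_dvd_natAbs]
    simp only [Int.natAbs_pow, h2abs]
    rw [← hK1]
    exact pow_succ_padicValNat_not_dvd hab0
  have hnd2 : ¬ ((2:ℤ)^(K+1)) ∣ (c - b) := by
    rw [← Int.natAbs_dvd_natAbs]
    simp only [Int.natAbs_pow, h2abs]
    rw [← hK2]
    exact pow_succ_padicValNat_not_dvd hcb0
  obtain ⟨u, hu⟩ := hdvd1
  obtain ⟨v, hv⟩ := hdvd2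
  have hou : ¬ (2:ℤ) ∣ u := by
    rintro ⟨w, hw⟩
    exact hnd1 ⟨w, by rw [hu, hw, pow_succ]; ring⟩
  have hov : ¬ (2:ℤ) ∣ v := by
    rintro ⟨w, hw⟩
    exact hnd2 ⟨w, by rw [hv, hw, pow_succ]; ring⟩
  have hEu : ¬ Even u := by
    rintro ⟨w, hw⟩
    exact hou ⟨w, by omega⟩
  have hEv : ¬ Even v := by
    rintro ⟨w, hw⟩
    exact hov ⟨w, by omega⟩
  have hEuv : Even (u + v) := Int.even_add.mpr (iff_of_false hEu hEv)
  obtain ⟨w, hw⟩ := hEuv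
  have hac : ((2:ℤ)^(K+1)) ∣ (a - c) := by
    refine ⟨-w, ?_⟩
    have e : a - c = -((b - a) + (c - b)) := by ring
    rw [e, hu, hv, pow_succ]
    have huv : u + v = 2 * w := by linarith
    calc -(2^K*u + 2^K*v) = -((2:ℤ)^K*(u+v)) := by ring
    _ = -((2:ℤ)^K*(2*w)) := by rw [huv]
    _ = (2:ℤ)^K*2*(-w) := by ring
  have hEu1 : Even (u - 1) := by
    rcases Int.even_or_odd u with h | h
    · exact absurd h hEu
    · obtain ⟨w', hw'⟩ := h
      exact ⟨w', by omega⟩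
  obtain ⟨w', hw'⟩ := hEu1
  have hbmid : ((2:ℤ)^(K+1)) ∣ (b - (a + 2^K)) := by
    refine ⟨w', ?_⟩
    have e : b - (a + 2^K) = (b - a) - 2^K := by ring
    rw [e, hu, pow_succ]
    have hu1 : u - 1 = 2 * w' := by linarith
    calc (2:ℤ)^K*u - 2^K = (2:ℤ)^K*(u - 1) := by ring
    _ = (2:ℤ)^K*(2*w') := by rw [hu1]
    _ = (2:ℤ)^K*2*w' := by ring
  exact hbin K a b c hac hbmid ⟨h1, h2⟩
end

section
/- There exists a sequence q₀, q₁, … of elements of ℤ_{(2)} such that (1) ord₂(q_n) = n for all nonnegative integers n, and (2) for every q ∈ ℤ_{(2)} there exists a finite subset A of the nonnegative integers such that q = Σ_{n∈A} q_n. -/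
namespace Stmt16Aux

open Function

/-- The 2-adic valuation as a natural number (for valuation-nonnegative rationals). -/
noncomputable def ordn (x : ℚ) : ℕ := (padicValRat 2 x).toNat

lemma odd_num_den {w : ℚ} (hw : w ≠ 0) (h : padicValRat 2 w = 0) :
    ¬ (2 : ℤ) ∣ w.num ∧ ¬ 2 ∣ w.den := by
  have hnum : w.num ≠ 0 := Rat.num_ne_zero.2 hw
  have hden : w.den ≠ 0 := w.den_nz
  have hval : padicValRat 2 w = (padicValInt 2 w.num : ℤ) - (padicValNat 2 w.den : ℤ) :=
    padicValRat_def 2 w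
  have hdvd : ¬ 2 ∣ w.den := by
    intro hd
    have hnd : ¬ (2 ∣ w.num.natAbs) := by
      intro hn
      have := Nat.dvd_gcd hn hd
      rw [w.reduced] at this
      omega
    have h1 : padicValInt 2 w.num = 0 := by
      unfold padicValInt
      exact padicValNat.eq_zero_of_not_dvd hnd
    have h2 : 1 ≤ padicValNat 2 w.den :=
      one_le_padicValNat_of_dvd hden hd
    rw [h1] at hval
    omega
  refine ⟨?_, hdvd⟩
  intro hn
  have hn' : 2 ∣ w.num.natAbs := by
    have h2 : (2 : ℤ).natAbs = 2 := rfl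
    rwa [← h2, Int.natAbs_dvd_natAbs]
  have h1 : 1 ≤ padicValInt 2 w.num := by
    unfold padicValInt
    exact one_le_padicValNat_of_dvd (Int.natAbs_ne_zero.mpr hnum) hn'
  have h2 : padicValNat 2 w.den = 0 :=
    padicValNat.eq_zero_of_not_dvd hdvd
  rw [h2] at hval
  omega

lemma one_le_val_sub_one {w : ℚ} (hw0 : w ≠ 0) (hw1 : w ≠ 1) (h : padicValRat 2 w = 0) :
    1 ≤ padicValRat 2 (w - 1) := by
  obtain ⟨hn, hd⟩ := odd_num_den hw0 h
  have hden : (w.den : ℤ) ≠ 0 := Int.natCast_ne_zero.mpr w.den_nz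
  have hnd : w.num - (w.den : ℤ) ≠ 0 := by
    intro hc
    apply hw1
    have : w.num = (w.den : ℤ) := by omega
    rw [← Rat.num_div_den w, this]
    field_simp
    exact Int.cast_natCast _
  have hcast1 : ((w.num - (w.den : ℤ) : ℤ) : ℚ) ≠ 0 := Int.cast_ne_zero.mpr hnd
  have hcast2 : ((w.den : ℤ) : ℚ) ≠ 0 := Int.cast_ne_zero.mpr hden
  have hwden : ((w.num : ℚ)) = w * (w.den : ℚ) := by
    rw [← div_eq_iff (by exact_mod_cast hden : (w.den : ℚ) ≠ 0)]
    exact Rat.num_div_den w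
  have hrepr : w - 1 = ((w.num - (w.den : ℤ) : ℤ) : ℚ) / ((w.den : ℤ) : ℚ) := by
    rw [eq_div_iff hcast2]
    push_cast
    rw [sub_mul, one_mul, hwden]
  rw [hrepr, padicValRat.div (p := 2) hcast1 hcast2, padicValRat.of_int, padicValRat.of_int]
  have hdint : padicValInt 2 (w.den : ℤ) = 0 := by
    unfold padicValInt
    rw [Int.natAbs_natCast]
    exact padicValNat.eq_zero_of_not_dvd hd
  have hdint2 : ¬ (2 : ℤ) ∣ (w.den : ℤ) := by
    intro hc
    exact hd (by exact_mod_cast hc)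
  have heven : 2 ∣ (w.num - (w.den : ℤ)).natAbs := by
    have h2 : (2 : ℤ).natAbs = 2 := rfl
    rw [← h2, Int.natAbs_dvd_natAbs]
    omega
  have h1 : 1 ≤ padicValInt 2 (w.num - (w.den : ℤ)) := by
    unfold padicValInt
    exact one_le_padicValNat_of_dvd (Int.natAbs_ne_zero.mpr hnd) heven
  omega

/-- Key 2-adic fact: subtracting rationals of equal valuation strictly increases valuation. -/
lemma key_sub {x y : ℚ} (hx : x ≠ 0) (hy : y ≠ 0) (hxy : x ≠ y)
    (h : padicValRat 2 x = padicValRat 2 y) :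
    padicValRat 2 x + 1 ≤ padicValRat 2 (x - y) := by
  have hw0 : x / y ≠ 0 := div_ne_zero hx hy
  have hw1 : x / y ≠ 1 := fun hc => hxy ((div_eq_one_iff_eq hy).mp hc)
  have hwval : padicValRat 2 (x / y) = 0 := by
    rw [padicValRat.div (p := 2) hx hy, h, sub_self]
  have hrepr : x - y = y * (x / y - 1) := by field_simp
  have hsub : x / y - 1 ≠ 0 := sub_ne_zero.mpr hw1
  rw [hrepr, padicValRat.mul (p := 2) hy (by exact hsub)]
  have := one_le_val_sub_one hw0 hw1 hwval
  omega

/-- Min-valuation bound for a difference. -/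
lemma val_sub_ge {x y : ℚ} (hxy : x - y ≠ 0) :
    min (padicValRat 2 x) (padicValRat 2 y) ≤ padicValRat 2 (x - y) := by
  have := padicValRat.min_le_padicValRat_add (p := 2) (q := x) (r := -y)
    (by rwa [← sub_eq_add_neg])
  rwa [padicValRat.neg, ← sub_eq_add_neg] at this

/-- Greedy reduction with fuel: repeatedly subtract the basis element whose index is
the current valuation, while it is defined. -/
noncomputable def red (g : ℕ → Option ℚ) : ℕ → ℚ → ℚ
  | 0, x => x
  | f + 1, x =>
    if x = 0 then 0
    else if g (ordn x) = none then x
    else red g f (x - (g (ordn x)).getD 0)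

lemma red_zero (g : ℕ → Option ℚ) : ∀ f, red g f 0 = 0
  | 0 => rfl
  | f + 1 => by simp [red]

/-- Invariant: values stored at index `n` are nonzero of valuation `n`. -/
def Inv2 (g : ℕ → Option ℚ) : Prop :=
  ∀ n y, g n = some y → y ≠ 0 ∧ padicValRat 2 y = n

lemma sub_val {g : ℕ → Option ℚ} (hg : Inv2 g) {x : ℚ} (hx : x ≠ 0)
    (hx0 : 0 ≤ padicValRat 2 x) {y : ℚ} (hy : g (ordn x) = some y) (hne : x - y ≠ 0) :
    padicValRat 2 x + 1 ≤ padicValRat 2 (x - y) := by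
  obtain ⟨hy0, hyval⟩ := hg _ _ hy
  have : (ordn x : ℤ) = padicValRat 2 x := Int.toNat_of_nonneg hx0
  exact key_sub hx hy0 (by intro hc; exact hne (by rw [hc, sub_self])) (by omega)

/-- Stopping property of the reduction: with enough fuel, the remainder is `0` or has
undefined index. -/
lemma red_stop {g : ℕ → Option ℚ} (hg : Inv2 g) :
    ∀ (f : ℕ) (x : ℚ), 0 ≤ padicValRat 2 x →
      (∀ n, g n ≠ none → (n : ℤ) < padicValRat 2 x + f) →
      red g f x = 0 ∨
        (0 ≤ padicValRat 2 (red g f x) ∧ g (ordn (red g f x)) = none) := by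
  intro f
  induction f with
  | zero =>
    intro x hx hb
    by_cases hx0 : x = 0
    · exact Or.inl (by simpa [red] using hx0)
    · right
      refine ⟨hx, ?_⟩
      rcases hc : g (ordn x) with _ | y
      · rw [show red g 0 x = x from rfl]
        exact hc
      · exfalso
        have hb1 := hb (ordn x) (by rw [hc]; simp)
        have hb2 : (ordn x : ℤ) = padicValRat 2 x := Int.toNat_of_nonneg hx
        omega
  | succ f ih =>
    intro x hx hb
    by_cases hx0 : x = 0
    · left; simp [red, hx0]
    · rcases hc : g (ordn x) with _ | y
      · right
        rw [red, if_neg hx0, if_pos hc]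
        exact ⟨hx, hc⟩
      · have hred : red g (f + 1) x = red g f (x - y) := by
          rw [red, if_neg hx0, if_neg (by rw [hc]; simp), hc]
          rfl
        by_cases hne : x - y = 0
        · left; rw [hred, hne, red_zero]
        · have hkey := sub_val hg hx0 hx hc hne
          rw [hred]
          exact ih (x - y) (by omega) (fun n hn => by have := hb n hn; omega)

/-- Decomposition property: the reduced part differs from `x` by a sum of defined
basis elements with indices at least `ordn x`. -/
lemma red_sum {g : ℕ → Option ℚ} (hg : Inv2 g) :
    ∀ f x, 0 ≤ padicValRat 2 x →
      ∃ A : Finset ℕ, (∀ n ∈ A, (g n).isSome ∧ ordn x ≤ n) ∧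
        x = red g f x + ∑ n ∈ A, (g n).getD 0 := by
  intro f
  induction f with
  | zero =>
    intro x _
    exact ⟨∅, by simp, by simp [red]⟩
  | succ f ih =>
    intro x hx
    by_cases hx0 : x = 0
    · exact ⟨∅, by simp, by simp [red, hx0]⟩
    · rcases hc : g (ordn x) with _ | y
      · refine ⟨∅, by simp, ?_⟩
        rw [red, if_neg hx0, if_pos hc]
        simp
      · have hred : red g (f + 1) x = red g f (x - y) := by
          rw [red, if_neg hx0, if_neg (by rw [hc]; simp), hc]
          rfl
        by_cases hne : x - y = 0
        · refine ⟨{ordn x}, ?_, ?_⟩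
          · intro n hn
            rw [Finset.mem_singleton] at hn
            subst hn
            exact ⟨by rw [hc]; simp, le_refl _⟩
          · rw [hred, hne, red_zero, Finset.sum_singleton, hc, Option.getD_some, zero_add]
            exact sub_eq_zero.mp hne
        · have hkey := sub_val hg hx0 hx hc hne
          obtain ⟨A, hA, hsum⟩ := ih (x - y) (by omega)
          have hord : ordn x + 1 ≤ ordn (x - y) := by
            unfold ordn
            omega
          have hnotmem : ordn x ∉ A := by
            intro hmem
            have := (hA _ hmem).2
            omega
          refine ⟨insert (ordn x) A, ?_, ?_⟩
          · intro n hn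
            rcases Finset.mem_insert.mp hn with h1 | h1
            · subst h1; exact ⟨by rw [hc]; simp, le_refl _⟩
            · exact ⟨(hA _ h1).1, le_trans (by omega) (hA _ h1).2⟩
          · rw [Finset.sum_insert hnotmem, hred, hc]
            simp only [Option.getD_some]
            linarith [hsum]

/-- One step of the construction: process one rational `x`. -/
noncomputable def step (s : (ℕ → Option ℚ) × ℕ) (x : ℚ) : (ℕ → Option ℚ) × ℕ :=
  if 0 ≤ padicValRat 2 x then
    if red s.1 s.2 x = 0 then s
    else
      (fun n => if n = ordn (red s.1 s.2 x) then some (red s.1 s.2 x) else s.1 n,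
        max s.2 (ordn (red s.1 s.2 x) + 1))
  else s

/-- The stages of the construction along an enumeration `e`. -/
noncomputable def stages (e : ℕ → ℚ) : ℕ → (ℕ → Option ℚ) × ℕ
  | 0 => (fun _ => none, 0)
  | k + 1 => step (stages e k) (e k)

/-- Full invariant: bound on defined indices, plus valuation invariant. -/
def Inv (s : (ℕ → Option ℚ) × ℕ) : Prop :=
  (∀ n, s.2 ≤ n → s.1 n = none) ∧ Inv2 s.1

lemma step_inv {s : (ℕ → Option ℚ) × ℕ} (hs : Inv s) (x : ℚ) : Inv (step s x) := by
  unfold step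
  split
  · next hx =>
    split
    · exact hs
    · next hr =>
      set r := red s.1 s.2 x with hrdef
      have hstop := red_stop hs.2 s.2 x hx (fun n hn => by
        by_contra hc
        push_neg at hc
        have : s.2 ≤ n := by omega
        exact hn (hs.1 n this))
      rcases hstop with h | ⟨hval, hnone⟩
      · exact absurd h hr
      · constructor
        · intro n hn
          simp only
          rw [if_neg (by omega), hs.1 n (by omega)]
        · intro n y hny
          simp only at hny
          by_cases hne : n = ordn r
          · rw [if_pos hne] at hny
            have hyr : y = r := (Option.some.inj hny).symm
            subst hyr
            refine ⟨hr, ?_⟩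
            rw [hne]
            exact (Int.toNat_of_nonneg hval).symm
          · rw [if_neg hne] at hny
            exact hs.2 n y hny
  · exact hs

lemma stages_inv (e : ℕ → ℚ) : ∀ k, Inv (stages e k)
  | 0 => ⟨fun _ _ => rfl, fun n y h => by simp [stages] at h⟩
  | k + 1 => step_inv (stages_inv e k) (e k)

lemma step_mono {s : (ℕ → Option ℚ) × ℕ} (hs : Inv s) {n : ℕ} {y : ℚ} (x : ℚ)
    (h : s.1 n = some y) : (step s x).1 n = some y := by
  unfold step
  split
  · next hx =>
    split
    · exact h
    · next hr =>
      have hstop := red_stop hs.2 s.2 x hx (fun m hm => by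
        by_contra hc
        push_neg at hc
        exact hm (hs.1 m (by omega)))
      rcases hstop with h1 | ⟨_, hnone⟩
      · exact absurd h1 hr
      · simp only
        split
        · next heq =>
          exfalso
          rw [heq, hnone] at h
          simp at h
        · exact h
  · exact h

lemma stages_mono (e : ℕ → ℚ) {n : ℕ} {y : ℚ} :
    ∀ {k k' : ℕ}, k ≤ k' → (stages e k).1 n = some y → (stages e k').1 n = some y := by
  intro k k' hkk'
  induction k' with
  | zero =>
    intro h
    have : k = 0 := Nat.le_zero.mp hkk'
    subst this
    exact h
  | succ k' ih =>
    intro h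
    rcases Nat.lt_or_ge k (k' + 1) with h1 | h1
    · exact step_mono (stages_inv e k') (e k') (ih (by omega) h)
    · have : k = k' + 1 := by omega
      subst this
      exact h

open Classical in
/-- The basis sequence: value at the first stage defining index `n`, else `2 ^ n`. -/
noncomputable def qseq (e : ℕ → ℚ) (n : ℕ) : ℚ :=
  if h : ∃ k y, (stages e k).1 n = some y then h.choose_spec.choose else 2 ^ n

lemma qseq_eq (e : ℕ → ℚ) {n : ℕ} {k : ℕ} {y : ℚ} (h : (stages e k).1 n = some y) :
    qseq e n = y := by
  classical
  unfold qseq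
  have hex : ∃ k y, (stages e k).1 n = some y := ⟨k, y, h⟩
  rw [dif_pos hex]
  obtain hspec := hex.choose_spec.choose_spec
  have h1 := stages_mono e (Nat.le_max_left hex.choose k) hspec
  have h2 := stages_mono e (Nat.le_max_right hex.choose k) h
  rw [h1] at h2
  injection h2

lemma qseq_spec (e : ℕ → ℚ) (n : ℕ) :
    qseq e n ≠ 0 ∧ padicValRat 2 (qseq e n) = n := by
  classical
  unfold qseq
  split
  · next h =>
    exact (stages_inv e h.choose).2 n _ h.choose_spec.choose_spec
  · constructor
    · positivity
    · have : ((2 : ℚ) ^ n) = ((2 : ℕ) : ℚ) ^ n := by norm_num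
      rw [this, padicValRat.pow (p := 2) _, padicValRat.self (by norm_num)]
      simp

end Stmt16Aux

open Stmt16Aux in
/-- There exists a sequence q₀, q₁, … of elements of ℤ_{(2)} such that
(1) ord₂(qₙ) = n for all n, and (2) every q ∈ ℤ_{(2)} is a finite sum Σ_{n∈A} qₙ. -/
theorem stmt_16 :
    ∃ q : ℕ → ℚ,
      (∀ n : ℕ, (0 : WithTop ℤ) ≤ ord2 (q n)) ∧
      (∀ n : ℕ, ord2 (q n) = ((n : ℤ) : WithTop ℤ)) ∧
      (∀ x : ℚ, (0 : WithTop ℤ) ≤ ord2 x → ∃ A : Finset ℕ, x = ∑ n ∈ A, q n) := by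
  obtain ⟨e, he⟩ := exists_surjective_nat ℚ
  refine ⟨qseq e, ?_, ?_, ?_⟩
  · intro n
    obtain ⟨h0, hval⟩ := qseq_spec e n
    rw [ord2, if_neg h0, hval]
    exact_mod_cast Int.ofNat_nonneg n
  · intro n
    obtain ⟨h0, hval⟩ := qseq_spec e n
    rw [ord2, if_neg h0, hval]
  · intro x hx
    -- extract `0 ≤ padicValRat 2 x`
    have hx' : 0 ≤ padicValRat 2 x := by
      by_cases h0 : x = 0
      · simp [h0]
      · rw [ord2, if_neg h0] at hx
        exact_mod_cast hx
    obtain ⟨k, hk⟩ := he x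
    have hsinv := stages_inv e k
    obtain ⟨A, hA, hsum⟩ := red_sum hsinv.2 (stages e k).2 x hx'
    have hAq : ∑ n ∈ A, ((stages e k).1 n).getD 0 = ∑ n ∈ A, qseq e n := by
      refine Finset.sum_congr rfl fun n hn => ?_
      obtain ⟨hsome, _⟩ := hA n hn
      obtain ⟨y, hy⟩ := Option.isSome_iff_exists.mp hsome
      rw [hy, Option.getD_some, qseq_eq e hy]
    by_cases hr : red (stages e k).1 (stages e k).2 x = 0
    · refine ⟨A, ?_⟩
      rw [hsum, hr, zero_add, hAq]
    · have hstop := red_stop hsinv.2 (stages e k).2 x hx' (fun n hn => by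
        by_contra hc
        push_neg at hc
        exact hn (hsinv.1 n (by omega)))
      rcases hstop with h | ⟨hval, hnone⟩
      · exact absurd h hr
      · -- at stage k+1, index `ordn r` gets value `r`
        have hstage : (stages e (k + 1)).1 (ordn (red (stages e k).1 (stages e k).2 x))
            = some (red (stages e k).1 (stages e k).2 x) := by
          show (step (stages e k) (e k)).1 _ = _
          rw [hk]
          unfold step
          rw [if_pos hx', if_neg hr]
          simp
        have hqr : qseq e (ordn (red (stages e k).1 (stages e k).2 x))
            = red (stages e k).1 (stages e k).2 x := qseq_eq e hstage
        have hnotmem : ordn (red (stages e k).1 (stages e k).2 x) ∉ A := by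
          intro hmem
          obtain ⟨hsome, _⟩ := hA _ hmem
          rw [hnone] at hsome
          simp at hsome
        refine ⟨insert (ordn (red (stages e k).1 (stages e k).2 x)) A, ?_⟩
        rw [Finset.sum_insert hnotmem, hqr, ← hAq]
        exact hsum
end

section
/- There exists a sequence r₀, r₁, … of nonzero rational numbers such that, setting S_n = {Σ_{i∈A} r_i : A ⊆ {0, …, n−1}} for each nonnegative integer n, the following hold: (1) the union of the sets S_n over all n is ℚ; (2) ord₂(a − b) < ord₂(r_n) whenever n is even and a, b ∈ S_n are distinct; (3) ord₂(a − b) > ord₂(r_n) whenever n is odd and a, b ∈ S_n. -/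
namespace Stmt17

/-! ### valuation lemmas -/

lemma val_two : padicValRat 2 (2:ℚ) = 1 := by
  have := padicValRat.self (p := 2) (by norm_num : 1 < 2)
  rwa [show ((2:ℕ):ℚ) = (2:ℚ) by norm_num] at this

lemma val_two_zpow (m : ℤ) : padicValRat 2 ((2:ℚ) ^ m) = m := by
  rcases m with k | k
  · rw [Int.ofNat_eq_coe, zpow_natCast, padicValRat.pow 2, val_two]
    simp
  · rw [zpow_negSucc, padicValRat.inv, padicValRat.pow 2, val_two]
    rw [Int.negSucc_eq]
    push_cast
    ring

lemma two_zpow_ne (m : ℤ) : ((2:ℚ) ^ m) ≠ 0 := zpow_ne_zero m (by norm_num)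

lemma val_unit_mul {c : ℚ} (hc : c ≠ 0) (h0 : padicValRat 2 c = 0) (m : ℤ) :
    padicValRat 2 (c * 2 ^ m) = m := by
  rw [padicValRat.mul hc (two_zpow_ne m), h0, val_two_zpow, zero_add]

lemma num_den_odd {x : ℚ} (hx : x ≠ 0) (h : padicValRat 2 x = 0) :
    ¬ (2 ∣ x.num) ∧ ¬ (2 ∣ (x.den : ℤ)) := by
  have hd : ¬ (2 ∣ x.den) := by
    intro hdvd
    have hcop := x.reduced
    have hnum : ¬ (2 ∣ x.num.natAbs) := by
      intro h2
      have : 2 ∣ Nat.gcd x.num.natAbs x.den := Nat.dvd_gcd h2 hdvd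
      rw [Nat.Coprime.gcd_eq_one hcop] at this
      omega
    have h1 : padicValInt 2 x.num = 0 := by
      unfold padicValInt
      exact padicValNat.eq_zero_of_not_dvd hnum
    have h2 : 1 ≤ padicValNat 2 x.den :=
      one_le_padicValNat_of_dvd x.pos.ne' hdvd
    unfold padicValRat at h
    omega
  have hvd : padicValNat 2 x.den = 0 := padicValNat.eq_zero_of_not_dvd hd
  have hn : ¬ (2 ∣ x.num) := by
    intro h2
    have hnz : x.num ≠ 0 := Rat.num_ne_zero.2 hx
    have hdd : ((2:ℕ):ℤ) ^ 1 ∣ x.num := by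
      simpa using h2
    rw [padicValInt_dvd_iff] at hdd
    unfold padicValRat at h
    omega
  refine ⟨hn, fun h2 => hd (by exact_mod_cast h2)⟩

lemma unit_sub {x y : ℚ} (hx0 : x ≠ 0) (hy0 : y ≠ 0)
    (hx : padicValRat 2 x = 0) (hy : padicValRat 2 y = 0) (hxy : x ≠ y) :
    1 ≤ padicValRat 2 (x - y) := by
  obtain ⟨hxn, hxd⟩ := num_den_odd hx0 hx
  obtain ⟨hyn, hyd⟩ := num_den_odd hy0 hy
  set N : ℤ := x.num * y.den - y.num * x.den with hN
  set D : ℤ := (x.den : ℤ) * (y.den : ℤ) with hD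
  have hxden : ((x.den:ℚ)) ≠ 0 := by positivity
  have hyden : ((y.den:ℚ)) ≠ 0 := by positivity
  have hDne : ((D:ℚ)) ≠ 0 := by
    rw [hD]; push_cast; positivity
  have h1 : (x.num:ℚ) = x * x.den := (div_eq_iff hxden).mp (Rat.num_div_den x)
  have h2 : (y.num:ℚ) = y * y.den := (div_eq_iff hyden).mp (Rat.num_div_den y)
  have key : x - y = (N : ℚ) / (D : ℚ) := by
    rw [eq_div_iff hDne, hN, hD]
    push_cast
    rw [h1, h2]; ring
  have hNne : N ≠ 0 := by
    intro h0
    apply hxy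
    have hNQ0 : (N:ℚ) = 0 := by exact_mod_cast h0
    have hsub : x - y = 0 := by rw [key, hNQ0, zero_div]
    linarith [hsub]
  have hNQ : (N:ℚ) ≠ 0 := by exact_mod_cast hNne
  rw [key, padicValRat.div hNQ hDne, padicValRat.of_int, padicValRat.of_int]
  have hDval : padicValInt 2 D = 0 := by
    apply padicValInt.eq_zero_of_not_dvd
    intro hdvd
    have hdvd' : ((2:ℕ):ℤ) ∣ (x.den:ℤ) * (y.den:ℤ) := by
      rw [← hD]; exact_mod_cast hdvd
    rcases Int.Prime.dvd_mul' Nat.prime_two hdvd' with h' | h'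
    · exact hxd (by exact_mod_cast h')
    · exact hyd (by exact_mod_cast h')
  have hNdvd : (2:ℤ) ∣ N := by
    have e1 : ¬ Even (x.num * (y.den:ℤ)) := by
      rw [Int.even_mul]
      push_neg
      exact ⟨fun h' => hxn (even_iff_two_dvd.mp h'), fun h' => hyd (even_iff_two_dvd.mp h')⟩
    have e2 : ¬ Even (y.num * (x.den:ℤ)) := by
      rw [Int.even_mul]
      push_neg
      exact ⟨fun h' => hyn (even_iff_two_dvd.mp h'), fun h' => hxd (even_iff_two_dvd.mp h')⟩
    have hE : Even N := by
      rw [hN, Int.even_sub]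
      tauto
    exact hE.two_dvd
  have hNval : 1 ≤ padicValInt 2 N := by
    have h21 : ((2:ℕ):ℤ) ^ 1 ∣ N := by simpa using hNdvd
    rw [padicValInt_dvd_iff] at h21
    rcases h21 with h' | h'
    · exact absurd h' hNne
    · exact h'
  rw [hDval]
  omega

lemma sub_val {x y : ℚ} (hx0 : x ≠ 0) (hy0 : y ≠ 0) (hxy : x ≠ y)
    (hv : padicValRat 2 x = padicValRat 2 y) :
    padicValRat 2 x < padicValRat 2 (x - y) := by
  set v := padicValRat 2 x with hvdef
  have hx' : padicValRat 2 (x * 2 ^ (-v)) = 0 := by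
    rw [padicValRat.mul hx0 (two_zpow_ne _), val_two_zpow]; omega
  have hy' : padicValRat 2 (y * 2 ^ (-v)) = 0 := by
    rw [padicValRat.mul hy0 (two_zpow_ne _), val_two_zpow, ← hv]; omega
  have hne : x * 2 ^ (-v) ≠ y * 2 ^ (-v) := by
    intro h
    exact hxy (mul_right_cancel₀ (two_zpow_ne _) h)
  have h1 := unit_sub (mul_ne_zero hx0 (two_zpow_ne _)) (mul_ne_zero hy0 (two_zpow_ne _))
    hx' hy' hne
  have hsub : x - y = (x * 2 ^ (-v) - y * 2 ^ (-v)) * 2 ^ v := by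
    rw [sub_mul, mul_assoc, mul_assoc, ← zpow_add₀ (by norm_num : (2:ℚ) ≠ 0)]
    simp
  have hd0 : x * 2 ^ (-v) - y * 2 ^ (-v) ≠ 0 := sub_ne_zero_of_ne hne
  rw [hsub, padicValRat.mul hd0 (two_zpow_ne _), val_two_zpow]
  omega

/-! ### levels -/

def lv (n : ℕ) : ℤ := if n % 2 = 0 then ((n / 2 : ℕ) : ℤ) else -(((n / 2 : ℕ) : ℤ) + 1)

def stg (v : ℤ) : ℕ := if 0 ≤ v then 2 * v.toNat else 2 * (-v).toNat - 1

lemma stg_lv (n : ℕ) : stg (lv n) = n := by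
  unfold lv stg
  rcases Nat.even_or_odd n with h | h
  · have h2 : n % 2 = 0 := Nat.even_iff.mp h
    simp only [h2, if_true]
    rw [if_pos (by positivity)]
    omega
  · have h2 : n % 2 = 1 := Nat.odd_iff.mp h
    simp only [h2]
    norm_num
    rw [if_neg (by omega)]
    omega

lemma lv_stg (v : ℤ) : lv (stg v) = v := by
  rcases le_or_gt 0 v with h | h
  · have hs : stg v = 2 * v.toNat := if_pos h
    rw [hs]
    unfold lv
    simp only [show 2 * v.toNat % 2 = 0 by omega, if_true]
    omega
  · have hs : stg v = 2 * (-v).toNat - 1 := if_neg (by omega)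
    rw [hs]
    unfold lv
    have h1 : 1 ≤ (-v).toNat := by omega
    simp only [show (2 * (-v).toNat - 1) % 2 = 1 by omega]
    norm_num
    omega

lemma lv_inj : Function.Injective lv := by
  intro a b h
  have := congrArg stg h
  rwa [stg_lv, stg_lv] at this

lemma lv_lt_even {n i : ℕ} (hn : n % 2 = 0) (hi : i < n) : lv i < lv n := by
  unfold lv
  rcases Nat.even_or_odd i with h | h
  · have h2 : i % 2 = 0 := Nat.even_iff.mp h
    simp only [h2, hn, if_true]
    omega
  · have h2 : i % 2 = 1 := Nat.odd_iff.mp h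
    simp only [h2, hn]
    norm_num
    omega

lemma lv_lt_odd {n i : ℕ} (hn : n % 2 = 1) (hi : i < n) : lv n < lv i := by
  unfold lv
  rcases Nat.even_or_odd i with h | h
  · have h2 : i % 2 = 0 := Nat.even_iff.mp h
    simp only [h2, hn]
    norm_num
    omega
  · have h2 : i % 2 = 1 := Nat.odd_iff.mp h
    simp only [h2, hn]
    norm_num
    omega

/-! ### enumeration -/

noncomputable def e (j : ℕ) : ℚ := if j = 0 then 0 else Denumerable.ofNat ℚ (j - 1)

lemma e_surj (x : ℚ) : ∃ j, e j = x := by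
  refine ⟨(@Encodable.encode ℚ Denumerable.toEncodable x) + 1, ?_⟩
  unfold e
  rw [if_neg (by omega)]
  simp only [Nat.add_sub_cancel]
  exact Denumerable.ofNat_encode x

/-! ### the recursion -/

noncomputable def St : ℕ → (ℕ → ℚ) × ℕ × ℚ
  | 0 => (fun _ => 1, 0, 0)
  | n+1 =>
    let s := St n
    let c := s.1
    let j := s.2.1
    let R := s.2.2
    if R = 0 then (Function.update c n 1, j+1, e (j+1))
    else if padicValRat 2 R = lv n then (Function.update c n (R / 2 ^ (lv n)), j, 0)
    else if stg (padicValRat 2 R) < n then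
      (Function.update c n 1, j, R - c (stg (padicValRat 2 R)) * 2 ^ (padicValRat 2 R))
    else (Function.update c n 1, j, R)

noncomputable def C (n : ℕ) : ℚ := (St (n+1)).1 n

noncomputable def r (n : ℕ) : ℚ := C n * 2 ^ (lv n)

lemma St_succ_fst (k z : ℕ) (hz : z ≠ k) : (St (k+1)).1 z = (St k).1 z := by
  simp only [St]
  split_ifs <;> simp [Function.update_of_ne hz]

lemma St_fst_stable (n : ℕ) : ∀ m, n < m → (St m).1 n = C n := by
  intro m hm
  induction m with
  | zero => omega
  | succ k ih =>
    rcases Nat.lt_or_ge n k with h | h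
    · rw [St_succ_fst k n (by omega)]
      exact ih h
    · have : n = k := by omega
      subst this
      rfl

noncomputable def Pj (n : ℕ) : ℕ := (St n).2.1
noncomputable def Rr (n : ℕ) : ℚ := (St n).2.2

lemma St_succ_zero {n : ℕ} (h : Rr n = 0) :
    Pj (n+1) = Pj n + 1 ∧ Rr (n+1) = e (Pj n + 1) ∧ C n = 1 := by
  unfold Pj Rr C at *
  simp only [St]
  rw [if_pos h]
  simp

lemma St_succ_kill {n : ℕ} (h : Rr n ≠ 0) (h2 : padicValRat 2 (Rr n) = lv n) :
    Pj (n+1) = Pj n ∧ Rr (n+1) = 0 ∧ C n = Rr n / 2 ^ (lv n) := by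
  unfold Pj Rr C at *
  simp only [St]
  rw [if_neg h, if_pos h2]
  simp

lemma St_succ_sub {n : ℕ} (h : Rr n ≠ 0) (h2 : padicValRat 2 (Rr n) ≠ lv n)
    (h3 : stg (padicValRat 2 (Rr n)) < n) :
    Pj (n+1) = Pj n ∧
      Rr (n+1) = Rr n - C (stg (padicValRat 2 (Rr n))) * 2 ^ (padicValRat 2 (Rr n)) ∧
      C n = 1 := by
  have hst : (St n).1 (stg (padicValRat 2 (Rr n))) = C (stg (padicValRat 2 (Rr n))) :=
    St_fst_stable _ n h3
  refine ⟨?_, ?_, ?_⟩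
  · unfold Pj Rr at *
    simp only [St]
    rw [if_neg h, if_neg h2, if_pos h3]
  · rw [← hst]
    unfold Pj Rr at *
    simp only [St]
    rw [if_neg h, if_neg h2, if_pos h3]
  · unfold Rr at *
    unfold C
    simp only [St]
    rw [if_neg h, if_neg h2, if_pos h3]
    simp

lemma St_succ_wait {n : ℕ} (h : Rr n ≠ 0) (h2 : padicValRat 2 (Rr n) ≠ lv n)
    (h3 : ¬ stg (padicValRat 2 (Rr n)) < n) :
    Pj (n+1) = Pj n ∧ Rr (n+1) = Rr n ∧ C n = 1 := by
  unfold Pj Rr C at *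
  simp only [St]
  rw [if_neg h, if_neg h2, if_neg h3]
  simp

lemma C_spec (n : ℕ) : C n ≠ 0 ∧ padicValRat 2 (C n) = 0 := by
  by_cases h : Rr n = 0
  · rw [(St_succ_zero h).2.2]
    norm_num
  · by_cases h2 : padicValRat 2 (Rr n) = lv n
    · rw [(St_succ_kill h h2).2.2]
      constructor
      · exact div_ne_zero h (two_zpow_ne _)
      · rw [padicValRat.div h (two_zpow_ne _), val_two_zpow, h2, sub_self]
    · by_cases h3 : stg (padicValRat 2 (Rr n)) < n
      · rw [(St_succ_sub h h2 h3).2.2]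
        norm_num
      · rw [(St_succ_wait h h2 h3).2.2]
        norm_num

lemma r_ne (n : ℕ) : r n ≠ 0 := mul_ne_zero (C_spec n).1 (two_zpow_ne _)

lemma r_val (n : ℕ) : padicValRat 2 (r n) = lv n := val_unit_mul (C_spec n).1 (C_spec n).2 _

lemma ord2_of_ne {x : ℚ} (h : x ≠ 0) : ord2 x = ((padicValRat 2 x : ℤ) : WithTop ℤ) := if_neg h

lemma ord2_r (n : ℕ) : ord2 (r n) = ((lv n : ℤ) : WithTop ℤ) := by
  rw [ord2_of_ne (r_ne n), r_val]

lemma ord2_zero : ord2 0 = ⊤ := if_pos rfl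

lemma range_mono {k : ℕ} : Finset.range k ⊆ Finset.range (k+1) :=
  Finset.range_subset_range.mpr (Nat.le_succ k)

lemma invariant (n : ℕ) : ∃ A ⊆ Finset.range n, e (Pj n) = (∑ i ∈ A, r i) + Rr n ∧
    ∀ i ∈ A, ord2 (r i) < ord2 (Rr n) := by
  induction n with
  | zero =>
    refine ⟨∅, by simp, ?_, by simp⟩
    show e (St 0).2.1 = _ + (St 0).2.2
    simp [St, e]
  | succ k ih =>
    obtain ⟨A, hA, hsum, hlt⟩ := ih
    by_cases h : Rr k = 0
    · obtain ⟨hp, hr, -⟩ := St_succ_zero h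
      exact ⟨∅, by simp, by rw [hp, hr]; simp, by simp⟩
    · by_cases h2 : padicValRat 2 (Rr k) = lv k
      · obtain ⟨hp, hr, hc⟩ := St_succ_kill h h2
        have hrk : r k = Rr k := by
          unfold r
          rw [hc, div_mul_cancel₀ _ (two_zpow_ne _)]
        have hkA : k ∉ A := fun hk => by
          have := hA hk
          simp at this
        refine ⟨insert k A, ?_, ?_, ?_⟩
        · intro i hi
          rcases Finset.mem_insert.mp hi with h' | h'
          · subst h'; simp
          · exact range_mono (hA h')
        · rw [hp, hr, Finset.sum_insert hkA, hrk, hsum]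
          ring
        · intro i _
          rw [hr, ord2_zero, ord2_of_ne (r_ne i)]
          exact WithTop.coe_lt_top _
      · by_cases h3 : stg (padicValRat 2 (Rr k)) < k
        · obtain ⟨hp, hr, -⟩ := St_succ_sub h h2 h3
          set i0 := stg (padicValRat 2 (Rr k)) with hi0def
          have hlv : lv i0 = padicValRat 2 (Rr k) := lv_stg _
          have hri0 : r i0 = C i0 * 2 ^ (padicValRat 2 (Rr k)) := by
            unfold r
            rw [hlv]
          have hval_ri0 : padicValRat 2 (r i0) = padicValRat 2 (Rr k) := by
            rw [r_val, hlv]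
          have hi0A : i0 ∉ A := by
            intro hmem
            have hcontra := hlt i0 hmem
            rw [ord2_of_ne (r_ne _), ord2_of_ne h, hval_ri0] at hcontra
            exact lt_irrefl _ (WithTop.coe_lt_coe.mp hcontra)
          have hRk' : Rr (k+1) = Rr k - r i0 := by rw [hr, hri0]
          refine ⟨insert i0 A, ?_, ?_, ?_⟩
          · intro i hi
            rcases Finset.mem_insert.mp hi with h' | h'
            · subst h'
              exact Finset.mem_range.mpr (by omega)
            · exact range_mono (hA h')
          · rw [hp, hRk', Finset.sum_insert hi0A, hsum]
            ring
          · intro i hi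
            by_cases hz : Rr (k+1) = 0
            · rw [hz, ord2_zero, ord2_of_ne (r_ne i)]
              exact WithTop.coe_lt_top _
            · have hne2 : Rr k ≠ r i0 := fun hh => hz (by rw [hRk', hh, sub_self])
              have hvgt : padicValRat 2 (Rr k) < padicValRat 2 (Rr (k+1)) := by
                rw [hRk']
                exact sub_val h (r_ne i0) hne2 hval_ri0.symm
              rw [ord2_of_ne hz, ord2_of_ne (r_ne i)]
              rcases Finset.mem_insert.mp hi with h' | h'
              · subst h'
                rw [hval_ri0]
                exact WithTop.coe_lt_coe.mpr hvgt
              · have hcontra := hlt i h'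
                rw [ord2_of_ne (r_ne i), ord2_of_ne h] at hcontra
                exact WithTop.coe_lt_coe.mpr
                  (lt_trans (WithTop.coe_lt_coe.mp hcontra) hvgt)
        · obtain ⟨hp, hr, -⟩ := St_succ_wait h h2 h3
          exact ⟨A, subset_trans hA range_mono, by rw [hp, hr]; exact hsum,
            by rw [hr]; exact hlt⟩

/-! ### progress -/

lemma wait_kill : ∀ (k n : ℕ), Rr n ≠ 0 → stg (padicValRat 2 (Rr n)) = n + k →
    Pj (n + k + 1) = Pj n ∧ Rr (n + k + 1) = 0 := by
  intro k
  induction k with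
  | zero =>
    intro n h hs
    have h2 : padicValRat 2 (Rr n) = lv n := by
      have := lv_stg (padicValRat 2 (Rr n))
      rw [hs] at this
      simpa using this.symm
    obtain ⟨hp, hr, -⟩ := St_succ_kill h h2
    exact ⟨hp, hr⟩
  | succ m ih =>
    intro n h hs
    have h2 : padicValRat 2 (Rr n) ≠ lv n := by
      intro hval
      have : stg (lv n) = n := stg_lv n
      rw [← hval, hs] at this
      omega
    have h3 : ¬ stg (padicValRat 2 (Rr n)) < n := by omega
    obtain ⟨hp, hr, -⟩ := St_succ_wait h h2 h3
    obtain ⟨hp', hr'⟩ := ih (n+1) (by rw [hr]; exact h) (by rw [hr]; omega)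
    constructor
    · rw [show n + (m + 1) + 1 = n + 1 + m + 1 by omega, hp', hp]
    · rw [show n + (m + 1) + 1 = n + 1 + m + 1 by omega, hr']

lemma fuel_lemma : ∀ (F n : ℕ), Rr n ≠ 0 → (n : ℤ) ≤ 2 * padicValRat 2 (Rr n) + F →
    ∃ m, Pj m = Pj n ∧ Rr m = 0 := by
  intro F
  induction F with
  | zero =>
    intro n h hF
    have hv : 0 ≤ padicValRat 2 (Rr n) := by omega
    have hs : stg (padicValRat 2 (Rr n)) = 2 * (padicValRat 2 (Rr n)).toNat := if_pos hv
    have hge : n ≤ stg (padicValRat 2 (Rr n)) := by omega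
    obtain ⟨hp, hr⟩ := wait_kill (stg (padicValRat 2 (Rr n)) - n) n h (by omega)
    exact ⟨n + (stg (padicValRat 2 (Rr n)) - n) + 1, hp, hr⟩
  | succ F ih =>
    intro n h hF
    by_cases hge : n ≤ stg (padicValRat 2 (Rr n))
    · obtain ⟨hp, hr⟩ := wait_kill (stg (padicValRat 2 (Rr n)) - n) n h (by omega)
      exact ⟨n + (stg (padicValRat 2 (Rr n)) - n) + 1, hp, hr⟩
    · have h3 : stg (padicValRat 2 (Rr n)) < n := by omega
      have h2 : padicValRat 2 (Rr n) ≠ lv n := by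
        intro hval
        have : stg (lv n) = n := stg_lv n
        rw [← hval] at this
        omega
      obtain ⟨hp, hr, -⟩ := St_succ_sub h h2 h3
      set i0 := stg (padicValRat 2 (Rr n)) with hi0
      have hlv : lv i0 = padicValRat 2 (Rr n) := lv_stg _
      have hri0 : C i0 * (2:ℚ) ^ (padicValRat 2 (Rr n)) = r i0 := by
        unfold r
        rw [hlv]
      rw [hri0] at hr
      by_cases hz : Rr (n+1) = 0
      · exact ⟨n+1, by rw [hp], hz⟩
      · have hval_ri0 : padicValRat 2 (r i0) = padicValRat 2 (Rr n) := by rw [r_val, hlv]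
        have hne2 : Rr n ≠ r i0 := fun hh => hz (by rw [hr, hh, sub_self])
        have hvgt : padicValRat 2 (Rr n) < padicValRat 2 (Rr (n+1)) := by
          rw [hr]
          exact sub_val h (r_ne i0) hne2 hval_ri0.symm
        obtain ⟨m, hm1, hm2⟩ := ih (n+1) hz (by push_cast; omega)
        exact ⟨m, by rw [hm1, hp], hm2⟩

lemma targets : ∀ j, ∃ n, Pj n = j ∧ Rr n = 0 := by
  intro j
  induction j with
  | zero => exact ⟨0, rfl, rfl⟩
  | succ j ih =>
    obtain ⟨n, hj, h0⟩ := ih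
    obtain ⟨hp, hr, -⟩ := St_succ_zero h0
    rw [hj] at hp hr
    by_cases hz : e (j+1) = 0
    · exact ⟨n+1, hp, by rw [hr, hz]⟩
    · have hz' : Rr (n+1) ≠ 0 := by rw [hr]; exact hz
      obtain ⟨m, hm1, hm2⟩ := fuel_lemma ((n + 1 : ℤ) - 2 * padicValRat 2 (Rr (n+1))).toNat
        (n+1) hz' (by omega)
      exact ⟨m, by rw [hm1, hp], hm2⟩

lemma coverage (x : ℚ) : ∃ n, ∃ A ⊆ Finset.range n, x = ∑ i ∈ A, r i := by
  obtain ⟨j, hj⟩ := e_surj x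
  obtain ⟨n, hp, h0⟩ := targets j
  obtain ⟨A, hA, hsum, -⟩ := invariant n
  rw [hp, hj, h0, add_zero] at hsum
  exact ⟨n, A, hA, hsum⟩

/-! ### valuation of signed sums -/

lemma sum_val_lt {g : ℕ → ℚ} {x : ℚ} : ∀ (S : Finset ℕ), (∀ i ∈ S, g i ≠ 0) →
    (∀ i ∈ S, padicValRat 2 x < padicValRat 2 (g i)) → (∑ i ∈ S, g i) ≠ 0 →
    padicValRat 2 x < padicValRat 2 (∑ i ∈ S, g i) := by
  intro S
  classical
  induction S using Finset.induction_on with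
  | empty => intro _ _ h0; simp at h0
  | @insert a S haS ih =>
    intro hne hlt h0
    rw [Finset.sum_insert haS] at h0 ⊢
    by_cases hS : (∑ i ∈ S, g i) = 0
    · rw [hS, add_zero]
      exact hlt a (Finset.mem_insert_self a S)
    · exact padicValRat.lt_add_of_lt h0 (hlt a (Finset.mem_insert_self a S))
        (ih (fun i hi => hne i (Finset.mem_insert_of_mem hi))
          (fun i hi => hlt i (Finset.mem_insert_of_mem hi)) hS)

lemma sum_val_min {g : ℕ → ℚ} {S : Finset ℕ} {i₀ : ℕ} (hi₀ : i₀ ∈ S)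
    (hne : ∀ i ∈ S, g i ≠ 0)
    (hmin : ∀ i ∈ S, i ≠ i₀ → padicValRat 2 (g i₀) < padicValRat 2 (g i)) :
    (∑ i ∈ S, g i) ≠ 0 ∧ padicValRat 2 (∑ i ∈ S, g i) = padicValRat 2 (g i₀) := by
  classical
  have hsplit : ∑ i ∈ S, g i = g i₀ + ∑ i ∈ S.erase i₀, g i :=
    (Finset.add_sum_erase S g hi₀).symm
  by_cases hT : (∑ i ∈ S.erase i₀, g i) = 0
  · rw [hsplit, hT, add_zero]
    exact ⟨hne i₀ hi₀, rfl⟩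
  · have hTlt : padicValRat 2 (g i₀) < padicValRat 2 (∑ i ∈ S.erase i₀, g i) :=
      sum_val_lt _ (fun i hi => hne i (Finset.mem_of_mem_erase hi))
        (fun i hi => hmin i (Finset.mem_of_mem_erase hi) (Finset.ne_of_mem_erase hi)) hT
    have hsum_ne : g i₀ + ∑ i ∈ S.erase i₀, g i ≠ 0 := by
      intro h0
      have heq : ∑ i ∈ S.erase i₀, g i = - g i₀ := by linarith
      rw [heq, padicValRat.neg] at hTlt
      exact lt_irrefl _ hTlt
    refine ⟨by rw [hsplit]; exact hsum_ne, ?_⟩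
    rw [hsplit, padicValRat.add_eq_of_lt hsum_ne (hne i₀ hi₀) hT hTlt]

lemma diff_val {n : ℕ} {A B : Finset ℕ} (hA : A ⊆ Finset.range n) (hB : B ⊆ Finset.range n)
    (hne : (∑ i ∈ A, r i) ≠ ∑ i ∈ B, r i) :
    ∃ i₀ < n, padicValRat 2 ((∑ i ∈ A, r i) - ∑ i ∈ B, r i) = lv i₀ := by
  classical
  set g : ℕ → ℚ := fun i => if i ∈ A then r i else -(r i) with hg
  set F := (A \ B) ∪ (B \ A) with hF
  have hdisj : Disjoint (A \ B) (B \ A) := disjoint_sdiff_sdiff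
  have hd := sub_ne_zero_of_ne hne
  have h1 : ∑ i ∈ A \ B, g i = ∑ i ∈ A \ B, r i :=
    Finset.sum_congr rfl (fun i hi => by rw [hg]; simp [(Finset.mem_sdiff.mp hi).1])
  have h2 : ∑ i ∈ B \ A, g i = ∑ i ∈ B \ A, -(r i) :=
    Finset.sum_congr rfl (fun i hi => by rw [hg]; simp [(Finset.mem_sdiff.mp hi).2])
  have hsum : (∑ i ∈ A, r i) - ∑ i ∈ B, r i = ∑ i ∈ F, g i := by
    rw [← Finset.sum_sdiff_sub_sum_sdiff, hF, Finset.sum_union hdisj, h1, h2,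
      Finset.sum_neg_distrib, sub_eq_add_neg]
  have hFne : F.Nonempty := by
    rw [Finset.nonempty_iff_ne_empty]
    intro h0
    rw [hsum, h0, Finset.sum_empty] at hd
    exact hd rfl
  have hgne : ∀ i ∈ F, g i ≠ 0 := by
    intro i _
    rw [hg]
    by_cases hiA : i ∈ A <;> simp [hiA, r_ne i]
  have hgval : ∀ i ∈ F, padicValRat 2 (g i) = lv i := by
    intro i _
    rw [hg]
    by_cases hiA : i ∈ A <;> simp [hiA, padicValRat.neg, r_val i]
  obtain ⟨i₀, hi₀F, hmin⟩ := F.exists_min_image lv hFne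
  have hmin' : ∀ i ∈ F, i ≠ i₀ → padicValRat 2 (g i₀) < padicValRat 2 (g i) := by
    intro i hi hne'
    rw [hgval i hi, hgval i₀ hi₀F]
    exact lt_of_le_of_ne (hmin i hi) (fun he => hne' (lv_inj he.symm))
  obtain ⟨-, hval⟩ := sum_val_min hi₀F hgne hmin'
  have hi₀n : i₀ < n := by
    rw [hF] at hi₀F
    rcases Finset.mem_union.mp hi₀F with h' | h'
    · exact Finset.mem_range.mp (hA (Finset.mem_sdiff.mp h').1)
    · exact Finset.mem_range.mp (hB (Finset.mem_sdiff.mp h').1)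
  exact ⟨i₀, hi₀n, by rw [hsum, hval, hgval i₀ hi₀F]⟩

end Stmt17

/-- There exists a sequence r₀, r₁, … of nonzero rationals such that, with
Sₙ = {Σ_{i∈A} rᵢ : A ⊆ {0, …, n−1}}: (1) the union of the Sₙ is ℚ; (2) ord₂(a − b) <
ord₂(rₙ) whenever n is even and a, b ∈ Sₙ are distinct; (3) ord₂(a − b) > ord₂(rₙ)
whenever n is odd and a, b ∈ Sₙ. -/
theorem stmt_17 :
    ∃ r : ℕ → ℚ, (∀ n : ℕ, r n ≠ 0) ∧
      (∀ x : ℚ, ∃ n : ℕ, ∃ A ⊆ Finset.range n, x = ∑ i ∈ A, r i) ∧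
      (∀ n : ℕ, Even n → ∀ A ⊆ Finset.range n, ∀ B ⊆ Finset.range n,
        (∑ i ∈ A, r i) ≠ (∑ i ∈ B, r i) →
        ord2 ((∑ i ∈ A, r i) - ∑ i ∈ B, r i) < ord2 (r n)) ∧
      (∀ n : ℕ, Odd n → ∀ A ⊆ Finset.range n, ∀ B ⊆ Finset.range n,
        ord2 (r n) < ord2 ((∑ i ∈ A, r i) - ∑ i ∈ B, r i)) := by
  refine ⟨Stmt17.r, Stmt17.r_ne, Stmt17.coverage, ?_, ?_⟩
  · intro n hn A hA B hB hne
    obtain ⟨i₀, hi₀n, hval⟩ := Stmt17.diff_val hA hB hne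
    rw [Stmt17.ord2_r, Stmt17.ord2_of_ne (sub_ne_zero_of_ne hne), hval]
    exact WithTop.coe_lt_coe.mpr (Stmt17.lv_lt_even (Nat.even_iff.mp hn) hi₀n)
  · intro n hn A hA B hB
    by_cases hne : (∑ i ∈ A, Stmt17.r i) = ∑ i ∈ B, Stmt17.r i
    · rw [Stmt17.ord2_r, sub_eq_zero_of_eq hne, Stmt17.ord2_zero]
      exact WithTop.coe_lt_top _
    · obtain ⟨i₀, hi₀n, hval⟩ := Stmt17.diff_val hA hB hne
      rw [Stmt17.ord2_r, Stmt17.ord2_of_ne (sub_ne_zero_of_ne hne), hval]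
      exact WithTop.coe_lt_coe.mpr (Stmt17.lv_lt_odd (Nat.odd_iff.mp hn) hi₀n)
end

section
/- Let (X, ⪯) be a totally ordered set without a maximum. Let S ⊆ ℚ be finite and let r ∈ ℚ, r ≠ 0, be such that ord₂(a − b) > ord₂(r) for all a, b ∈ S. If f : S → X is binary, then there exists a binary map g : S ∪ (S + r) → X whose restriction to S equals f. -/
lemma ord2_neg (q : ℚ) : ord2 (-q) = ord2 q := by
  unfold ord2
  by_cases h : q = 0
  · simp [h]
  · rw [if_neg (neg_ne_zero.2 h), if_neg h, padicValRat.neg]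

lemma ord2_add_of_lt {x y : ℚ} (h : ord2 x < ord2 y) : ord2 (x + y) = ord2 x := by
  haveI : Fact (Nat.Prime 2) := ⟨Nat.prime_two⟩
  have hx : x ≠ 0 := by
    rintro rfl
    rw [ord2, if_pos rfl] at h
    exact not_top_lt h
  by_cases hy : y = 0
  · simp [hy]
  have hne : padicValRat 2 x ≠ padicValRat 2 y := by
    intro he
    rw [ord2, ord2, if_neg hx, if_neg hy, he] at h
    exact lt_irrefl _ h
  have hxy : x + y ≠ 0 := by
    intro he
    have : x = -y := by linarith [he]
    rw [this, padicValRat.neg] at hne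
    exact hne rfl
  have hlt : padicValRat 2 x < padicValRat 2 y := by
    rw [ord2, ord2, if_neg hx, if_neg hy] at h
    exact_mod_cast h
  rw [ord2, ord2, if_neg hxy, if_neg hx,
    padicValRat.add_eq_min hxy hx hy hne, min_eq_left hlt.le]

/-- Let (X, ⪯) be a totally ordered set without a maximum. Let S ⊆ ℚ be
finite and r ∈ ℚ, r ≠ 0, with ord₂(a − b) > ord₂(r) for all a, b ∈ S. If f : S → X is
binary, then there exists a binary map g : S ∪ (S + r) → X whose restriction to S
equals f. -/
theorem stmt_18 {X : Type*} [LinearOrder X] (hmax : ¬ ∃ m : X, ∀ x : X, x ≤ m)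
    (S : Set ℚ) (hfin : S.Finite) (r : ℚ) (hr : r ≠ 0)
    (hord : ∀ a ∈ S, ∀ b ∈ S, ord2 r < ord2 (a - b))
    (f : S → X)
    (hbin : Function.Injective f ∧
      ¬ ∃ a b c : S, f a < f b ∧ f b < f c ∧
        ord2 ((b : ℚ) - (a : ℚ)) = ord2 ((c : ℚ) - (b : ℚ))) :
    ∃ g : ↥(S ∪ (fun y => y + r) '' S) → X,
      (Function.Injective g ∧
        ¬ ∃ a b c : ↥(S ∪ (fun y => y + r) '' S), g a < g b ∧ g b < g c ∧
          ord2 ((b : ℚ) - (a : ℚ)) = ord2 ((c : ℚ) - (b : ℚ))) ∧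
      (∀ (a : ℚ) (ha : a ∈ S), g ⟨a, Set.mem_union_left _ ha⟩ = f ⟨a, ha⟩) := by
  classical
  by_cases hS : S.Nonempty
  swap
  · rw [Set.not_nonempty_iff_eq_empty] at hS
    subst hS
    have hempty : ∀ a : ↥((∅ : Set ℚ) ∪ (fun y => y + r) '' (∅ : Set ℚ)), False := by
      rintro ⟨a, ha | ⟨w, hw, _⟩⟩
      · exact ha
      · exact hw
    refine ⟨fun a => (hempty a).elim, ⟨fun a => (hempty a).elim, ?_⟩, ?_⟩
    · rintro ⟨a, _, _, _⟩
      exact hempty a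
    · intro a ha
      exact absurd ha (Set.notMem_empty a)
  haveI : Fintype ↥S := hfin.fintype
  have hnext : ∀ x : X, ∃ y : X, x < y := by push_neg at hmax; exact hmax
  set nxt : X → X := fun x => (hnext x).choose with hnxtdef
  have hnxt : ∀ x, x < nxt x := fun x => (hnext x).choose_spec
  set t : Finset X := Finset.image f Finset.univ with htdef
  have hmemt : ∀ s : ↥S, f s ∈ t := fun s =>
    Finset.mem_image_of_mem f (Finset.mem_univ s)
  have ht : t.Nonempty := by
    obtain ⟨s, hs⟩ := hS
    exact ⟨f ⟨s, hs⟩, hmemt _⟩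
  set b : X := t.max' ht with hbdef
  have hb : ∀ s : ↥S, f s ≤ b := fun s => Finset.le_max' t _ (hmemt s)
  set u : ℕ → X := fun k => nxt^[k + 1] b with hudef
  have hu_mono : StrictMono u := by
    apply strictMono_nat_of_lt_succ
    intro k
    have h := hnxt (nxt^[k + 1] b)
    simpa [hudef, Function.iterate_succ_apply'] using h
  have hbu : ∀ k, b < u k := by
    intro k
    have h0 : u 0 ≤ u k := hu_mono.monotone (Nat.zero_le k)
    have : b < u 0 := by simpa [hudef] using hnxt b
    exact lt_of_lt_of_le this h0
  have hfu : ∀ (s : ↥S) (k : ℕ), f s < u k := fun s k =>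
    lt_of_le_of_lt (hb s) (hbu k)
  set iso := t.orderIsoOfFin rfl with hisodef
  set idx : ↥S → ℕ := fun s => (iso.symm ⟨f s, hmemt s⟩ : Fin t.card) with hidxdef
  have hidx : ∀ s s' : ↥S, idx s < idx s' ↔ f s < f s' := by
    intro s s'
    simp only [hidxdef]
    rw [← Fin.lt_iff_val_lt_val, OrderIso.lt_iff_lt, Subtype.mk_lt_mk]
  have hidxinj : ∀ s s' : ↥S, idx s = idx s' → f s = f s' := by
    intro s s' h
    have h2 : iso.symm ⟨f s, hmemt s⟩ = iso.symm ⟨f s', hmemt s'⟩ := Fin.val_injective h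
    have h3 := iso.symm.injective h2
    exact congrArg Subtype.val h3
  have hmem : ∀ a : ↥(S ∪ (fun y => y + r) '' S), a.1 ∉ S → a.1 - r ∈ S := by
    rintro ⟨a, ha | ⟨w, hw, hwr⟩⟩ h
    · exact absurd ha h
    · have h2 : w + r = a := hwr
      have h3 : a - r = w := by rw [← h2]; ring
      simpa [h3] using hw
  -- cross-difference order facts
  have hcross : ∀ a ∈ S, ∀ c ∈ S, ord2 ((c + r) - a) = ord2 r := by
    intro a ha c hc
    have h1 : ord2 r < ord2 (c - a) := hord c hc a ha
    have h2 : (c + r) - a = r + (c - a) := by ring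
    rw [h2, ord2_add_of_lt h1]
  set g : ↥(S ∪ (fun y => y + r) '' S) → X := fun a =>
    if h : a.1 ∈ S then f ⟨a.1, h⟩ else u (idx ⟨a.1 - r, hmem a h⟩) with hgdef
  have hgS : ∀ (a : ↥(S ∪ (fun y => y + r) '' S)) (h : a.1 ∈ S),
      g a = f ⟨a.1, h⟩ := fun a h => dif_pos h
  have hgT : ∀ (a : ↥(S ∪ (fun y => y + r) '' S)) (h : a.1 ∉ S),
      g a = u (idx ⟨a.1 - r, hmem a h⟩) := fun a h => dif_neg h
  refine ⟨g, ⟨?_, ?_⟩, ?_⟩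
  · -- injectivity
    intro a a' he
    by_cases h : a.1 ∈ S <;> by_cases h' : a'.1 ∈ S
    · rw [hgS a h, hgS a' h'] at he
      have h3 : a.1 = a'.1 := Subtype.mk_eq_mk.1 (hbin.1 he)
      exact Subtype.ext h3
    · rw [hgS a h, hgT a' h'] at he
      exact absurd he (ne_of_lt (hfu _ _))
    · rw [hgT a h, hgS a' h'] at he
      exact absurd he.symm (ne_of_lt (hfu _ _))
    · rw [hgT a h, hgT a' h'] at he
      have h1 := hu_mono.injective he
      have h2 := hbin.1 (hidxinj _ _ h1)
      have h3 : a.1 - r = a'.1 - r := Subtype.mk_eq_mk.1 h2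
      have : a.1 = a'.1 := by linarith [h3]
      exact Subtype.ext this
  · -- binary
    rintro ⟨A, B, C, h1, h2, heq⟩
    by_cases hA : A.1 ∈ S <;> by_cases hB : B.1 ∈ S <;> by_cases hC : C.1 ∈ S
    · exact hbin.2 ⟨⟨A.1, hA⟩, ⟨B.1, hB⟩, ⟨C.1, hC⟩,
        by rwa [hgS A hA, hgS B hB] at h1,
        by rwa [hgS B hB, hgS C hC] at h2, heq⟩
    · -- A,B ∈ S, C ∉ S
      have e1 : ord2 (C.1 - B.1) = ord2 r := by
        have hC' := hmem C hC
        have : C.1 - B.1 = ((C.1 - r) + r) - B.1 := by ring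
        rw [this, hcross B.1 hB (C.1 - r) hC']
      have hlt := hord B.1 hB A.1 hA
      rw [e1] at heq
      rw [heq] at hlt
      exact lt_irrefl _ hlt
    · -- A ∈ S, B ∉ S, C ∈ S
      rw [hgT B hB, hgS C hC] at h2
      exact absurd h2 (not_lt.2 (le_of_lt (hfu _ _)))
    · -- A ∈ S, B ∉ S, C ∉ S
      have hB' := hmem B hB
      have hC' := hmem C hC
      have e1 : ord2 (B.1 - A.1) = ord2 r := by
        have : B.1 - A.1 = ((B.1 - r) + r) - A.1 := by ring
        rw [this, hcross A.1 hA (B.1 - r) hB']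
      have e2 : C.1 - B.1 = (C.1 - r) - (B.1 - r) := by ring
      have hlt := hord (C.1 - r) hC' (B.1 - r) hB'
      rw [e1, e2] at heq
      rw [← heq] at hlt
      exact lt_irrefl _ hlt
    · -- A ∉ S, B ∈ S
      rw [hgT A hA, hgS B hB] at h1
      exact absurd h1 (not_lt.2 (le_of_lt (hfu _ _)))
    · rw [hgT A hA, hgS B hB] at h1
      exact absurd h1 (not_lt.2 (le_of_lt (hfu _ _)))
    · -- A ∉ S, B ∉ S, C ∈ S
      rw [hgT B hB, hgS C hC] at h2
      exact absurd h2 (not_lt.2 (le_of_lt (hfu _ _)))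
    · -- all shifted
      have hA' := hmem A hA
      have hB' := hmem B hB
      have hC' := hmem C hC
      rw [hgT A hA, hgT B hB] at h1
      rw [hgT B hB, hgT C hC] at h2
      have f1 : f ⟨A.1 - r, hA'⟩ < f ⟨B.1 - r, hB'⟩ :=
        (hidx _ _).1 (hu_mono.lt_iff_lt.1 h1)
      have f2 : f ⟨B.1 - r, hB'⟩ < f ⟨C.1 - r, hC'⟩ :=
        (hidx _ _).1 (hu_mono.lt_iff_lt.1 h2)
      have e1 : B.1 - A.1 = (B.1 - r) - (A.1 - r) := by ring
      have e2 : C.1 - B.1 = (C.1 - r) - (B.1 - r) := by ring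
      rw [e1, e2] at heq
      exact hbin.2 ⟨⟨A.1 - r, hA'⟩, ⟨B.1 - r, hB'⟩, ⟨C.1 - r, hC'⟩, f1, f2, heq⟩
  · intro a ha
    exact hgS ⟨a, Set.mem_union_left _ ha⟩ ha
end

section
/- Let (X, ⪯) be a countably infinite totally ordered set. Suppose that X has no isolated points and that either X does not have a maximum or X does not have a minimum. Then there exists a binary bijection f : ℚ → X. -/
set_option linter.unusedSectionVars false
set_option maxHeartbeats 1000000

namespace Bin

lemma ord2_eq_top_iff {q : ℚ} : ord2 q = ⊤ ↔ q = 0 := by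
  unfold ord2; split <;> simp_all

lemma ord2_of_ne {q : ℚ} (h : q ≠ 0) : ord2 q = (padicValRat 2 q : WithTop ℤ) := by
  unfold ord2; rw [if_neg h]

lemma ord2_neg (q : ℚ) : ord2 (-q) = ord2 q := by
  rcases eq_or_ne q 0 with h | h
  · simp [h]
  · rw [ord2_of_ne h, ord2_of_ne (neg_ne_zero.2 h), padicValRat.neg]

lemma one_le_padicValNat' {n : ℕ} (h0 : n ≠ 0) (h : 2 ∣ n) : 1 ≤ padicValNat 2 n := by
  by_contra hcon
  have hz : padicValNat 2 n = 0 := by omega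
  rw [padicValNat.eq_zero_iff] at hz
  rcases hz with h'|h'|h' <;> simp_all

lemma padicValNat_eq_zero_of_odd {n : ℕ} (h : ¬ 2 ∣ n) : padicValNat 2 n = 0 := by
  rw [padicValNat.eq_zero_iff]; tauto

lemma one_le_padicValInt {n : ℤ} (h0 : n ≠ 0) (h : (2:ℤ) ∣ n) : 1 ≤ padicValInt 2 n := by
  unfold padicValInt
  exact one_le_padicValNat' (by omega) (by omega)

lemma padicValInt_eq_zero_of_odd {n : ℤ} (h : ¬ (2:ℤ) ∣ n) : padicValInt 2 n = 0 := by
  unfold padicValInt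
  exact padicValNat_eq_zero_of_odd (by omega)

/-- key binary fact -/
lemma padic_add_gt {x y : ℚ} (hx : x ≠ 0) (hy : y ≠ 0) (hxy : x + y ≠ 0)
    (h : padicValRat 2 x = padicValRat 2 y) :
    padicValRat 2 y < padicValRat 2 (x + y) := by
  set t : ℚ := x / y with ht
  have ht0 : t ≠ 0 := div_ne_zero hx hy
  have htx : x = y * t := by rw [ht]; field_simp
  have htm1 : t ≠ -1 := by
    intro hc
    apply hxy
    rw [htx, hc]; ring
  have hvt : padicValRat 2 t = 0 := by
    rw [padicValRat.div hx hy, h, sub_self]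
  have hvt' : (padicValInt 2 t.num : ℤ) = padicValNat 2 t.den := by
    have : padicValRat 2 t = padicValInt 2 t.num - padicValNat 2 t.den := rfl
    rw [hvt] at this; omega
  have hnum0 : t.num ≠ 0 := Rat.num_ne_zero.2 ht0
  have hcop := t.reduced
  have hden0 : t.den ≠ 0 := t.den_nz
  have hnum : ¬ (2:ℤ) ∣ t.num := by
    intro hdvd
    have hden : ¬ 2 ∣ t.den := by
      intro hd
      have h2 : (2:ℕ) ∣ t.num.natAbs := by omega
      have := Nat.eq_one_of_dvd_coprimes hcop h2 hd
      omega
    have := one_le_padicValInt hnum0 hdvd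
    have := padicValNat_eq_zero_of_odd hden
    omega
  have hden : ¬ (2:ℕ) ∣ t.den := by
    intro hd
    have hnn : ¬ (2:ℤ) ∣ t.num := hnum
    have := padicValInt_eq_zero_of_odd hnn
    have := one_le_padicValNat' hden0 hd
    omega
  -- t + 1 = (num + den) / den with num+den even and nonzero
  have hrepr : t = (t.num : ℚ) / ((t.den:ℤ) : ℚ) := by
    have h' := Rat.num_div_den t
    push_cast
    exact h'.symm
  have hdenQ : ((t.den:ℤ):ℚ) ≠ 0 := by
    simp [hden0]
  have hsum_ne : t.num + (t.den:ℤ) ≠ 0 := by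
    intro hc
    apply htm1
    rw [hrepr, show t.num = -(t.den:ℤ) by omega]
    push_cast
    field_simp
  have hsum_even : (2:ℤ) ∣ (t.num + (t.den:ℤ)) := by omega
  have ht1 : t + 1 = ((t.num + (t.den:ℤ) : ℤ) : ℚ) / ((t.den:ℤ):ℚ) := by
    have hh : ((t.num + (t.den:ℤ) : ℤ) : ℚ) / ((t.den:ℤ):ℚ) = (t.num:ℚ)/((t.den:ℤ):ℚ) + 1 := by
      push_cast
      field_simp
    rw [hh, ← hrepr]
  have hv1 : 1 ≤ padicValRat 2 (t + 1) := by
    rw [ht1, padicValRat.div (by exact_mod_cast hsum_ne) (by simp [hden0])]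
    rw [padicValRat.of_int, padicValRat.of_int]
    have h1 := one_le_padicValInt hsum_ne hsum_even
    have h2 : padicValInt 2 (t.den:ℤ) = 0 := padicValInt_eq_zero_of_odd (by omega)
    omega
  have ht10 : t + 1 ≠ 0 := by
    intro hc
    apply htm1
    linarith
  have hxy' : x + y = y * (t + 1) := by rw [htx]; ring
  rw [hxy', padicValRat.mul hy ht10]
  omega

/-- valuation of difference -/
noncomputable def vv (a b : ℚ) : WithTop ℤ := ord2 (b - a)

lemma vv_comm (a b : ℚ) : vv a b = vv b a := by
  unfold vv
  rw [← ord2_neg (a - b)]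
  norm_num

lemma vv_eq_top_iff {a b : ℚ} : vv a b = ⊤ ↔ a = b := by
  unfold vv
  rw [ord2_eq_top_iff, sub_eq_zero]
  exact eq_comm

lemma vv_self (a : ℚ) : vv a a = ⊤ := vv_eq_top_iff.2 rfl

lemma vv_ne_top_iff {a b : ℚ} : vv a b ≠ ⊤ ↔ a ≠ b := by
  simp [vv_eq_top_iff]

lemma vv_ultra {a b c : ℚ} : min (vv a b) (vv b c) ≤ vv a c := by
  rcases eq_or_ne a b with rfl | hab
  · simp [vv_self]
  rcases eq_or_ne b c with rfl | hbc
  · simp [vv_self]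
  rcases eq_or_ne a c with rfl | hac
  · simp [vv_self]
  have h1 : (b - a) ≠ 0 := sub_ne_zero.2 (Ne.symm hab)
  have h2 : (c - b) ≠ 0 := sub_ne_zero.2 (Ne.symm hbc)
  have h3 : (c - a) ≠ 0 := sub_ne_zero.2 (Ne.symm hac)
  have hsum : (b - a) + (c - b) = c - a := by ring
  have := padicValRat.min_le_padicValRat_add (p := 2) (q := b - a) (r := c - b)
    (by rw [hsum]; exact h3)
  rw [hsum] at this
  unfold vv
  rw [ord2_of_ne h1, ord2_of_ne h2, ord2_of_ne h3]
  rw [← WithTop.coe_min]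
  exact_mod_cast this

lemma vv_bin {a b c : ℚ} (h : vv a b = vv b c) (hab : a ≠ b) (hbc : b ≠ c) :
    vv a b < vv a c := by
  rcases eq_or_ne a c with rfl | hac
  · rw [vv_self]
    exact (vv_ne_top_iff.2 hab).lt_top
  have h1 : (b - a) ≠ 0 := sub_ne_zero.2 (Ne.symm hab)
  have h2 : (c - b) ≠ 0 := sub_ne_zero.2 (Ne.symm hbc)
  have h3 : (c - a) ≠ 0 := sub_ne_zero.2 (Ne.symm hac)
  have hsum : (b - a) + (c - b) = c - a := by ring
  have hv : padicValRat 2 (b - a) = padicValRat 2 (c - b) := by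
    have := h
    unfold vv at this
    rw [ord2_of_ne h1, ord2_of_ne h2] at this
    exact_mod_cast this
  have := padic_add_gt h1 h2 (by rw [hsum]; exact h3) hv
  rw [hsum] at this
  unfold vv
  rw [ord2_of_ne h1, ord2_of_ne h3]
  have h4 : padicValRat 2 (b-a) < padicValRat 2 (c-a) := by
    rw [hv]; exact this
  exact_mod_cast h4

lemma vv_strict {a b c : ℚ} (h : vv a b < vv b c) : vv a c = vv a b := by
  have h1 : vv a c ≥ vv a b := le_trans (by simp [le_of_lt h]) (vv_ultra (a:=a) (b:=b) (c:=c))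
  rcases lt_or_eq_of_le h1 with hlt | he
  · exfalso
    have h2 : min (vv a c) (vv c b) ≤ vv a b := vv_ultra
    have h3 : vv a b < min (vv a c) (vv c b) := by
      rw [vv_comm c b]
      exact lt_min hlt h
    exact absurd (lt_of_lt_of_le h3 h2) (lt_irrefl _)
  · exact he.symm

lemma vv_pow (a : ℚ) (K : ℤ) : vv a (a + 2 ^ K) = (K : WithTop ℤ) := by
  unfold vv
  have hne : (2:ℚ) ^ K ≠ 0 := zpow_ne_zero K (by norm_num)
  rw [show a + 2 ^ K - a = (2:ℚ)^K by ring, ord2_of_ne hne]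
  norm_cast
  rcases K with n | n
  · rw [Int.ofNat_eq_coe, zpow_natCast]
    have : ((2:ℚ))^n = (((2^n : ℤ)):ℚ) := by push_cast; ring
    rw [this, padicValRat.of_int]
    unfold padicValInt
    rw [show ((2:ℤ)^n).natAbs = 2^n by simp [Int.natAbs_pow]]
    rw [padicValNat.prime_pow]
  · rw [zpow_negSucc]
    rw [padicValRat.inv]
    have : ((2:ℚ))^(n+1) = (((2^(n+1) : ℤ)):ℚ) := by push_cast; ring
    rw [this, padicValRat.of_int]
    unfold padicValInt
    rw [show ((2:ℤ)^(n+1)).natAbs = 2^(n+1) by simp [Int.natAbs_pow]]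
    rw [padicValNat.prime_pow]
    simp [Int.negSucc_eq]

lemma vv_shift {p c : ℚ} {K : ℤ} (h : vv p c < (K : WithTop ℤ)) :
    vv (p + 2 ^ K) c = vv p c := by
  have h1 : vv c p < vv p (p + 2 ^ K) := by
    rw [vv_comm c p, vv_pow]; exact h
  have h2 := vv_strict h1
  rw [vv_comm, h2, vv_comm]

lemma exists_ub (V : Finset (WithTop ℤ)) : ∃ K : ℤ, ∀ v ∈ V, v ≠ ⊤ → v < (K : WithTop ℤ) := by
  induction V using Finset.induction with
  | empty => exact ⟨0, by simp⟩
  | @insert a V ha ih =>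
    obtain ⟨K, hK⟩ := ih
    by_cases h : a = ⊤
    · exact ⟨K, by
        intro v hv hvt
        rcases Finset.mem_insert.1 hv with rfl | hv'
        · exact absurd h hvt
        · exact hK v hv' hvt⟩
    · obtain ⟨k, rfl⟩ := WithTop.ne_top_iff_exists.1 h
      refine ⟨max K (k + 1), ?_⟩
      intro v hv hvt
      rcases Finset.mem_insert.1 hv with rfl | hv'
      · exact_mod_cast lt_of_lt_of_le (by exact_mod_cast lt_add_one k)
          (by exact_mod_cast le_max_right K (k+1))
      · exact lt_of_lt_of_le (hK v hv' hvt) (by exact_mod_cast le_max_left K (k+1))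

lemma exists_lb (V : Finset (WithTop ℤ)) : ∃ L : ℤ, ∀ v ∈ V, (L : WithTop ℤ) < v := by
  induction V using Finset.induction with
  | empty => exact ⟨0, by simp⟩
  | @insert a V ha ih =>
    obtain ⟨L, hL⟩ := ih
    by_cases h : a = ⊤
    · exact ⟨L, by
        intro v hv
        rcases Finset.mem_insert.1 hv with rfl | hv'
        · rw [h]; exact WithTop.coe_lt_top L
        · exact hL v hv'⟩
    · obtain ⟨k, rfl⟩ := WithTop.ne_top_iff_exists.1 h
      refine ⟨min L (k - 1), ?_⟩
      intro v hv
      rcases Finset.mem_insert.1 hv with rfl | hv'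
      · exact_mod_cast lt_of_le_of_lt (min_le_right L (k-1)) (by omega)
      · exact lt_of_le_of_lt (by exact_mod_cast min_le_left L (k-1)) (hL v hv')

section Xside

variable {X : Type*} [LinearOrder X] [TopologicalSpace X] [OrderTopology X]

/-- adjacency (covering) in X -/
def Adjy (x y : X) : Prop := x < y ∧ ∀ z, ¬(x < z ∧ z < y)

variable (hiso : ∀ x : X, ¬ IsOpen ({x} : Set X))
include hiso

lemma not_adj_both {w x y : X} (h1 : Adjy w x) (h2 : Adjy x y) : False := by
  apply hiso x
  have : Set.Ioo w y = {x} := by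
    ext z
    simp only [Set.mem_Ioo, Set.mem_singleton_iff]
    constructor
    · rintro ⟨hz1, hz2⟩
      rcases lt_trichotomy z x with h | h | h
      · exact absurd ⟨hz1, h⟩ (h1.2 z)
      · exact h
      · exact absurd ⟨h, hz2⟩ (h2.2 z)
    · rintro rfl
      exact ⟨h1.1, h2.1⟩
  rw [← this]
  exact isOpen_Ioo

lemma adj_not_min {x y : X} (hmin : ∀ z, x ≤ z) (h : Adjy x y) : False := by
  apply hiso x
  have : Set.Iio y = {x} := by
    ext z
    simp only [Set.mem_Iio, Set.mem_singleton_iff]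
    constructor
    · intro hz
      rcases lt_trichotomy z x with h' | h' | h'
      · exact absurd h' (not_lt.2 (hmin z))
      · exact h'
      · exact absurd ⟨h', hz⟩ (h.2 z)
    · rintro rfl; exact h.1
  rw [← this]
  exact isOpen_Iio

lemma adj_not_max {w x : X} (hmax : ∀ z, z ≤ x) (h : Adjy w x) : False := by
  apply hiso x
  have : Set.Ioi w = {x} := by
    ext z
    simp only [Set.mem_Ioi, Set.mem_singleton_iff]
    constructor
    · intro hz
      rcases lt_trichotomy z x with h' | h' | h'
      · exact absurd ⟨hz, h'⟩ (h.2 z)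
      · exact h'
      · exact absurd h' (not_lt.2 (hmax z))
    · rintro rfl; exact h.1
  rw [← this]
  exact isOpen_Ioi

omit hiso in
lemma adj_unique_above {x y y' : X} (h : Adjy x y) (h' : Adjy x y') : y = y' := by
  rcases lt_trichotomy y y' with hc | hc | hc
  · exact absurd ⟨h.1, hc⟩ (h'.2 y)
  · exact hc
  · exact absurd ⟨h'.1, hc⟩ (h.2 y')

omit hiso in
lemma adj_unique_below {x x' y : X} (h : Adjy x y) (h' : Adjy x' y) : x = x' := by
  rcases lt_trichotomy x x' with hc | hc | hc
  · exact absurd ⟨hc, h'.1⟩ (h.2 x')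
  · exact hc
  · exact absurd ⟨hc, h.1⟩ (h'.2 x)

lemma three_in_Ioo {u v : X} (hne : (Set.Ioo u v).Nonempty) :
    ∃ z₁ z₂ z₃ : X, u < z₁ ∧ z₁ < z₂ ∧ z₂ < z₃ ∧ z₃ < v := by
  obtain ⟨z, hz⟩ := hne
  have h2 : ∃ z' ∈ Set.Ioo u v, z' ≠ z := by
    by_contra hcon
    push_neg at hcon
    apply hiso z
    have : Set.Ioo u v = {z} := by
      ext t
      simp only [Set.mem_singleton_iff]
      exact ⟨fun ht => hcon t ht, fun ht => ht ▸ hz⟩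
    rw [← this]; exact isOpen_Ioo
  obtain ⟨z', hz', hzz⟩ := h2
  -- wlog z < z'
  obtain ⟨a, b, hab, ha, hb⟩ : ∃ a b : X, a < b ∧ a ∈ Set.Ioo u v ∧ b ∈ Set.Ioo u v := by
    rcases lt_or_gt_of_ne hzz with h | h
    · exact ⟨z', z, h, hz', hz⟩
    · exact ⟨z, z', h, hz, hz'⟩
  have h3 : ∃ t ∈ Set.Ioo u v, t ≠ a ∧ t ≠ b := by
    by_contra hcon
    push_neg at hcon
    apply hiso a
    have : Set.Ioo u b = {a} := by
      ext t
      simp only [Set.mem_Ioo, Set.mem_singleton_iff]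
      constructor
      · rintro ⟨ht1, ht2⟩
        by_cases hta : t = a
        · exact hta
        · exact absurd (hcon t ⟨ht1, lt_trans ht2 hb.2⟩ hta) (ne_of_lt ht2)
      · rintro rfl; exact ⟨ha.1, hab⟩
    rw [← this]; exact isOpen_Ioo
  obtain ⟨t, ht, hta, htb⟩ := h3
  rcases lt_trichotomy t a with h | h | h
  · exact ⟨t, a, b, ht.1, h, hab, hb.2⟩
  · exact absurd h hta
  · rcases lt_trichotomy t b with h' | h' | h'
    · exact ⟨a, t, b, ha.1, h, h', hb.2⟩
    · exact absurd h' htb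
    · exact ⟨a, b, t, ha.1, hab, h', ht.2⟩

lemma three_in_Iio {v : X} (hne : (Set.Iio v).Nonempty) :
    ∃ z₁ z₂ z₃ : X, z₁ < z₂ ∧ z₂ < z₃ ∧ z₃ < v := by
  obtain ⟨z, hz⟩ := hne
  have h2 : ∃ z' ∈ Set.Iio v, z' ≠ z := by
    by_contra hcon
    push_neg at hcon
    apply hiso z
    have : Set.Iio v = {z} := by
      ext t
      simp only [Set.mem_singleton_iff]
      exact ⟨fun ht => hcon t ht, fun ht => ht ▸ hz⟩
    rw [← this]; exact isOpen_Iio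
  obtain ⟨z', hz', hzz⟩ := h2
  obtain ⟨a, b, hab, ha, hb⟩ : ∃ a b : X, a < b ∧ a ∈ Set.Iio v ∧ b ∈ Set.Iio v := by
    rcases lt_or_gt_of_ne hzz with h | h
    · exact ⟨z', z, h, hz', hz⟩
    · exact ⟨z, z', h, hz, hz'⟩
  have h3 : ∃ t ∈ Set.Iio v, t ≠ a ∧ t ≠ b := by
    by_contra hcon
    push_neg at hcon
    apply hiso a
    have : Set.Iio b = {a} := by
      ext t
      simp only [Set.mem_Iio, Set.mem_singleton_iff]
      constructor
      · intro ht2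
        by_cases hta : t = a
        · exact hta
        · exact absurd (hcon t (lt_trans ht2 hb) hta) (ne_of_lt ht2)
      · rintro rfl; exact hab
    rw [← this]; exact isOpen_Iio
  obtain ⟨t, ht, hta, htb⟩ := h3
  rcases lt_trichotomy t a with h | h | h
  · exact ⟨t, a, b, h, hab, hb⟩
  · exact absurd h hta
  · rcases lt_trichotomy t b with h' | h' | h'
    · exact ⟨a, t, b, h, h', hb⟩
    · exact absurd h' htb
    · exact ⟨a, b, t, hab, h', ht⟩

lemma three_in_Ioi {u : X} (hne : (Set.Ioi u).Nonempty) :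
    ∃ z₁ z₂ z₃ : X, u < z₁ ∧ z₁ < z₂ ∧ z₂ < z₃ := by
  obtain ⟨z, hz⟩ := hne
  have h2 : ∃ z' ∈ Set.Ioi u, z' ≠ z := by
    by_contra hcon
    push_neg at hcon
    apply hiso z
    have : Set.Ioi u = {z} := by
      ext t
      simp only [Set.mem_singleton_iff]
      exact ⟨fun ht => hcon t ht, fun ht => ht ▸ hz⟩
    rw [← this]; exact isOpen_Ioi
  obtain ⟨z', hz', hzz⟩ := h2
  obtain ⟨a, b, hab, ha, hb⟩ : ∃ a b : X, a < b ∧ a ∈ Set.Ioi u ∧ b ∈ Set.Ioi u := by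
    rcases lt_or_gt_of_ne hzz with h | h
    · exact ⟨z', z, h, hz', hz⟩
    · exact ⟨z, z', h, hz, hz'⟩
  have h3 : ∃ t ∈ Set.Ioi u, t ≠ a ∧ t ≠ b := by
    by_contra hcon
    push_neg at hcon
    apply hiso b
    have : Set.Ioi a = {b} := by
      ext t
      simp only [Set.mem_Ioi, Set.mem_singleton_iff]
      constructor
      · intro ht2
        exact hcon t (lt_trans ha ht2) (ne_of_gt ht2)
      · rintro rfl; exact hab
    rw [← this]; exact isOpen_Ioi
  obtain ⟨t, ht, hta, htb⟩ := h3
  rcases lt_trichotomy t a with h | h | h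
  · exact ⟨t, a, b, ht, h, hab⟩
  · exact absurd h hta
  · rcases lt_trichotomy t b with h' | h' | h'
    · exact ⟨a, t, b, ha, h, h'⟩
    · exact absurd h' htb
    · exact ⟨a, b, t, ha, hab, h'⟩

section State

omit hiso

variable {S : Finset (ℚ × X)}

def Func (S : Finset (ℚ × X)) : Prop := ∀ p ∈ S, ∀ q ∈ S, p.1 = q.1 → p = q

def Injv (S : Finset (ℚ × X)) : Prop := ∀ p ∈ S, ∀ q ∈ S, p.2 = q.2 → p = q

def C1 (S : Finset (ℚ × X)) : Prop :=
  ∀ p ∈ S, ∀ q ∈ S, ∀ r ∈ S,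
    vv p.1 q.1 = vv q.1 r.1 → vv p.1 q.1 ≠ ⊤ → ¬(p.2 < q.2 ∧ q.2 < r.2)

def CNest (S : Finset (ℚ × X)) : Prop :=
  ∀ p₁ ∈ S, ∀ q₁ ∈ S, ∀ p₂ ∈ S, ∀ q₂ ∈ S,
    Adjy p₁.2 q₁.2 → Adjy p₂.2 q₂.2 → ¬(p₁.1 = p₂.1 ∧ q₁.1 = q₂.1) →
    ∀ e e' : ℚ, (e = p₁.1 ∨ e = q₁.1) → (e' = p₂.1 ∨ e' = q₂.1) → e ≠ e' →
    vv e e' < max (vv p₁.1 q₁.1) (vv p₂.1 q₂.1)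

def CMin (S : Finset (ℚ × X)) : Prop :=
  ∀ pm ∈ S, (∀ z : X, pm.2 ≤ z) →
    ∀ p ∈ S, ∀ q ∈ S, Adjy p.2 q.2 →
    ∀ e : ℚ, (e = p.1 ∨ e = q.1) → pm.1 ≠ e → vv pm.1 e < vv p.1 q.1

structure Inv (S : Finset (ℚ × X)) : Prop where
  func : Func S
  inj : Injv S
  c1 : C1 S
  cnest : CNest S
  cmin : CMin S

omit [TopologicalSpace X] [OrderTopology X] in
lemma func_firsts_ne (hf : Func S) {p q : ℚ × X} (hp : p ∈ S) (hq : q ∈ S)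
    (h : p ≠ q) : p.1 ≠ q.1 :=
  fun hc => h (hf p hp q hq hc)

include hiso in
/-- deep insertion anchored below an element q (the new value y sits just below q.2). -/
lemma ins_deep_below (hS : Inv S) {anc : ℚ × X} (hanc : anc ∈ S) {K : ℤ}
    (hK : ∀ c ∈ S, ∀ d ∈ S, c.1 ≠ d.1 → vv c.1 d.1 < (K : WithTop ℤ))
    {y : X} (hy : ∀ c ∈ S, c.2 ≠ y)
    (hpos : ∀ c ∈ S, (y < c.2 ↔ anc.2 ≤ c.2))
    (hbel : ∀ c ∈ S, ¬ Adjy c.2 y)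
    (hnotmin : ¬ ∀ z : X, y ≤ z) :
    Inv (insert (anc.1 + 2 ^ K, y) S) := by
  classical
  set r : ℚ := anc.1 + 2 ^ K with hrdef
  have hrq : vv anc.1 r = (K : WithTop ℤ) := vv_pow anc.1 K
  have hrne : r ≠ anc.1 := by
    intro hc
    have h2 : (2:ℚ) ^ K ≠ 0 := zpow_ne_zero K (by norm_num)
    apply h2
    have : anc.1 + 2^K = anc.1 := hc
    linarith [this]
  have hrc : ∀ c ∈ S, c.1 ≠ anc.1 → vv r c.1 = vv anc.1 c.1 := by
    intro c hc hcq
    exact vv_shift (hK anc hanc c hc (Ne.symm hcq))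
  have hrnotin : ∀ c ∈ S, c.1 ≠ r := by
    intro c hc hcr
    by_cases hcq : c.1 = anc.1
    · exact hrne (by rw [← hcr, hcq])
    · have h1 := hrc c hc hcq
      rw [hcr, vv_self] at h1
      rw [hrq] at h1
      exact absurd h1.symm (by simp)
  have hyq : y < anc.2 := (hpos anc hanc).2 le_rfl
  have hmem : ∀ p ∈ insert (r, y) S, p = (r, y) ∨ p ∈ S := by
    intro p hp; exact Finset.mem_insert.1 hp
  -- adjacency above y is only with anc
  have hadj_above : ∀ c ∈ S, Adjy y c.2 → c = anc := by
    intro c hc hadj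
    have h1 : anc.2 ≤ c.2 := (hpos c hc).1 hadj.1
    rcases lt_or_eq_of_le h1 with h | h
    · exact absurd ⟨hyq, h⟩ (hadj.2 anc.2)
    · exact hS.inj c hc anc hanc h.symm
  constructor
  · -- Func
    intro p hp p' hp' h1
    rcases hmem p hp with rfl | hp2 <;> rcases hmem p' hp' with rfl | hp2'
    · rfl
    · exact absurd (h1.symm) (hrnotin p' hp2')
    · exact absurd h1 (hrnotin p hp2)
    · exact hS.func p hp2 p' hp2' h1
  · -- Injv
    intro p hp p' hp' h1
    rcases hmem p hp with rfl | hp2 <;> rcases hmem p' hp' with rfl | hp2'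
    · rfl
    · exact absurd (h1.symm) (hy p' hp2')
    · exact absurd h1 (hy p hp2)
    · exact hS.inj p hp2 p' hp2' h1
  · -- C1
    intro a ha b hb c hc heq hne
    rcases hmem a ha with rfl | ha2 <;> rcases hmem b hb with rfl | hb2 <;>
      rcases hmem c hc with rfl | hc2
    · exact absurd (vv_self _) hne
    · exact absurd (vv_self _) hne
    · exact fun ⟨h1, h2⟩ => absurd (lt_trans h1 h2) (lt_irrefl _)
    · -- (new, b, c) : T2
      rintro ⟨h1, h2⟩
      simp only at heq h1 h2 ⊢
      by_cases hbq : b.1 = anc.1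
      · have hbqq : b = anc := hS.func b hb2 anc hanc hbq
        rw [hbqq] at heq h1 h2
        rw [vv_comm r anc.1, hrq] at heq
        by_cases hcq : c.1 = anc.1
        · have : c = anc := hS.func c hc2 anc hanc hcq
          rw [this] at h2; exact absurd h2 (lt_irrefl _)
        · have := hK anc hanc c hc2 (fun h => hcq h.symm)
          rw [← heq] at this
          exact absurd this (lt_irrefl _)
      · have hb' : vv r b.1 = vv anc.1 b.1 := hrc b hb2 hbq
        rw [hb'] at heq
        have hq2b : anc.2 < b.2 := by
          have := (hpos b hb2).1 h1
          rcases lt_or_eq_of_le this with h | h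
          · exact h
          · exact absurd (hS.inj anc hanc b hb2 h) (fun hh => hbq (by rw [← hh]))
        exact hS.c1 anc hanc b hb2 c hc2 heq
          (vv_ne_top_iff.2 (fun h => hbq h.symm)) ⟨hq2b, h2⟩
    · exact absurd (by rw [heq]; exact vv_self _) hne
    · -- (a, new, c) : T1
      rintro ⟨h1, h2⟩
      simp only at heq h1 h2 ⊢
      by_cases haq : a.1 = anc.1
      · have : a = anc := hS.func a ha2 anc hanc haq
        rw [this] at h1
        exact absurd (lt_trans hyq h1) (lt_irrefl _)
      · have ha' : vv a.1 r = vv a.1 anc.1 := by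
          rw [vv_comm a.1 r, hrc a ha2 haq, vv_comm]
        rw [ha'] at heq hne
        by_cases hcq : c.1 = anc.1
        · have hcqq : c = anc := hS.func c hc2 anc hanc hcq
          rw [hcqq] at heq
          rw [vv_comm r anc.1, hrq] at heq
          have := hK a ha2 anc hanc haq
          rw [heq] at this
          exact absurd this (lt_irrefl _)
        · have hc' : vv r c.1 = vv anc.1 c.1 := hrc c hc2 hcq
          rw [hc'] at heq
          have haq2 : a.2 < anc.2 := by
            by_contra hcon
            push_neg at hcon
            have h3 : y < a.2 := (hpos a ha2).2 hcon
            exact absurd (lt_trans h3 h1) (lt_irrefl _)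
          have hq2c : anc.2 < c.2 := by
            have := (hpos c hc2).1 h2
            rcases lt_or_eq_of_le this with h | h
            · exact h
            · exact absurd (hS.inj anc hanc c hc2 h) (fun hh => hcq (by rw [← hh]))
          exact hS.c1 a ha2 anc hanc c hc2 heq hne ⟨haq2, hq2c⟩
    · -- (a, b, new) : T3
      rintro ⟨h1, h2⟩
      simp only at heq h1 h2 ⊢
      by_cases hbq : b.1 = anc.1
      · have : b = anc := hS.func b hb2 anc hanc hbq
        rw [this] at h2
        exact absurd (lt_trans hyq h2) (lt_irrefl _)
      · have hb' : vv b.1 r = vv b.1 anc.1 := by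
          rw [vv_comm b.1 r, hrc b hb2 hbq, vv_comm]
        rw [hb'] at heq
        have hbq2 : b.2 < anc.2 := by
          by_contra hcon
          push_neg at hcon
          have h3 : y < b.2 := (hpos b hb2).2 hcon
          exact absurd (lt_trans h3 h2) (lt_irrefl _)
        exact hS.c1 a ha2 b hb2 anc hanc heq hne ⟨h1, hbq2⟩
    · exact hS.c1 a ha2 b hb2 c hc2 heq hne
  · -- CNest
    intro p₁ hp₁ q₁ hq₁ p₂ hp₂ q₂ hq₂ hadj₁ hadj₂ hnsame e e' he he' hee
    have hclass : ∀ p'' ∈ insert (r,y) S, ∀ q'' ∈ insert (r,y) S, Adjy p''.2 q''.2 →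
        (p'' ∈ S ∧ q'' ∈ S) ∨ (p'' = (r,y) ∧ q'' = anc ∧ Adjy y anc.2) := by
      intro p'' hp'' q'' hq'' hadj
      rcases hmem p'' hp'' with rfl | hp3
      · rcases hmem q'' hq'' with rfl | hq3
        · exact absurd hadj.1 (lt_irrefl _)
        · have hqa := hadj_above q'' hq3 hadj
          exact Or.inr ⟨rfl, hqa, by rw [← hqa]; exact hadj⟩
      · rcases hmem q'' hq'' with rfl | hq3
        · exact absurd hadj (hbel p'' hp3)
        · exact Or.inl ⟨hp3, hq3⟩
    have hancnotold : Adjy y anc.2 → ∀ c ∈ S, ∀ d ∈ S, Adjy c.2 d.2 → anc ≠ c ∧ anc ≠ d := by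
      intro hnew c hc d hd hadj
      constructor
      · rintro rfl
        exact not_adj_both hiso hnew hadj
      · rintro rfl
        exact hy c hc (adj_unique_below hadj hnew)
    -- helper : for an old element cc not equal to anc, vv to r or anc.1 is < K
    have hsmall : ∀ cc ∈ S, cc.1 ≠ anc.1 → ∀ e'' : ℚ, (e'' = r ∨ e'' = anc.1) →
        vv cc.1 e'' < (K : WithTop ℤ) := by
      intro cc hcc hccq e'' he''
      rcases he'' with rfl | rfl
      · rw [vv_comm, hrc cc hcc hccq, vv_comm]
        exact hK cc hcc anc hanc hccq
      · exact hK cc hcc anc hanc hccq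
    rcases hclass p₁ hp₁ q₁ hq₁ hadj₁ with ⟨hp₁S, hq₁S⟩ | ⟨hpe₁, hqe₁, hnew₁⟩
    · rcases hclass p₂ hp₂ q₂ hq₂ hadj₂ with ⟨hp₂S, hq₂S⟩ | ⟨hpe₂, hqe₂, hnew₂⟩
      · exact hS.cnest p₁ hp₁S q₁ hq₁S p₂ hp₂S q₂ hq₂S hadj₁ hadj₂ hnsame e e' he he' hee
      · -- jump₂ is the new jump ((r,y), anc) at level K
        have hlvl : vv p₂.1 q₂.1 = (K : WithTop ℤ) := by
          rw [hpe₂, hqe₂]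
          simpa [vv_comm r anc.1] using hrq
        obtain ⟨cc, hccS, rfl⟩ : ∃ cc ∈ S, e = cc.1 := by
          rcases he with rfl | rfl
          · exact ⟨p₁, hp₁S, rfl⟩
          · exact ⟨q₁, hq₁S, rfl⟩
        have hccq : cc.1 ≠ anc.1 := by
          intro hcq
          have hcca : cc = anc := hS.func cc hccS anc hanc hcq
          have hno := hancnotold hnew₂ p₁ hp₁S q₁ hq₁S hadj₁
          rcases he with h | h
          · exact hno.1 (hcca ▸ (hS.func anc hanc p₁ hp₁S (by rw [← hcq, h])))
          · exact hno.2 (hcca ▸ (hS.func anc hanc q₁ hq₁S (by rw [← hcq, h])))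
        have he'' : e' = r ∨ e' = anc.1 := by
          rcases he' with h | h
          · left; rw [h, hpe₂]
          · right; rw [h, hqe₂]
        calc vv cc.1 e' < (K : WithTop ℤ) := hsmall cc hccS hccq e' he''
          _ ≤ max (vv p₁.1 q₁.1) (vv p₂.1 q₂.1) := by rw [hlvl]; exact le_max_right _ _
    · rcases hclass p₂ hp₂ q₂ hq₂ hadj₂ with ⟨hp₂S, hq₂S⟩ | ⟨hpe₂, hqe₂, hnew₂⟩
      · -- jump₁ new, jump₂ old
        have hlvl : vv p₁.1 q₁.1 = (K : WithTop ℤ) := by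
          rw [hpe₁, hqe₁]
          simpa [vv_comm r anc.1] using hrq
        obtain ⟨cc, hccS, rfl⟩ : ∃ cc ∈ S, e' = cc.1 := by
          rcases he' with rfl | rfl
          · exact ⟨p₂, hp₂S, rfl⟩
          · exact ⟨q₂, hq₂S, rfl⟩
        have hccq : cc.1 ≠ anc.1 := by
          intro hcq
          have hcca : cc = anc := hS.func cc hccS anc hanc hcq
          have hno := hancnotold hnew₁ p₂ hp₂S q₂ hq₂S hadj₂
          rcases he' with h | h
          · exact hno.1 (hcca ▸ (hS.func anc hanc p₂ hp₂S (by rw [← hcq, h])))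
          · exact hno.2 (hcca ▸ (hS.func anc hanc q₂ hq₂S (by rw [← hcq, h])))
        have he'' : e = r ∨ e = anc.1 := by
          rcases he with h | h
          · left; rw [h, hpe₁]
          · right; rw [h, hqe₁]
        have h1 : vv e cc.1 < (K : WithTop ℤ) := by
          rw [vv_comm]
          exact hsmall cc hccS hccq e he''
        calc vv e cc.1 < (K : WithTop ℤ) := h1
          _ ≤ max (vv p₁.1 q₁.1) (vv p₂.1 q₂.1) := by rw [hlvl]; exact le_max_left _ _
      · -- both new : identical jumps, excluded
        exact absurd ⟨by rw [hpe₁, hpe₂], by rw [hqe₁, hqe₂]⟩ hnsame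
  · -- CMin
    intro pm hpm hmin p hp p' hp' hadj e he hne
    rcases hmem pm hpm with rfl | hpmS
    · exact absurd hmin hnotmin
    · have hclass : (p ∈ S ∧ p' ∈ S) ∨ (p = (r,y) ∧ p' = anc ∧ Adjy y anc.2) := by
        rcases hmem p hp with rfl | hp3
        · rcases hmem p' hp' with rfl | hq3
          · exact absurd hadj.1 (lt_irrefl _)
          · have hqa := hadj_above p' hq3 hadj
            exact Or.inr ⟨rfl, hqa, by rw [← hqa]; exact hadj⟩
        · rcases hmem p' hp' with rfl | hq3
          · exact absurd hadj (hbel p hp3)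
          · exact Or.inl ⟨hp3, hq3⟩
      rcases hclass with ⟨hpS, hp'S⟩ | ⟨hpe, hqe, hnew⟩
      · exact hS.cmin pm hpmS hmin p hpS p' hp'S hadj e he hne
      · have hlvl : vv p.1 p'.1 = (K : WithTop ℤ) := by
          rw [hpe, hqe]
          simpa [vv_comm r anc.1] using hrq
        rw [hlvl]
        have hpmq : pm.1 ≠ anc.1 := by
          intro hc
          have hpma : pm = anc := hS.func pm hpmS anc hanc hc
          rw [hpma] at hmin
          exact absurd (hmin y) (not_le.2 hnew.1)
        have he'' : e = r ∨ e = anc.1 := by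
          rcases he with h | h
          · left; rw [h, hpe]
          · right; rw [h, hqe]
        rcases he'' with rfl | rfl
        · rw [vv_comm, hrc pm hpmS hpmq, vv_comm]
          exact hK pm hpmS anc hanc hpmq
        · exact hK pm hpmS anc hanc hpmq

include hiso in
/-- deep insertion anchored above an element anc (the new value y sits just above anc.2). -/
lemma ins_deep_above (hS : Inv S) {anc : ℚ × X} (hanc : anc ∈ S) {K : ℤ}
    (hK : ∀ c ∈ S, ∀ d ∈ S, c.1 ≠ d.1 → vv c.1 d.1 < (K : WithTop ℤ))
    {y : X} (hy : ∀ c ∈ S, c.2 ≠ y)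
    (hpos : ∀ c ∈ S, (c.2 < y ↔ c.2 ≤ anc.2))
    (habv : ∀ c ∈ S, ¬ Adjy y c.2) :
    Inv (insert (anc.1 + 2 ^ K, y) S) := by
  classical
  set r : ℚ := anc.1 + 2 ^ K with hrdef
  have hrq : vv anc.1 r = (K : WithTop ℤ) := vv_pow anc.1 K
  have hrne : r ≠ anc.1 := by
    intro hc
    have h2 : (2:ℚ) ^ K ≠ 0 := zpow_ne_zero K (by norm_num)
    apply h2
    have : anc.1 + 2^K = anc.1 := hc
    linarith [this]
  have hrc : ∀ c ∈ S, c.1 ≠ anc.1 → vv r c.1 = vv anc.1 c.1 := by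
    intro c hc hcq
    exact vv_shift (hK anc hanc c hc (Ne.symm hcq))
  have hrnotin : ∀ c ∈ S, c.1 ≠ r := by
    intro c hc hcr
    by_cases hcq : c.1 = anc.1
    · exact hrne (by rw [← hcr, hcq])
    · have h1 := hrc c hc hcq
      rw [hcr, vv_self] at h1
      rw [hrq] at h1
      exact absurd h1.symm (by simp)
  have hyq : anc.2 < y := (hpos anc hanc).2 le_rfl
  have hmem : ∀ p ∈ insert (r, y) S, p = (r, y) ∨ p ∈ S := by
    intro p hp; exact Finset.mem_insert.1 hp
  have hadj_below : ∀ c ∈ S, Adjy c.2 y → c = anc := by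
    intro c hc hadj
    have h1 : c.2 ≤ anc.2 := (hpos c hc).1 hadj.1
    rcases lt_or_eq_of_le h1 with h | h
    · exact absurd ⟨h, hyq⟩ (hadj.2 anc.2)
    · exact hS.inj c hc anc hanc h
  constructor
  · intro p hp p' hp' h1
    rcases hmem p hp with rfl | hp2 <;> rcases hmem p' hp' with rfl | hp2'
    · rfl
    · exact absurd (h1.symm) (hrnotin p' hp2')
    · exact absurd h1 (hrnotin p hp2)
    · exact hS.func p hp2 p' hp2' h1
  · intro p hp p' hp' h1
    rcases hmem p hp with rfl | hp2 <;> rcases hmem p' hp' with rfl | hp2'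
    · rfl
    · exact absurd (h1.symm) (hy p' hp2')
    · exact absurd h1 (hy p hp2)
    · exact hS.inj p hp2 p' hp2' h1
  · -- C1
    intro a ha b hb c hc heq hne
    rcases hmem a ha with rfl | ha2 <;> rcases hmem b hb with rfl | hb2 <;>
      rcases hmem c hc with rfl | hc2
    · exact absurd (vv_self _) hne
    · exact absurd (vv_self _) hne
    · exact fun ⟨h1, h2⟩ => absurd (lt_trans h1 h2) (lt_irrefl _)
    · -- (new, b, c) : T2
      rintro ⟨h1, h2⟩
      simp only at heq h1 h2 ⊢
      by_cases hbq : b.1 = anc.1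
      · have hbqq : b = anc := hS.func b hb2 anc hanc hbq
        rw [hbqq] at h1
        exact absurd (lt_trans hyq h1) (lt_irrefl _)
      · have hb' : vv r b.1 = vv anc.1 b.1 := hrc b hb2 hbq
        rw [hb'] at heq
        have hq2b : anc.2 < b.2 := by
          by_contra hcon
          push_neg at hcon
          have h3 : b.2 < y := (hpos b hb2).2 hcon
          exact absurd (lt_trans h3 h1) (lt_irrefl _)
        exact hS.c1 anc hanc b hb2 c hc2 heq
          (vv_ne_top_iff.2 (fun h => hbq h.symm)) ⟨hq2b, h2⟩
    · exact absurd (by rw [heq]; exact vv_self _) hne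
    · -- (a, new, c) : T1
      rintro ⟨h1, h2⟩
      simp only at heq h1 h2 ⊢
      by_cases haq : a.1 = anc.1
      · have haa : a = anc := hS.func a ha2 anc hanc haq
        rw [haa] at heq
        rw [hrq] at heq
        by_cases hcq : c.1 = anc.1
        · have : c = anc := hS.func c hc2 anc hanc hcq
          rw [this] at h2
          exact absurd (lt_trans hyq h2) (lt_irrefl _)
        · have hc' : vv r c.1 = vv anc.1 c.1 := hrc c hc2 hcq
          rw [hc'] at heq
          have := hK anc hanc c hc2 (fun h => hcq h.symm)
          rw [← heq] at this
          exact absurd this (lt_irrefl _)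
      · have ha' : vv a.1 r = vv a.1 anc.1 := by
          rw [vv_comm a.1 r, hrc a ha2 haq, vv_comm]
        rw [ha'] at heq hne
        by_cases hcq : c.1 = anc.1
        · have hcqq : c = anc := hS.func c hc2 anc hanc hcq
          rw [hcqq] at heq
          rw [vv_comm r anc.1, hrq] at heq
          have := hK a ha2 anc hanc haq
          rw [heq] at this
          exact absurd this (lt_irrefl _)
        · have hc' : vv r c.1 = vv anc.1 c.1 := hrc c hc2 hcq
          rw [hc'] at heq
          have haq2 : a.2 < anc.2 := by
            have := (hpos a ha2).1 h1
            rcases lt_or_eq_of_le this with h | h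
            · exact h
            · exact absurd (hS.inj a ha2 anc hanc h) (fun hh => haq (by rw [hh]))
          have hq2c : anc.2 < c.2 := by
            by_contra hcon
            push_neg at hcon
            have h3 : c.2 < y := (hpos c hc2).2 hcon
            exact absurd (lt_trans h3 h2) (lt_irrefl _)
          exact hS.c1 a ha2 anc hanc c hc2 heq hne ⟨haq2, hq2c⟩
    · -- (a, b, new) : T3
      rintro ⟨h1, h2⟩
      simp only at heq h1 h2 ⊢
      by_cases hbq : b.1 = anc.1
      · have hbqq : b = anc := hS.func b hb2 anc hanc hbq
        rw [hbqq] at heq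
        rw [hrq] at heq
        have := hK a ha2 anc hanc (by
          intro h
          rw [h, vv_self] at heq
          exact absurd heq.symm (by simp))
        rw [heq] at this
        exact absurd this (lt_irrefl _)
      · have hb' : vv b.1 r = vv b.1 anc.1 := by
          rw [vv_comm b.1 r, hrc b hb2 hbq, vv_comm]
        rw [hb'] at heq
        have hbq2 : b.2 < anc.2 := by
          have := (hpos b hb2).1 h2
          rcases lt_or_eq_of_le this with h | h
          · exact h
          · exact absurd (hS.inj b hb2 anc hanc h) (fun hh => hbq (by rw [hh]))
        exact hS.c1 a ha2 b hb2 anc hanc heq hne ⟨h1, hbq2⟩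
    · exact hS.c1 a ha2 b hb2 c hc2 heq hne
  · -- CNest
    intro p₁ hp₁ q₁ hq₁ p₂ hp₂ q₂ hq₂ hadj₁ hadj₂ hnsame e e' he he' hee
    have hclass : ∀ p'' ∈ insert (r,y) S, ∀ q'' ∈ insert (r,y) S, Adjy p''.2 q''.2 →
        (p'' ∈ S ∧ q'' ∈ S) ∨ (p'' = anc ∧ q'' = (r,y) ∧ Adjy anc.2 y) := by
      intro p'' hp'' q'' hq'' hadj
      rcases hmem p'' hp'' with rfl | hp3
      · rcases hmem q'' hq'' with rfl | hq3
        · exact absurd hadj.1 (lt_irrefl _)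
        · exact absurd hadj (habv q'' hq3)
      · rcases hmem q'' hq'' with rfl | hq3
        · have hqa := hadj_below p'' hp3 hadj
          exact Or.inr ⟨hqa, rfl, by rw [← hqa]; exact hadj⟩
        · exact Or.inl ⟨hp3, hq3⟩
    have hancnotold : Adjy anc.2 y → ∀ c ∈ S, ∀ d ∈ S, Adjy c.2 d.2 → anc ≠ c ∧ anc ≠ d := by
      intro hnew c hc d hd hadj
      constructor
      · rintro rfl
        exact hy d hd (adj_unique_above hadj hnew)
      · rintro rfl
        exact not_adj_both hiso hadj hnew
    have hsmall : ∀ cc ∈ S, cc.1 ≠ anc.1 → ∀ e'' : ℚ, (e'' = r ∨ e'' = anc.1) →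
        vv cc.1 e'' < (K : WithTop ℤ) := by
      intro cc hcc hccq e'' he''
      rcases he'' with rfl | rfl
      · rw [vv_comm, hrc cc hcc hccq, vv_comm]
        exact hK cc hcc anc hanc hccq
      · exact hK cc hcc anc hanc hccq
    rcases hclass p₁ hp₁ q₁ hq₁ hadj₁ with ⟨hp₁S, hq₁S⟩ | ⟨hpe₁, hqe₁, hnew₁⟩
    · rcases hclass p₂ hp₂ q₂ hq₂ hadj₂ with ⟨hp₂S, hq₂S⟩ | ⟨hpe₂, hqe₂, hnew₂⟩
      · exact hS.cnest p₁ hp₁S q₁ hq₁S p₂ hp₂S q₂ hq₂S hadj₁ hadj₂ hnsame e e' he he' hee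
      · have hlvl : vv p₂.1 q₂.1 = (K : WithTop ℤ) := by
          rw [hpe₂, hqe₂]
          exact hrq
        obtain ⟨cc, hccS, rfl⟩ : ∃ cc ∈ S, e = cc.1 := by
          rcases he with rfl | rfl
          · exact ⟨p₁, hp₁S, rfl⟩
          · exact ⟨q₁, hq₁S, rfl⟩
        have hccq : cc.1 ≠ anc.1 := by
          intro hcq
          have hcca : cc = anc := hS.func cc hccS anc hanc hcq
          have hno := hancnotold hnew₂ p₁ hp₁S q₁ hq₁S hadj₁
          rcases he with h | h
          · exact hno.1 (hcca ▸ (hS.func anc hanc p₁ hp₁S (by rw [← hcq, h])))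
          · exact hno.2 (hcca ▸ (hS.func anc hanc q₁ hq₁S (by rw [← hcq, h])))
        have he'' : e' = r ∨ e' = anc.1 := by
          rcases he' with h | h
          · right; rw [h, hpe₂]
          · left; rw [h, hqe₂]
        calc vv cc.1 e' < (K : WithTop ℤ) := hsmall cc hccS hccq e' he''
          _ ≤ max (vv p₁.1 q₁.1) (vv p₂.1 q₂.1) := by rw [hlvl]; exact le_max_right _ _
    · rcases hclass p₂ hp₂ q₂ hq₂ hadj₂ with ⟨hp₂S, hq₂S⟩ | ⟨hpe₂, hqe₂, hnew₂⟩
      · have hlvl : vv p₁.1 q₁.1 = (K : WithTop ℤ) := by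
          rw [hpe₁, hqe₁]
          exact hrq
        obtain ⟨cc, hccS, rfl⟩ : ∃ cc ∈ S, e' = cc.1 := by
          rcases he' with rfl | rfl
          · exact ⟨p₂, hp₂S, rfl⟩
          · exact ⟨q₂, hq₂S, rfl⟩
        have hccq : cc.1 ≠ anc.1 := by
          intro hcq
          have hcca : cc = anc := hS.func cc hccS anc hanc hcq
          have hno := hancnotold hnew₁ p₂ hp₂S q₂ hq₂S hadj₂
          rcases he' with h | h
          · exact hno.1 (hcca ▸ (hS.func anc hanc p₂ hp₂S (by rw [← hcq, h])))
          · exact hno.2 (hcca ▸ (hS.func anc hanc q₂ hq₂S (by rw [← hcq, h])))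
        have he'' : e = r ∨ e = anc.1 := by
          rcases he with h | h
          · right; rw [h, hpe₁]
          · left; rw [h, hqe₁]
        have h1 : vv e cc.1 < (K : WithTop ℤ) := by
          rw [vv_comm]
          exact hsmall cc hccS hccq e he''
        calc vv e cc.1 < (K : WithTop ℤ) := h1
          _ ≤ max (vv p₁.1 q₁.1) (vv p₂.1 q₂.1) := by rw [hlvl]; exact le_max_left _ _
      · exact absurd ⟨by rw [hpe₁, hpe₂], by rw [hqe₁, hqe₂]⟩ hnsame
  · -- CMin
    intro pm hpm hmin p hp p' hp' hadj e he hne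
    rcases hmem pm hpm with rfl | hpmS
    · exact absurd (hmin anc.2) (not_le.2 hyq)
    · have hclass : (p ∈ S ∧ p' ∈ S) ∨ (p = anc ∧ p' = (r,y) ∧ Adjy anc.2 y) := by
        rcases hmem p hp with rfl | hp3
        · rcases hmem p' hp' with rfl | hq3
          · exact absurd hadj.1 (lt_irrefl _)
          · exact absurd hadj (habv p' hq3)
        · rcases hmem p' hp' with rfl | hq3
          · have hqa := hadj_below p hp3 hadj
            exact Or.inr ⟨hqa, rfl, by rw [← hqa]; exact hadj⟩
          · exact Or.inl ⟨hp3, hq3⟩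
      rcases hclass with ⟨hpS, hp'S⟩ | ⟨hpe, hqe, hnew⟩
      · exact hS.cmin pm hpmS hmin p hpS p' hp'S hadj e he hne
      · have hlvl : vv p.1 p'.1 = (K : WithTop ℤ) := by
          rw [hpe, hqe]
          exact hrq
        rw [hlvl]
        have hpmq : pm.1 ≠ anc.1 := by
          intro hc
          have hpma : pm = anc := hS.func pm hpmS anc hanc hc
          rw [hpma] at hmin
          exact adj_not_min hiso hmin hnew
        have he'' : e = r ∨ e = anc.1 := by
          rcases he with h | h
          · right; rw [h, hpe]
          · left; rw [h, hqe]
        rcases he'' with rfl | rfl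
        · rw [vv_comm, hrc pm hpmS hpmq, vv_comm]
          exact hK pm hpmS anc hanc hpmq
        · exact hK pm hpmS anc hanc hpmq

/-- shallow insertion: the new value y is below all used values or above all used values,
and not adjacent to any used value. -/
lemma ins_shallow (hS : Inv S) {anc : ℚ × X} (hanc : anc ∈ S) {L : ℤ}
    (hL : ∀ c ∈ S, ∀ d ∈ S, c.1 ≠ d.1 → (L : WithTop ℤ) < vv c.1 d.1)
    {y : X} (hy : ∀ c ∈ S, c.2 ≠ y)
    (hext : (∀ c ∈ S, y < c.2) ∨ (∀ c ∈ S, c.2 < y))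
    (hnadj : ∀ c ∈ S, ¬Adjy c.2 y ∧ ¬Adjy y c.2) :
    Inv (insert (anc.1 + 2 ^ L, y) S) := by
  classical
  set r : ℚ := anc.1 + 2 ^ L with hrdef
  have hrq : vv anc.1 r = (L : WithTop ℤ) := vv_pow anc.1 L
  have hrc : ∀ c ∈ S, vv r c.1 = (L : WithTop ℤ) := by
    intro c hc
    by_cases hca : c.1 = anc.1
    · rw [hca, vv_comm]; exact hrq
    · have h1 : vv r anc.1 = (L : WithTop ℤ) := by rw [vv_comm]; exact hrq
      have h2 : vv r anc.1 < vv anc.1 c.1 := by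
        rw [h1]; exact hL anc hanc c hc (fun h => hca h.symm)
      rw [vv_strict h2, h1]
  have hrnotin : ∀ c ∈ S, c.1 ≠ r := by
    intro c hc hcr
    have := hrc c hc
    rw [hcr, vv_self] at this
    exact absurd this.symm (by simp)
  have hmem : ∀ p ∈ insert (r, y) S, p = (r, y) ∨ p ∈ S := by
    intro p hp; exact Finset.mem_insert.1 hp
  have hclass : ∀ p'' ∈ insert (r,y) S, ∀ q'' ∈ insert (r,y) S, Adjy p''.2 q''.2 →
      (p'' ∈ S ∧ q'' ∈ S) := by
    intro p'' hp'' q'' hq'' hadj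
    rcases hmem p'' hp'' with rfl | hp3
    · rcases hmem q'' hq'' with rfl | hq3
      · exact absurd hadj.1 (lt_irrefl _)
      · exact absurd hadj ((hnadj q'' hq3).2)
    · rcases hmem q'' hq'' with rfl | hq3
      · exact absurd hadj ((hnadj p'' hp3).1)
      · exact ⟨hp3, hq3⟩
  constructor
  · intro p hp p' hp' h1
    rcases hmem p hp with rfl | hp2 <;> rcases hmem p' hp' with rfl | hp2'
    · rfl
    · exact absurd (h1.symm) (hrnotin p' hp2')
    · exact absurd h1 (hrnotin p hp2)
    · exact hS.func p hp2 p' hp2' h1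
  · intro p hp p' hp' h1
    rcases hmem p hp with rfl | hp2 <;> rcases hmem p' hp' with rfl | hp2'
    · rfl
    · exact absurd (h1.symm) (hy p' hp2')
    · exact absurd h1 (hy p hp2)
    · exact hS.inj p hp2 p' hp2' h1
  · -- C1
    intro a ha b hb c hc heq hne
    rcases hmem a ha with rfl | ha2 <;> rcases hmem b hb with rfl | hb2 <;>
      rcases hmem c hc with rfl | hc2
    · exact absurd (vv_self _) hne
    · exact absurd (vv_self _) hne
    · exact fun ⟨h1, h2⟩ => absurd (lt_trans h1 h2) (lt_irrefl _)
    · -- (new, b, c)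
      rintro ⟨h1, h2⟩
      simp only at heq h1 h2
      rw [hrc b hb2] at heq
      by_cases hbc : b.1 = c.1
      · have : b = c := hS.func b hb2 c hc2 hbc
        rw [this] at h2
        exact absurd h2 (lt_irrefl _)
      · exact absurd (heq ▸ hL b hb2 c hc2 hbc) (lt_irrefl _)
    · exact absurd (by rw [heq]; exact vv_self _) hne
    · -- (a, new, c)
      rintro ⟨h1, h2⟩
      simp only at h1 h2
      rcases hext with hlo | hhi
      · exact absurd (lt_trans (hlo a ha2) h1) (lt_irrefl _)
      · exact absurd (lt_trans h2 (hhi c hc2)) (lt_irrefl _)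
    · -- (a, b, new)
      rintro ⟨h1, h2⟩
      simp only at heq h1 h2
      have hb' : vv b.1 r = (L : WithTop ℤ) := by rw [vv_comm]; exact hrc b hb2
      rw [hb'] at heq
      by_cases hab : a.1 = b.1
      · exact absurd (by rw [hab]; exact vv_self _) hne
      · exact absurd (heq ▸ hL a ha2 b hb2 hab) (lt_irrefl _)
    · exact hS.c1 a ha2 b hb2 c hc2 heq hne
  · -- CNest
    intro p₁ hp₁ q₁ hq₁ p₂ hp₂ q₂ hq₂ hadj₁ hadj₂ hnsame e e' he he' hee
    obtain ⟨hp₁S, hq₁S⟩ := hclass p₁ hp₁ q₁ hq₁ hadj₁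
    obtain ⟨hp₂S, hq₂S⟩ := hclass p₂ hp₂ q₂ hq₂ hadj₂
    exact hS.cnest p₁ hp₁S q₁ hq₁S p₂ hp₂S q₂ hq₂S hadj₁ hadj₂ hnsame e e' he he' hee
  · -- CMin
    intro pm hpm hmin p hp p' hp' hadj e he hne
    obtain ⟨hpS, hp'S⟩ := hclass p hp p' hp' hadj
    rcases hmem pm hpm with rfl | hpmS
    · -- pm is the new element ; level of the old jump is above L
      have hpq : p.1 ≠ p'.1 := by
        intro h
        have : p = p' := hS.func p hpS p' hp'S h
        rw [this] at hadj
        exact absurd hadj.1 (lt_irrefl _)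
      have h1 : vv (r, y).1 e = (L : WithTop ℤ) := by
        rcases he with rfl | rfl
        · exact hrc p hpS
        · exact hrc p' hp'S
      rw [h1]
      exact hL p hpS p' hp'S hpq
    · exact hS.cmin pm hpmS hmin p hpS p' hp'S hadj e he hne

/-- insertion of an arbitrary fresh rational r, with value y placed just below
the minimal image a₁.2 of the deepest block of r. -/
lemma ins_back_below (hS : Inv S) {r : ℚ} (hr : ∀ c ∈ S, c.1 ≠ r)
    {a₁ : ℚ × X} (ha₁ : a₁ ∈ S)
    (hmax : ∀ c ∈ S, vv r c.1 ≤ vv r a₁.1)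
    (hminA : ∀ c ∈ S, vv r c.1 = vv r a₁.1 → a₁.2 ≤ c.2)
    {y : X} (hy : ∀ c ∈ S, c.2 ≠ y)
    (hpos : ∀ c ∈ S, (c.2 < y ↔ c.2 < a₁.2))
    (hnadj : ∀ c ∈ S, ¬Adjy c.2 y ∧ ¬Adjy y c.2)
    (hnotmin : ¬ ∀ z : X, y ≤ z) :
    Inv (insert (r, y) S) := by
  classical
  have hne_top : ∀ c ∈ S, vv r c.1 ≠ ⊤ := by
    intro c hc
    rw [vv_ne_top_iff]
    exact fun h => hr c hc h.symm
  have hylt : y < a₁.2 := by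
    have h1 : ¬ (a₁.2 < y) := by
      rw [hpos a₁ ha₁]; exact lt_irrefl _
    rcases lt_trichotomy y a₁.2 with h | h | h
    · exact h
    · exact absurd h.symm (hy a₁ ha₁)
    · exact absurd h h1
  have hout : ∀ c ∈ S, vv r c.1 ≠ vv r a₁.1 → vv c.1 a₁.1 = vv c.1 r := by
    intro c hc hcne
    have h1 : vv c.1 r < vv r a₁.1 := by
      rw [vv_comm]
      exact lt_of_le_of_ne (hmax c hc) hcne
    exact vv_strict h1
  have hmem : ∀ p ∈ insert (r, y) S, p = (r, y) ∨ p ∈ S := by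
    intro p hp; exact Finset.mem_insert.1 hp
  have hclass : ∀ p'' ∈ insert (r,y) S, ∀ q'' ∈ insert (r,y) S, Adjy p''.2 q''.2 →
      (p'' ∈ S ∧ q'' ∈ S) := by
    intro p'' hp'' q'' hq'' hadj
    rcases hmem p'' hp'' with rfl | hp3
    · rcases hmem q'' hq'' with rfl | hq3
      · exact absurd hadj.1 (lt_irrefl _)
      · exact absurd hadj ((hnadj q'' hq3).2)
    · rcases hmem q'' hq'' with rfl | hq3
      · exact absurd hadj ((hnadj p'' hp3).1)
      · exact ⟨hp3, hq3⟩
  constructor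
  · intro p hp p' hp' h1
    rcases hmem p hp with rfl | hp2 <;> rcases hmem p' hp' with rfl | hp2'
    · rfl
    · exact absurd (h1.symm) (hr p' hp2')
    · exact absurd h1 (hr p hp2)
    · exact hS.func p hp2 p' hp2' h1
  · intro p hp p' hp' h1
    rcases hmem p hp with rfl | hp2 <;> rcases hmem p' hp' with rfl | hp2'
    · rfl
    · exact absurd (h1.symm) (hy p' hp2')
    · exact absurd h1 (hy p hp2)
    · exact hS.inj p hp2 p' hp2' h1
  · -- C1
    intro a ha b hb c hc heq hne
    rcases hmem a ha with rfl | ha2 <;> rcases hmem b hb with rfl | hb2 <;>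
      rcases hmem c hc with rfl | hc2
    · exact absurd (vv_self _) hne
    · exact absurd (vv_self _) hne
    · exact fun ⟨h1, h2⟩ => absurd (lt_trans h1 h2) (lt_irrefl _)
    · -- (new, b, c) : T2
      rintro ⟨h1, h2⟩
      simp only at heq h1 h2
      by_cases hbA : vv r b.1 = vv r a₁.1
      · -- b in the deepest block : impossible by BIN
        have hbc : b.1 ≠ c.1 := by
          intro h
          apply hne_top b hb2
          rw [heq, h, vv_self]
        have hbig : vv r b.1 < vv r c.1 :=
          vv_bin heq (fun h => hr b hb2 h.symm) hbc
        rw [hbA] at hbig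
        exact absurd (lt_of_lt_of_le hbig (hmax c hc2)) (lt_irrefl _)
      · have h3 : vv b.1 a₁.1 = vv b.1 r := hout b hb2 hbA
        have heq' : vv a₁.1 b.1 = vv b.1 c.1 := by
          rw [vv_comm a₁.1 b.1, h3, vv_comm b.1 r]; exact heq
        have hba : a₁.2 < b.2 := by
          have hge : ¬ (b.2 < a₁.2) := by
            rw [← hpos b hb2]
            exact fun h => absurd (lt_trans h h1) (lt_irrefl _)
          rcases lt_trichotomy a₁.2 b.2 with h | h | h
          · exact h
          · exact absurd (hS.inj b hb2 a₁ ha₁ h.symm) (by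
              intro he
              rw [he] at hbA
              exact hbA rfl)
          · exact absurd h hge
        have hnt : vv a₁.1 b.1 ≠ ⊤ := by
          rw [vv_comm a₁.1 b.1, h3, vv_ne_top_iff]
          exact fun h => hr b hb2 h
        exact hS.c1 a₁ ha₁ b hb2 c hc2 heq' hnt ⟨hba, h2⟩
    · exact absurd (by rw [heq]; exact vv_self _) hne
    · -- (a, new, c) : T1
      rintro ⟨h1, h2⟩
      simp only at heq h1 h2
      by_cases haA : vv r a.1 = vv r a₁.1
      · have h3 := hminA a ha2 haA
        exact absurd (lt_trans (lt_of_le_of_lt h3 h1) hylt) (lt_irrefl _)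
      · have hcA : vv r c.1 ≠ vv r a₁.1 := by
          rw [← heq, vv_comm a.1 r]
          exact haA
        have ha3 : vv a.1 a₁.1 = vv a.1 r := hout a ha2 haA
        have hc3 : vv c.1 a₁.1 = vv c.1 r := hout c hc2 hcA
        have heq' : vv a.1 a₁.1 = vv a₁.1 c.1 := by
          rw [ha3, vv_comm a₁.1 c.1, hc3, vv_comm c.1 r]
          exact heq
        have hnt : vv a.1 a₁.1 ≠ ⊤ := by
          rw [ha3, vv_ne_top_iff]
          exact fun h => hr a ha2 h
        have haa : a.2 < a₁.2 := (hpos a ha2).1 h1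
        have hca : a₁.2 < c.2 := by
          have hge : ¬ (c.2 < a₁.2) := by
            rw [← hpos c hc2]
            exact fun h => absurd (lt_trans h2 h) (lt_irrefl _)
          rcases lt_trichotomy a₁.2 c.2 with h | h | h
          · exact h
          · exact absurd (hS.inj c hc2 a₁ ha₁ h.symm) (by
              intro he
              rw [he] at hcA
              exact hcA rfl)
          · exact absurd h hge
        exact hS.c1 a ha2 a₁ ha₁ c hc2 heq' hnt ⟨haa, hca⟩
    · -- (a, b, new) : T3
      rintro ⟨h1, h2⟩
      simp only at heq h1 h2
      by_cases hbA : vv r b.1 = vv r a₁.1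
      · have hab : a.1 ≠ b.1 := fun h => hne (by rw [h, vv_self])
        have hbig := vv_bin heq hab (fun h => hr b hb2 h)
        rw [heq, vv_comm b.1 r, hbA, vv_comm a.1 r] at hbig
        exact absurd (lt_of_lt_of_le hbig (hmax a ha2)) (lt_irrefl _)
      · have hb3 : vv b.1 a₁.1 = vv b.1 r := hout b hb2 hbA
        have heq' : vv a.1 b.1 = vv b.1 a₁.1 := by
          rw [hb3]; exact heq
        have hba : b.2 < a₁.2 := (hpos b hb2).1 h2
        exact hS.c1 a ha2 b hb2 a₁ ha₁ heq' hne ⟨h1, hba⟩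
    · exact hS.c1 a ha2 b hb2 c hc2 heq hne
  · -- CNest
    intro p₁ hp₁ q₁ hq₁ p₂ hp₂ q₂ hq₂ hadj₁ hadj₂ hnsame e e' he he' hee
    obtain ⟨hp₁S, hq₁S⟩ := hclass p₁ hp₁ q₁ hq₁ hadj₁
    obtain ⟨hp₂S, hq₂S⟩ := hclass p₂ hp₂ q₂ hq₂ hadj₂
    exact hS.cnest p₁ hp₁S q₁ hq₁S p₂ hp₂S q₂ hq₂S hadj₁ hadj₂ hnsame e e' he he' hee
  · -- CMin
    intro pm hpm hmin p hp p' hp' hadj e he hne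
    obtain ⟨hpS, hp'S⟩ := hclass p hp p' hp' hadj
    rcases hmem pm hpm with rfl | hpmS
    · exact absurd hmin hnotmin
    · exact hS.cmin pm hpmS hmin p hpS p' hp'S hadj e he hne

/-- insertion of an arbitrary fresh rational r, with value y placed just above
the maximal image a₂.2 of the deepest block of r. -/
lemma ins_back_above (hS : Inv S) {r : ℚ} (hr : ∀ c ∈ S, c.1 ≠ r)
    {a₂ : ℚ × X} (ha₂ : a₂ ∈ S)
    (hmax : ∀ c ∈ S, vv r c.1 ≤ vv r a₂.1)
    (hmaxA : ∀ c ∈ S, vv r c.1 = vv r a₂.1 → c.2 ≤ a₂.2)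
    {y : X} (hy : ∀ c ∈ S, c.2 ≠ y)
    (hpos : ∀ c ∈ S, (y < c.2 ↔ a₂.2 < c.2))
    (hnadj : ∀ c ∈ S, ¬Adjy c.2 y ∧ ¬Adjy y c.2) :
    Inv (insert (r, y) S) := by
  classical
  have hne_top : ∀ c ∈ S, vv r c.1 ≠ ⊤ := by
    intro c hc
    rw [vv_ne_top_iff]
    exact fun h => hr c hc h.symm
  have hylt : a₂.2 < y := by
    have h1 : ¬ (y < a₂.2) := by
      rw [hpos a₂ ha₂]; exact lt_irrefl _
    rcases lt_trichotomy a₂.2 y with h | h | h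
    · exact h
    · exact absurd h (hy a₂ ha₂)
    · exact absurd h h1
  have hout : ∀ c ∈ S, vv r c.1 ≠ vv r a₂.1 → vv c.1 a₂.1 = vv c.1 r := by
    intro c hc hcne
    have h1 : vv c.1 r < vv r a₂.1 := by
      rw [vv_comm]
      exact lt_of_le_of_ne (hmax c hc) hcne
    exact vv_strict h1
  have hmem : ∀ p ∈ insert (r, y) S, p = (r, y) ∨ p ∈ S := by
    intro p hp; exact Finset.mem_insert.1 hp
  have hclass : ∀ p'' ∈ insert (r,y) S, ∀ q'' ∈ insert (r,y) S, Adjy p''.2 q''.2 →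
      (p'' ∈ S ∧ q'' ∈ S) := by
    intro p'' hp'' q'' hq'' hadj
    rcases hmem p'' hp'' with rfl | hp3
    · rcases hmem q'' hq'' with rfl | hq3
      · exact absurd hadj.1 (lt_irrefl _)
      · exact absurd hadj ((hnadj q'' hq3).2)
    · rcases hmem q'' hq'' with rfl | hq3
      · exact absurd hadj ((hnadj p'' hp3).1)
      · exact ⟨hp3, hq3⟩
  constructor
  · intro p hp p' hp' h1
    rcases hmem p hp with rfl | hp2 <;> rcases hmem p' hp' with rfl | hp2'
    · rfl
    · exact absurd (h1.symm) (hr p' hp2')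
    · exact absurd h1 (hr p hp2)
    · exact hS.func p hp2 p' hp2' h1
  · intro p hp p' hp' h1
    rcases hmem p hp with rfl | hp2 <;> rcases hmem p' hp' with rfl | hp2'
    · rfl
    · exact absurd (h1.symm) (hy p' hp2')
    · exact absurd h1 (hy p hp2)
    · exact hS.inj p hp2 p' hp2' h1
  · -- C1
    intro a ha b hb c hc heq hne
    rcases hmem a ha with rfl | ha2 <;> rcases hmem b hb with rfl | hb2 <;>
      rcases hmem c hc with rfl | hc2
    · exact absurd (vv_self _) hne
    · exact absurd (vv_self _) hne
    · exact fun ⟨h1, h2⟩ => absurd (lt_trans h1 h2) (lt_irrefl _)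
    · -- (new, b, c) : T2
      rintro ⟨h1, h2⟩
      simp only at heq h1 h2
      by_cases hbA : vv r b.1 = vv r a₂.1
      · have hbc : b.1 ≠ c.1 := by
          intro h
          apply hne_top b hb2
          rw [heq, h, vv_self]
        have hbig : vv r b.1 < vv r c.1 :=
          vv_bin heq (fun h => hr b hb2 h.symm) hbc
        rw [hbA] at hbig
        exact absurd (lt_of_lt_of_le hbig (hmax c hc2)) (lt_irrefl _)
      · have hb3 : vv b.1 a₂.1 = vv b.1 r := hout b hb2 hbA
        have heq' : vv a₂.1 b.1 = vv b.1 c.1 := by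
          rw [vv_comm a₂.1 b.1, hb3, vv_comm b.1 r]; exact heq
        have hba : a₂.2 < b.2 := (hpos b hb2).1 h1
        have hnt : vv a₂.1 b.1 ≠ ⊤ := by
          rw [vv_comm a₂.1 b.1, hb3, vv_ne_top_iff]
          exact fun h => hr b hb2 h
        exact hS.c1 a₂ ha₂ b hb2 c hc2 heq' hnt ⟨hba, h2⟩
    · exact absurd (by rw [heq]; exact vv_self _) hne
    · -- (a, new, c) : T1
      rintro ⟨h1, h2⟩
      simp only at heq h1 h2
      by_cases haA : vv r a.1 = vv r a₂.1
      · have hcA : vv r c.1 = vv r a₂.1 := by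
          rw [← heq, vv_comm a.1 r]
          exact haA
        have h3 := hmaxA c hc2 hcA
        exact absurd (lt_trans (lt_of_lt_of_le h2 h3) hylt) (lt_irrefl _)
      · have hcA : vv r c.1 ≠ vv r a₂.1 := by
          rw [← heq, vv_comm a.1 r]
          exact haA
        have ha3 : vv a.1 a₂.1 = vv a.1 r := hout a ha2 haA
        have hc3 : vv c.1 a₂.1 = vv c.1 r := hout c hc2 hcA
        have heq' : vv a.1 a₂.1 = vv a₂.1 c.1 := by
          rw [ha3, vv_comm a₂.1 c.1, hc3, vv_comm c.1 r]
          exact heq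
        have hnt : vv a.1 a₂.1 ≠ ⊤ := by
          rw [ha3, vv_ne_top_iff]
          exact fun h => hr a ha2 h
        have hca : a₂.2 < c.2 := (hpos c hc2).1 h2
        have haa : a.2 < a₂.2 := by
          have hge : ¬ (a₂.2 < a.2) := by
            rw [← hpos a ha2]
            exact fun h => absurd (lt_trans h h1) (lt_irrefl _)
          rcases lt_trichotomy a.2 a₂.2 with h | h | h
          · exact h
          · exact absurd (hS.inj a ha2 a₂ ha₂ h) (by
              intro he
              rw [he] at haA
              exact haA rfl)
          · exact absurd h hge
        exact hS.c1 a ha2 a₂ ha₂ c hc2 heq' hnt ⟨haa, hca⟩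
    · -- (a, b, new) : T3
      rintro ⟨h1, h2⟩
      simp only at heq h1 h2
      by_cases hbA : vv r b.1 = vv r a₂.1
      · have hab : a.1 ≠ b.1 := fun h => hne (by rw [h, vv_self])
        have hbig := vv_bin heq hab (fun h => hr b hb2 h)
        rw [heq, vv_comm b.1 r, hbA, vv_comm a.1 r] at hbig
        exact absurd (lt_of_lt_of_le hbig (hmax a ha2)) (lt_irrefl _)
      · have hb3 : vv b.1 a₂.1 = vv b.1 r := hout b hb2 hbA
        have heq' : vv a.1 b.1 = vv b.1 a₂.1 := by
          rw [hb3]; exact heq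
        have hba : b.2 < a₂.2 := by
          have hge : ¬ (a₂.2 < b.2) := by
            rw [← hpos b hb2]
            exact fun h => absurd (lt_trans h2 h) (lt_irrefl _)
          rcases lt_trichotomy b.2 a₂.2 with h | h | h
          · exact h
          · exact absurd (hS.inj b hb2 a₂ ha₂ h) (by
              intro he
              rw [he] at hbA
              exact hbA rfl)
          · exact absurd h hge
        exact hS.c1 a ha2 b hb2 a₂ ha₂ heq' hne ⟨h1, hba⟩
    · exact hS.c1 a ha2 b hb2 c hc2 heq hne
  · -- CNest
    intro p₁ hp₁ q₁ hq₁ p₂ hp₂ q₂ hq₂ hadj₁ hadj₂ hnsame e e' he he' hee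
    obtain ⟨hp₁S, hq₁S⟩ := hclass p₁ hp₁ q₁ hq₁ hadj₁
    obtain ⟨hp₂S, hq₂S⟩ := hclass p₂ hp₂ q₂ hq₂ hadj₂
    exact hS.cnest p₁ hp₁S q₁ hq₁S p₂ hp₂S q₂ hq₂S hadj₁ hadj₂ hnsame e e' he he' hee
  · -- CMin
    intro pm hpm hmin p hp p' hp' hadj e he hne
    obtain ⟨hpS, hp'S⟩ := hclass p hp p' hp' hadj
    rcases hmem pm hpm with rfl | hpmS
    · exact absurd (hmin a₂.2) (not_le.2 hylt)
    · exact hS.cmin pm hpmS hmin p hpS p' hp'S hadj e he hne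

omit [TopologicalSpace X] [OrderTopology X] in
lemma block_extrema (hSne : S.Nonempty) (r : ℚ) :
    ∃ a₁ ∈ S, ∃ a₂ ∈ S,
      (∀ c ∈ S, vv r c.1 ≤ vv r a₁.1) ∧ vv r a₁.1 = vv r a₂.1 ∧
      (∀ c ∈ S, vv r c.1 = vv r a₁.1 → a₁.2 ≤ c.2 ∧ c.2 ≤ a₂.2) := by
  classical
  obtain ⟨a₀, ha₀, hmax⟩ := Finset.exists_max_image S (fun c => vv r c.1) hSne
  set A := S.filter (fun c => vv r c.1 = vv r a₀.1) with hA
  have hAne : A.Nonempty := ⟨a₀, Finset.mem_filter.2 ⟨ha₀, rfl⟩⟩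
  obtain ⟨a₁, ha₁A, hmin1⟩ := Finset.exists_min_image A (fun c => c.2) hAne
  obtain ⟨a₂, ha₂A, hmax2⟩ := Finset.exists_max_image A (fun c => c.2) hAne
  have ha₁S : a₁ ∈ S := (Finset.mem_filter.1 ha₁A).1
  have ha₂S : a₂ ∈ S := (Finset.mem_filter.1 ha₂A).1
  have he₁ : vv r a₁.1 = vv r a₀.1 := (Finset.mem_filter.1 ha₁A).2
  have he₂ : vv r a₂.1 = vv r a₀.1 := (Finset.mem_filter.1 ha₂A).2
  refine ⟨a₁, ha₁S, a₂, ha₂S, ?_, by rw [he₁, he₂], ?_⟩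
  · intro c hc
    rw [he₁]
    exact hmax c hc
  · intro c hc hceq
    have hcA : c ∈ A := Finset.mem_filter.2 ⟨hc, by rw [hceq, he₁]⟩
    exact ⟨hmin1 c hcA, hmax2 c hcA⟩

include hiso in
/-- a fresh rational can always be inserted. -/
lemma ext_back (hnomax : ∀ x : X, ∃ z, x < z) (hS : Inv S) (hSne : S.Nonempty)
    {r : ℚ} (hr : ∀ c ∈ S, c.1 ≠ r) :
    ∃ y : X, Inv (insert (r, y) S) := by
  classical
  obtain ⟨a₁, ha₁, a₂, ha₂, hmax, hk12, hminmax⟩ := block_extrema hSne r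
  have hmax₂ : ∀ c ∈ S, vv r c.1 ≤ vv r a₂.1 := fun c hc => hk12 ▸ hmax c hc
  have hx12 : a₁.2 ≤ a₂.2 := (hminmax a₂ ha₂ hk12.symm).1
  -- Good insertion below the block
  by_cases hB : ∃ z₁ z₂ z₃ : X, z₁ < z₂ ∧ z₂ < z₃ ∧ z₃ < a₁.2 ∧
      ∀ c ∈ S, c.2 < a₁.2 → c.2 < z₁
  · obtain ⟨z₁, z₂, z₃, h12, h23, h3x, hbound⟩ := hB
    have hz₂x : z₂ < a₁.2 := lt_trans h23 h3x
    have hy : ∀ c ∈ S, c.2 ≠ z₂ := by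
      intro c hc hcy
      have h0 : c.2 < a₁.2 := by rw [hcy]; exact hz₂x
      have := hbound c hc h0
      rw [hcy] at this
      exact absurd this (asymm h12)
    refine ⟨z₂, ins_back_below hS hr ha₁ hmax
      (fun c hc h => (hminmax c hc h).1) hy ?_ ?_ ?_⟩
    · intro c hc
      constructor
      · intro h; exact lt_trans h hz₂x
      · intro h; exact lt_trans (hbound c hc h) h12
    · intro c hc
      constructor
      · intro hadj
        have h1 : c.2 < z₁ := hbound c hc (lt_trans hadj.1 hz₂x)
        exact hadj.2 z₁ ⟨h1, h12⟩
      · intro hadj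
        have h1 : ¬ (c.2 < a₁.2) := by
          intro h
          exact absurd (lt_trans (lt_trans (hbound c hc h) h12) hadj.1) (lt_irrefl _)
        push_neg at h1
        have h2 : z₃ < c.2 := lt_of_lt_of_le h3x h1
        exact hadj.2 z₃ ⟨h23, h2⟩
    · intro hcon
      exact absurd (hcon z₁) (not_le.2 h12)
  -- Good insertion above the block
  by_cases hA : ∃ z₁ z₂ z₃ : X, a₂.2 < z₁ ∧ z₁ < z₂ ∧ z₂ < z₃ ∧
      ∀ c ∈ S, a₂.2 < c.2 → z₃ < c.2
  · obtain ⟨z₁, z₂, z₃, hx1, h12, h23, hbound⟩ := hA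
    have hz₂x : a₂.2 < z₂ := lt_trans hx1 h12
    have hy : ∀ c ∈ S, c.2 ≠ z₂ := by
      intro c hc hcy
      have h0 : a₂.2 < c.2 := by rw [hcy]; exact hz₂x
      have := hbound c hc h0
      rw [hcy] at this
      exact absurd this (asymm h23)
    refine ⟨z₂, ins_back_above hS hr ha₂ hmax₂
      (fun c hc h => (hminmax c hc (hk12 ▸ h)).2) hy ?_ ?_⟩
    · intro c hc
      constructor
      · intro h
        have h1 : ¬ (c.2 ≤ a₂.2) := by
          intro hle
          exact absurd (lt_of_lt_of_le (lt_trans hz₂x h) hle) (lt_irrefl _)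
        push_neg at h1
        exact h1
      · intro h
        exact lt_trans h23 (hbound c hc h)
    · intro c hc
      constructor
      · intro hadj
        have h1 : ¬ (a₂.2 < c.2) := by
          intro h
          exact absurd (lt_trans (lt_trans (hbound c hc h) hadj.1) h23) (lt_irrefl _)
        push_neg at h1
        exact hadj.2 z₁ ⟨lt_of_le_of_lt h1 hx1, h12⟩
      · intro hadj
        have h1 : a₂.2 < c.2 := lt_trans hz₂x hadj.1
        exact hadj.2 z₃ ⟨h23, hbound c hc h1⟩
  -- both sides blocked: derive a contradiction
  exfalso
  -- below blocked gives jump or minimum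
  have hbelow : (∃ q₁ ∈ S, Adjy q₁.2 a₁.2) ∨ (∀ z : X, a₁.2 ≤ z) := by
    by_cases hW : (S.filter (fun c => c.2 < a₁.2)).Nonempty
    · obtain ⟨pw, hpwW, hpwmax⟩ := Finset.exists_max_image _ (fun c => c.2) hW
      have hpwS : pw ∈ S := (Finset.mem_filter.1 hpwW).1
      have hpwlt : pw.2 < a₁.2 := (Finset.mem_filter.1 hpwW).2
      left
      refine ⟨pw, hpwS, hpwlt, ?_⟩
      intro z hz
      rcases hz with ⟨hz1, hz2⟩
      -- the interval (pw.2, a₁.2) is nonempty, contradicting ¬hB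
      obtain ⟨t₁, t₂, t₃, ht1, ht2, ht3, ht4⟩ := three_in_Ioo hiso ⟨z, hz1, hz2⟩
      apply hB
      refine ⟨t₁, t₂, t₃, ht2, ht3, ht4, ?_⟩
      intro c hc hclt
      exact lt_of_le_of_lt (hpwmax c (Finset.mem_filter.2 ⟨hc, hclt⟩)) ht1
    · by_cases hIio : (Set.Iio a₁.2).Nonempty
      · exfalso
        obtain ⟨t₁, t₂, t₃, ht2, ht3, ht4⟩ := three_in_Iio hiso hIio
        apply hB
        refine ⟨t₁, t₂, t₃, ht2, ht3, ht4, ?_⟩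
        intro c hc hclt
        exact absurd ⟨hc, hclt⟩ (fun h => hW ⟨c, Finset.mem_filter.2 h⟩)
      · right
        intro z
        by_contra hz
        push_neg at hz
        exact hIio ⟨z, hz⟩
  -- above blocked gives a jump
  have habove : ∃ q₂ ∈ S, Adjy a₂.2 q₂.2 := by
    by_cases hV : (S.filter (fun c => a₂.2 < c.2)).Nonempty
    · obtain ⟨pw, hpwV, hpwmin⟩ := Finset.exists_min_image _ (fun c => c.2) hV
      have hpwS : pw ∈ S := (Finset.mem_filter.1 hpwV).1
      have hpwlt : a₂.2 < pw.2 := (Finset.mem_filter.1 hpwV).2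
      refine ⟨pw, hpwS, hpwlt, ?_⟩
      intro z hz
      rcases hz with ⟨hz1, hz2⟩
      obtain ⟨t₁, t₂, t₃, ht1, ht2, ht3, ht4⟩ := three_in_Ioo hiso ⟨z, hz1, hz2⟩
      apply hA
      refine ⟨t₁, t₂, t₃, ht1, ht2, ht3, ?_⟩
      intro c hc hclt
      exact lt_of_lt_of_le ht4 (hpwmin c (Finset.mem_filter.2 ⟨hc, hclt⟩))
    · exfalso
      obtain ⟨t₁, t₂, t₃, ht1, ht2, ht3⟩ := three_in_Ioi hiso ⟨_, (hnomax a₂.2).choose_spec⟩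
      apply hA
      refine ⟨t₁, t₂, t₃, ht1, ht2, ht3, ?_⟩
      intro c hc hclt
      exact absurd ⟨hc, hclt⟩ (fun h => hV ⟨c, Finset.mem_filter.2 h⟩)
  obtain ⟨q₂, hq₂S, hadj₂⟩ := habove
  -- q₂ is not in the deep block
  have hq₂ne : vv r q₂.1 ≠ vv r a₁.1 := by
    intro h
    have := (hminmax q₂ hq₂S h).2
    exact absurd (lt_of_le_of_lt this hadj₂.1) (lt_irrefl _)
  have ha₂q₂ : a₂.1 ≠ q₂.1 := by
    intro h
    have : a₂ = q₂ := hS.func a₂ ha₂ q₂ hq₂S h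
    rw [this] at hadj₂
    exact absurd hadj₂.1 (lt_irrefl _)
  have hk₂lt : vv a₂.1 q₂.1 < vv r a₁.1 := by
    rcases lt_trichotomy (vv a₂.1 q₂.1) (vv r a₁.1) with h | h | h
    · exact h
    · exfalso
      have h' : vv r a₂.1 = vv a₂.1 q₂.1 := by rw [← hk12, h]
      have hbig := vv_bin h' (fun hh => hr a₂ ha₂ hh.symm) ha₂q₂
      exact absurd (lt_of_lt_of_le hbig (hmax₂ q₂ hq₂S)) (lt_irrefl _)
    · exfalso
      apply hq₂ne
      rw [hk12] at h ⊢
      exact vv_strict h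
  obtain ⟨q₁, hq₁S, hadj₁⟩ | hmin := hbelow
  · -- jump below and jump above: contradiction via CNest
    have hq₁ne : vv r q₁.1 ≠ vv r a₁.1 := by
      intro h
      have := (hminmax q₁ hq₁S h).1
      exact absurd (lt_of_le_of_lt this hadj₁.1) (lt_irrefl _)
    have ha₁q₁ : a₁.1 ≠ q₁.1 := by
      intro h
      have : a₁ = q₁ := hS.func a₁ ha₁ q₁ hq₁S h
      rw [this] at hadj₁
      exact absurd hadj₁.1 (lt_irrefl _)
    have hk₁lt : vv q₁.1 a₁.1 < vv r a₁.1 := by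
      rcases lt_trichotomy (vv q₁.1 a₁.1) (vv r a₁.1) with h | h | h
      · exact h
      · exfalso
        apply absurd (hmax q₁ hq₁S)
        push_neg
        have h' : vv r a₁.1 = vv a₁.1 q₁.1 := by rw [vv_comm a₁.1 q₁.1, ← h]
        exact vv_bin h' (fun hh => hr a₁ ha₁ hh.symm) ha₁q₁
      · exfalso
        apply hq₁ne
        rw [vv_comm q₁.1 a₁.1] at h
        exact vv_strict (show vv r a₁.1 < vv a₁.1 q₁.1 from h)
    -- a₁ = a₂ would make a₁.2 isolated
    have ha₁a₂ : a₁ ≠ a₂ := by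
      intro h
      rw [← h] at hadj₂
      exact not_adj_both hiso hadj₁ hadj₂
    have ha₁a₂' : a₁.1 ≠ a₂.1 := func_firsts_ne hS.func ha₁ ha₂ ha₁a₂
    have hbig : vv r a₁.1 < vv a₁.1 a₂.1 := by
      have h' : vv a₁.1 r = vv r a₂.1 := by rw [vv_comm a₁.1 r, hk12]
      have := vv_bin h' (fun hh => hr a₁ ha₁ hh) (fun hh => hr a₂ ha₂ hh.symm)
      rw [vv_comm a₁.1 r, hk12] at this
      rw [hk12]
      exact this
    have hnsame : ¬(q₁.1 = a₂.1 ∧ a₁.1 = q₂.1) := by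
      rintro ⟨he1, he2⟩
      have h1 : q₁ = a₂ := hS.func q₁ hq₁S a₂ ha₂ he1
      have : q₁.2 < a₁.2 := hadj₁.1
      rw [h1] at this
      exact absurd (lt_of_le_of_lt hx12 this) (lt_irrefl _)
    have := hS.cnest q₁ hq₁S a₁ ha₁ a₂ ha₂ q₂ hq₂S hadj₁ hadj₂ hnsame
      a₁.1 a₂.1 (Or.inr rfl) (Or.inl rfl) ha₁a₂'
    have hlt : max (vv q₁.1 a₁.1) (vv a₂.1 q₂.1) < vv r a₁.1 := max_lt hk₁lt hk₂lt
    exact absurd (lt_trans this hlt) (not_lt.2 (le_of_lt hbig))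
  · -- minimum below and jump above: contradiction via CMin
    have ha₁a₂ : a₁ ≠ a₂ := by
      intro h
      rw [← h] at hadj₂
      exact adj_not_min hiso hmin hadj₂
    have ha₁a₂' : a₁.1 ≠ a₂.1 := func_firsts_ne hS.func ha₁ ha₂ ha₁a₂
    have hbig : vv r a₁.1 < vv a₁.1 a₂.1 := by
      have h' : vv a₁.1 r = vv r a₂.1 := by rw [vv_comm a₁.1 r, hk12]
      have := vv_bin h' (fun hh => hr a₁ ha₁ hh) (fun hh => hr a₂ ha₂ hh.symm)
      rw [vv_comm a₁.1 r, hk12] at this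
      rw [hk12]
      exact this
    have := hS.cmin a₁ ha₁ hmin a₂ ha₂ q₂ hq₂S hadj₂ a₂.1 (Or.inl rfl) ha₁a₂'
    exact absurd (lt_trans this hk₂lt) (not_lt.2 (le_of_lt hbig))

omit [TopologicalSpace X] [OrderTopology X] in
lemma exists_fresh_K (S : Finset (ℚ × X)) :
    ∃ K : ℤ, ∀ c ∈ S, ∀ d ∈ S, c.1 ≠ d.1 → vv c.1 d.1 < (K : WithTop ℤ) := by
  classical
  obtain ⟨K, hK⟩ := exists_ub ((S ×ˢ S).image (fun p => vv p.1.1 p.2.1))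
  refine ⟨K, fun c hc d hd hcd => ?_⟩
  exact hK _ (Finset.mem_image.2 ⟨(c, d), Finset.mem_product.2 ⟨hc, hd⟩, rfl⟩)
    (vv_ne_top_iff.2 hcd)

omit [TopologicalSpace X] [OrderTopology X] in
lemma exists_fresh_L (S : Finset (ℚ × X)) :
    ∃ L : ℤ, ∀ c ∈ S, ∀ d ∈ S, c.1 ≠ d.1 → (L : WithTop ℤ) < vv c.1 d.1 := by
  classical
  obtain ⟨L, hL⟩ := exists_lb ((S ×ˢ S).image (fun p => vv p.1.1 p.2.1))
  refine ⟨L, fun c hc d hd hcd => ?_⟩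
  exact hL _ (Finset.mem_image.2 ⟨(c, d), Finset.mem_product.2 ⟨hc, hd⟩, rfl⟩)

omit [TopologicalSpace X] [OrderTopology X] in
lemma inv_singleton (r : ℚ) (y : X) : Inv ({(r, y)} : Finset (ℚ × X)) := by
  classical
  constructor
  · intro p hp p' hp' _
    rw [Finset.mem_singleton.1 hp, Finset.mem_singleton.1 hp']
  · intro p hp p' hp' _
    rw [Finset.mem_singleton.1 hp, Finset.mem_singleton.1 hp']
  · intro p hp q hq c hc heq hne
    rw [Finset.mem_singleton.1 hp, Finset.mem_singleton.1 hq] at *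
    exact absurd (vv_self _) hne
  · intro p₁ hp₁ q₁ hq₁ p₂ hp₂ q₂ hq₂ hadj₁ _ _ _ _ _ _ _
    rw [Finset.mem_singleton.1 hp₁, Finset.mem_singleton.1 hq₁] at hadj₁
    exact absurd hadj₁.1 (lt_irrefl _)
  · intro pm hpm _ p hp q hq hadj _ _ _
    rw [Finset.mem_singleton.1 hp, Finset.mem_singleton.1 hq] at hadj
    exact absurd hadj.1 (lt_irrefl _)

include hiso in
/-- a fresh value y can always be hit. -/
lemma ext_forth (hS : Inv S) (hSne : S.Nonempty) {y : X} (hy : ∀ c ∈ S, c.2 ≠ y) :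
    ∃ r : ℚ, Inv (insert (r, y) S) := by
  classical
  obtain ⟨K, hK⟩ := exists_fresh_K S
  obtain ⟨L, hL⟩ := exists_fresh_L S
  by_cases hadjA : ∃ e ∈ S, Adjy e.2 y
  · obtain ⟨e, he, hadj⟩ := hadjA
    refine ⟨e.1 + 2 ^ K, ins_deep_above hiso hS he hK hy ?_ ?_⟩
    · intro c hc
      constructor
      · intro h
        rcases lt_trichotomy c.2 e.2 with h' | h' | h'
        · exact le_of_lt h'
        · exact le_of_eq h'
        · exact absurd ⟨h', h⟩ (hadj.2 c.2)
      · intro h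
        exact lt_of_le_of_lt h hadj.1
    · intro c hc hadj2
      exact not_adj_both hiso hadj hadj2
  by_cases hadjB : ∃ e ∈ S, Adjy y e.2
  · obtain ⟨e, he, hadj⟩ := hadjB
    refine ⟨e.1 + 2 ^ K, ins_deep_below hiso hS he hK hy ?_ ?_ ?_⟩
    · intro c hc
      constructor
      · intro h
        rcases lt_trichotomy c.2 e.2 with h' | h' | h'
        · exact absurd ⟨h, h'⟩ (hadj.2 c.2)
        · exact le_of_eq h'.symm
        · exact le_of_lt h'
      · intro h
        exact lt_of_lt_of_le hadj.1 h
    · intro c hc hadj2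
      exact not_adj_both hiso hadj2 hadj
    · intro hmin
      exact adj_not_min hiso hmin hadj
  obtain ⟨anc, hanc⟩ := hSne
  by_cases hlo : ∀ c ∈ S, y < c.2
  · refine ⟨anc.1 + 2 ^ L, ins_shallow hS hanc hL hy (Or.inl hlo) ?_⟩
    intro c hc
    constructor
    · intro hadj
      exact absurd (lt_trans (hlo c hc) hadj.1) (lt_irrefl _)
    · intro hadj
      exact hadjB ⟨c, hc, hadj⟩
  by_cases hhi : ∀ c ∈ S, c.2 < y
  · refine ⟨anc.1 + 2 ^ L, ins_shallow hS hanc hL hy (Or.inr hhi) ?_⟩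
    intro c hc
    constructor
    · intro hadj
      exact hadjA ⟨c, hc, hadj⟩
    · intro hadj
      exact absurd (lt_trans hadj.1 (hhi c hc)) (lt_irrefl _)
  -- middle non-adjacent : attach below the minimal used value above y
  have hVne : (S.filter (fun c => y < c.2)).Nonempty := by
    push_neg at hhi
    obtain ⟨c, hc, hcy⟩ := hhi
    have : y < c.2 := lt_of_le_of_ne hcy (fun h => hy c hc h.symm)
    exact ⟨c, Finset.mem_filter.2 ⟨hc, this⟩⟩
  obtain ⟨u, huV, humin⟩ := Finset.exists_min_image _ (fun c => c.2) hVne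
  have huS : u ∈ S := (Finset.mem_filter.1 huV).1
  have huy : y < u.2 := (Finset.mem_filter.1 huV).2
  refine ⟨u.1 + 2 ^ K, ins_deep_below hiso hS huS hK hy ?_ ?_ ?_⟩
  · intro c hc
    constructor
    · intro h
      exact humin c (Finset.mem_filter.2 ⟨hc, h⟩)
    · intro h
      exact lt_of_lt_of_le huy h
  · intro c hc hadj
    exact hadjA ⟨c, hc, hadj⟩
  · intro hmin
    push_neg at hlo
    obtain ⟨c, hc, hcy⟩ := hlo
    have : c.2 < y := lt_of_le_of_ne hcy (hy c hc)
    exact absurd (hmin c.2) (not_le.2 this)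

omit [TopologicalSpace X] [OrderTopology X] in
lemma inv_empty : Inv (∅ : Finset (ℚ × X)) := by
  constructor <;> intro p hp <;> simp at hp

include hiso in
lemma ext_step (hnomax : ∀ x : X, ∃ z, x < z) (hS : Inv S) (q : ℚ) (y : X)
    (y₀ : X) :
    ∃ T : Finset (ℚ × X), S ⊆ T ∧ Inv T ∧ (∃ x, (q, x) ∈ T) ∧ (∃ p, (p, y) ∈ T) := by
  classical
  -- step 1 : ensure q is in the domain
  obtain ⟨T₁, hsub₁, hT₁, hq₁⟩ :
      ∃ T₁ : Finset (ℚ × X), S ⊆ T₁ ∧ Inv T₁ ∧ (∃ x, (q, x) ∈ T₁) := by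
    by_cases hq : ∃ x, (q, x) ∈ S
    · exact ⟨S, Finset.Subset.refl S, hS, hq⟩
    · rcases Finset.eq_empty_or_nonempty S with rfl | hSne
      · exact ⟨{(q, y₀)}, by simp, inv_singleton q y₀, ⟨y₀, Finset.mem_singleton_self _⟩⟩
      · have hr : ∀ c ∈ S, c.1 ≠ q := by
          intro c hc hcq
          exact hq ⟨c.2, by rw [← hcq]; exact hc⟩
        obtain ⟨y', hy'⟩ := ext_back hiso hnomax hS hSne hr
        exact ⟨insert (q, y') S, Finset.subset_insert _ _, hy',
          ⟨y', Finset.mem_insert_self _ _⟩⟩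
  -- step 2 : ensure y is in the range
  by_cases hy : ∃ p, (p, y) ∈ T₁
  · exact ⟨T₁, hsub₁, hT₁, hq₁, hy⟩
  · have hT₁ne : T₁.Nonempty := by
      obtain ⟨x, hx⟩ := hq₁
      exact ⟨(q, x), hx⟩
    have hy' : ∀ c ∈ T₁, c.2 ≠ y := by
      intro c hc hcy
      exact hy ⟨c.1, by rw [← hcy]; exact hc⟩
    obtain ⟨r, hrT⟩ := ext_forth hiso hT₁ hT₁ne hy'
    refine ⟨insert (r, y) T₁, ?_, hrT, ?_, ⟨r, Finset.mem_insert_self _ _⟩⟩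
    · exact Finset.Subset.trans hsub₁ (Finset.subset_insert _ _)
    · obtain ⟨x, hx⟩ := hq₁
      exact ⟨x, Finset.mem_insert_of_mem hx⟩

include hiso in
theorem main_nomax [Countable X] [Infinite X]
    (hnomax : ¬ ∃ m : X, ∀ x : X, x ≤ m) :
    ∃ f : ℚ → X, Function.Bijective f ∧
      ¬ ∃ a b c : ℚ, f a < f b ∧ f b < f c ∧ ord2 (b - a) = ord2 (c - b) := by
  classical
  have hnomax' : ∀ x : X, ∃ z, x < z := by
    intro x
    by_contra hcon
    push_neg at hcon
    exact hnomax ⟨x, hcon⟩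
  have hne : Nonempty X := inferInstance
  obtain ⟨eQ, heQ⟩ := exists_surjective_nat ℚ
  obtain ⟨eX, heX⟩ := exists_surjective_nat X
  have hstep : ∀ (n : ℕ) (T : Finset (ℚ × X)), Inv T →
      ∃ T', T ⊆ T' ∧ Inv T' ∧ (∃ x, (eQ n, x) ∈ T') ∧ (∃ p, (p, eX n) ∈ T') := by
    intro n T hT
    exact ext_step hiso hnomax' hT (eQ n) (eX n) (eX 0)
  let G : ℕ → {T : Finset (ℚ × X) // Inv T} :=
    fun n => Nat.rec ⟨∅, inv_empty⟩
      (fun n ih => ⟨(hstep n ih.1 ih.2).choose, (hstep n ih.1 ih.2).choose_spec.2.1⟩) n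
  have hGsucc : ∀ n, (G n).1 ⊆ (G (n+1)).1 ∧ (∃ x, (eQ n, x) ∈ (G (n+1)).1) ∧
      (∃ p, (p, eX n) ∈ (G (n+1)).1) := by
    intro n
    have := (hstep n (G n).1 (G n).2).choose_spec
    exact ⟨this.1, this.2.2.1, this.2.2.2⟩
  have hmono : ∀ m n, m ≤ n → (G m).1 ⊆ (G n).1 := by
    intro m n hmn
    induction n with
    | zero => rw [Nat.le_zero.1 hmn]
    | succ k ih =>
      rcases Nat.lt_or_ge m (k+1) with h | h
      · exact Finset.Subset.trans (ih (Nat.lt_succ_iff.1 h)) (hGsucc k).1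
      · rw [Nat.le_antisymm hmn h]
  have hdom : ∀ q : ℚ, ∃ x : X, ∃ n, (q, x) ∈ (G n).1 := by
    intro q
    obtain ⟨n, rfl⟩ := heQ q
    obtain ⟨x, hx⟩ := (hGsucc n).2.1
    exact ⟨x, n+1, hx⟩
  have hran : ∀ y : X, ∃ p : ℚ, ∃ n, (p, y) ∈ (G n).1 := by
    intro y
    obtain ⟨n, rfl⟩ := heX y
    obtain ⟨p, hp⟩ := (hGsucc n).2.2
    exact ⟨p, n+1, hp⟩
  -- the common-membership trick
  have hcommon : ∀ {a : ℚ × X} {b : ℚ × X} {n m : ℕ}, a ∈ (G n).1 → b ∈ (G m).1 →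
      ∃ N, a ∈ (G N).1 ∧ b ∈ (G N).1 := by
    intro a b n m ha hb
    exact ⟨max n m, hmono n _ (le_max_left n m) ha, hmono m _ (le_max_right n m) hb⟩
  let f : ℚ → X := fun q => (hdom q).choose
  have hf : ∀ q : ℚ, ∃ n, (q, f q) ∈ (G n).1 := fun q => (hdom q).choose_spec
  refine ⟨f, ⟨?_, ?_⟩, ?_⟩
  · -- injective
    intro a b hab
    obtain ⟨n, ha⟩ := hf a
    obtain ⟨m, hb⟩ := hf b
    obtain ⟨N, ha', hb'⟩ := hcommon ha hb
    have := (G N).2.inj (a, f a) ha' (b, f b) hb' hab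
    exact congrArg Prod.fst this
  · -- surjective
    intro y
    obtain ⟨p, n, hp⟩ := hran y
    obtain ⟨m, hfp⟩ := hf p
    obtain ⟨N, hp', hfp'⟩ := hcommon hp hfp
    have := (G N).2.func (p, y) hp' (p, f p) hfp' rfl
    exact ⟨p, (congrArg Prod.snd this).symm⟩
  · -- binary
    rintro ⟨a, b, c, hab, hbc, hord⟩
    obtain ⟨n₁, ha⟩ := hf a
    obtain ⟨n₂, hb⟩ := hf b
    obtain ⟨n₃, hc⟩ := hf c
    set N := max n₁ (max n₂ n₃) with hN
    have ha' : (a, f a) ∈ (G N).1 := hmono n₁ N (le_max_left _ _) ha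
    have hb' : (b, f b) ∈ (G N).1 :=
      hmono n₂ N (le_trans (le_max_left _ _) (le_max_right _ _)) hb
    have hc' : (c, f c) ∈ (G N).1 :=
      hmono n₃ N (le_trans (le_max_right _ _) (le_max_right _ _)) hc
    have hane : a ≠ b := by
      intro h
      rw [h] at hab
      exact absurd hab (lt_irrefl _)
    have heq : vv a b = vv b c := hord
    have := (G N).2.c1 (a, f a) ha' (b, f b) hb' (c, f c) hc' heq
      (vv_ne_top_iff.2 hane)
    exact this ⟨hab, hbc⟩

end State

end Xside

end Bin

/-- Let (X, ⪯) be a countably infinite totally ordered set with no isolated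
points such that either X does not have a maximum or X does not have a minimum. Then
there exists a binary bijection f : ℚ → X. -/
theorem stmt_19 {X : Type*} [LinearOrder X] [TopologicalSpace X] [OrderTopology X]
    [Countable X] [Infinite X] (hiso : ∀ x : X, ¬ IsOpen ({x} : Set X))
    (hmm : (¬ ∃ m : X, ∀ x : X, x ≤ m) ∨ (¬ ∃ m : X, ∀ x : X, m ≤ x)) :
    ∃ f : ℚ → X, Function.Bijective f ∧
      ¬ ∃ a b c : ℚ, f a < f b ∧ f b < f c ∧ ord2 (b - a) = ord2 (c - b) := by
  rcases hmm with hnomax | hnomin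
  · exact Bin.main_nomax hiso hnomax
  · have hiso' : ∀ x : Xᵒᵈ, ¬ IsOpen ({x} : Set Xᵒᵈ) := fun x => hiso (OrderDual.ofDual x)
    have hnomax' : ¬ ∃ m : Xᵒᵈ, ∀ x : Xᵒᵈ, x ≤ m := by
      rintro ⟨m, hm⟩
      exact hnomin ⟨OrderDual.ofDual m, fun x => hm (OrderDual.toDual x)⟩
    letI : Countable Xᵒᵈ := ‹Countable X›
    letI : Infinite Xᵒᵈ := ‹Infinite X›
    obtain ⟨f, hbij, hbin⟩ := Bin.main_nomax (X := Xᵒᵈ) hiso' hnomax'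
    refine ⟨fun q => OrderDual.ofDual (f q), ?_, ?_⟩
    · exact Function.Bijective.comp (Equiv.bijective _) hbij
    · rintro ⟨a, b, c, h1, h2, h3⟩
      apply hbin
      refine ⟨c, b, a, h2, h1, ?_⟩
      calc ord2 (b - c) = ord2 (c - b) := by rw [← Bin.ord2_neg (c - b)]; norm_num
        _ = ord2 (b - a) := h3.symm
        _ = ord2 (a - b) := by rw [← Bin.ord2_neg (b - a)]; norm_num
end
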